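/- arXiv:1602.06081 — 7 statements merged into one kernel-verified Lean document; each statement's English description precedes it below -/
import Mathlib

section
/- For every 0 < ε < 1 and every β > 0, the sequence c_n satisfies lim_{n→∞} [ 2α(ε)·( n·β·β_c(ε) − log c_n ) − log(β_c(ε)²·n/2) − log(4π) ] = 0; equivalently, c_n = exp{ n·β·β_c(ε) − (1/(2α(ε)))·( log(β_c(ε)²·n/2) + log(4π) + o(1) ) }. -/
open MeasureTheory ProbabilityTheory Filter Real Set
open scoped NNReal ENNReal

noncomputable section

namespace CnAux

/-- Unnormalized Gaussian upper tail. -/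
def G (t : ℝ) : ℝ := ∫ x in Set.Ioi t, Real.exp (-x^2/2)

lemma integrable_gauss : MeasureTheory.Integrable (fun x : ℝ => Real.exp (-x^2/2)) := by
  have h := integrable_exp_neg_mul_sq (b := (1:ℝ)/2) (by norm_num)
  refine h.congr ?_
  filter_upwards with x
  congr 1; ring

lemma integrableOn_gauss (t : ℝ) :
    MeasureTheory.IntegrableOn (fun x : ℝ => Real.exp (-x^2/2)) (Set.Ioi t) :=
  integrable_gauss.integrableOn

lemma G_pos (t : ℝ) : 0 < G t := by
  rw [G, setIntegral_pos_iff_support_of_nonneg_ae]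
  · have : Function.support (fun x : ℝ => Real.exp (-x^2/2)) = Set.univ := by
      ext x; simp [Real.exp_ne_zero]
    rw [this, Set.univ_inter]
    simp [Real.volume_Ioi]
  · filter_upwards with x using (Real.exp_pos _).le
  · exact integrableOn_gauss t

lemma G_anti {s t : ℝ} (hst : s ≤ t) : G t ≤ G s := by
  refine setIntegral_mono_set (integrableOn_gauss s) ?_ ?_
  · filter_upwards with x using (Real.exp_pos _).le
  · exact HasSubset.Subset.eventuallyLE (Set.Ioi_subset_Ioi hst)

lemma tendsto_gauss_zero : Filter.Tendsto (fun x : ℝ => Real.exp (-x^2/2))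
    Filter.atTop (nhds 0) := by
  apply Real.tendsto_exp_atBot.comp
  have h2 : Filter.Tendsto (fun x : ℝ => x^2) Filter.atTop Filter.atTop :=
    tendsto_pow_atTop two_ne_zero
  exact Filter.Tendsto.atBot_div_const two_pos
    (Filter.tendsto_neg_atTop_atBot.comp h2)

lemma deriv_aux (x : ℝ) :
    HasDerivAt (fun y : ℝ => Real.exp (-y^2/2)) (-x * Real.exp (-x^2/2)) x := by
  have h1 : HasDerivAt (fun y : ℝ => -y^2/2) (-x) x := by
    have := ((hasDerivAt_pow 2 x).neg).div_const 2
    refine this.congr_deriv ?_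
    simp; ring
  simpa [mul_comm] using h1.exp

lemma G_le (t : ℝ) (ht : 0 < t) : G t ≤ Real.exp (-t^2/2) / t := by
  set f : ℝ → ℝ := fun x => -Real.exp (-x^2/2) / x with hf
  set f' : ℝ → ℝ := fun x => Real.exp (-x^2/2) * (1 + (x^2)⁻¹) with hf'
  have hderiv : ∀ x ∈ Set.Ici t, HasDerivAt f (f' x) x := by
    intro x hx
    have hx0 : x ≠ 0 := (lt_of_lt_of_le ht hx).ne'
    have h1 := ((deriv_aux x).neg).div (hasDerivAt_id x) hx0
    refine h1.congr_deriv ?_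
    simp only [hf', id, Pi.neg_apply]
    field_simp
    ring
  have hint : MeasureTheory.IntegrableOn f' (Set.Ioi t) := by
    refine MeasureTheory.Integrable.mono' ((integrable_gauss.const_mul (1 + (t^2)⁻¹)).integrableOn)
      ?_ ?_
    · refine ContinuousOn.aestronglyMeasurable ?_ measurableSet_Ioi
      refine ContinuousOn.mul (by fun_prop) ?_
      refine ContinuousOn.add continuousOn_const (ContinuousOn.inv₀ (by fun_prop) ?_)
      intro x hx
      have : (0:ℝ) < x := lt_trans ht hx
      positivity
    · filter_upwards [MeasureTheory.ae_restrict_mem measurableSet_Ioi] with x hx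
      have hxt : t < x := hx
      have hx0 : (0:ℝ) < x := lt_trans ht hxt
      have h2 : (x^2)⁻¹ ≤ (t^2)⁻¹ := by
        apply inv_anti₀ (by positivity)
        nlinarith
      have hpos : (0:ℝ) < 1 + (x^2)⁻¹ := by positivity
      rw [hf', Real.norm_eq_abs, abs_of_pos (by positivity)]
      have := Real.exp_pos (-x^2/2)
      nlinarith
  have htend : Filter.Tendsto f Filter.atTop (nhds 0) := by
    have h1 := (tendsto_gauss_zero.neg).mul tendsto_inv_atTop_zero
    simp only [neg_zero, zero_mul] at h1
    refine h1.congr (fun x => ?_)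
    simp [hf, div_eq_mul_inv]
  have key : ∫ x in Set.Ioi t, f' x = 0 - f t :=
    MeasureTheory.integral_Ioi_of_hasDerivAt_of_tendsto'
      (fun x hx => hderiv x hx) hint htend
  have hle : G t ≤ ∫ x in Set.Ioi t, f' x := by
    refine setIntegral_mono_on (integrableOn_gauss t) hint measurableSet_Ioi ?_
    intro x hx
    have hx0 : (0:ℝ) < x := lt_trans ht hx
    have h3 : (0:ℝ) ≤ (x^2)⁻¹ := by positivity
    have := Real.exp_pos (-x^2/2)
    rw [hf']
    nlinarith
  rw [key, hf] at hle
  calc G t ≤ 0 - -Real.exp (-t^2/2) / t := hle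
    _ = Real.exp (-t^2/2) / t := by ring

lemma G_ge (t : ℝ) (ht : 0 < t) :
    Real.exp (-t^2/2) * (t⁻¹ - (t^3)⁻¹) ≤ G t := by
  set f : ℝ → ℝ := fun x => -(Real.exp (-x^2/2) * (x⁻¹ - (x^3)⁻¹)) with hf
  set f' : ℝ → ℝ := fun x => Real.exp (-x^2/2) * (1 - 3 * (x^4)⁻¹) with hf'
  have hderiv : ∀ x ∈ Set.Ici t, HasDerivAt f (f' x) x := by
    intro x hx
    have hx0 : x ≠ 0 := (lt_of_lt_of_le ht hx).ne'
    have h2 : HasDerivAt (fun y : ℝ => y⁻¹ - (y^3)⁻¹) (-(x^2)⁻¹ + 3 * x^2 / (x^3)^2) x := by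
      have ha : HasDerivAt (fun y : ℝ => y⁻¹) (-(x^2)⁻¹) x := by
        simpa using (hasDerivAt_inv hx0)
      have hb : HasDerivAt (fun y : ℝ => (y^3)⁻¹) (-(3 * x^2) / (x^3)^2) x := by
        have := (hasDerivAt_pow 3 x).inv (pow_ne_zero 3 hx0)
        refine this.congr_deriv ?_
        norm_num
      have := ha.sub hb
      refine this.congr_deriv ?_
      ring
    have h1 := ((deriv_aux x).mul h2).neg
    refine h1.congr_deriv ?_
    rw [hf']
    field_simp
    ring
  have hint : MeasureTheory.IntegrableOn f' (Set.Ioi t) := by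
    refine MeasureTheory.Integrable.mono' ((integrable_gauss.const_mul (1 + 3 * (t^4)⁻¹)).integrableOn)
      ?_ ?_
    · refine ContinuousOn.aestronglyMeasurable ?_ measurableSet_Ioi
      refine ContinuousOn.mul (by fun_prop) ?_
      refine ContinuousOn.sub continuousOn_const (ContinuousOn.mul continuousOn_const
        (ContinuousOn.inv₀ (by fun_prop) ?_))
      intro x hx
      have : (0:ℝ) < x := lt_trans ht hx
      positivity
    · filter_upwards [MeasureTheory.ae_restrict_mem measurableSet_Ioi] with x hx
      have hxt : t < x := hx
      have hx0 : (0:ℝ) < x := lt_trans ht hxt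
      have h2 : (x^4)⁻¹ ≤ (t^4)⁻¹ := by
        exact inv_anti₀ (by positivity) (pow_le_pow_left₀ ht.le hxt.le 4)
      have hne : (0:ℝ) < Real.exp (-x^2/2) := Real.exp_pos _
      rw [hf', Real.norm_eq_abs, abs_mul, abs_of_pos hne]
      have h4 : |1 - 3 * (x^4)⁻¹| ≤ 1 + 3 * (t^4)⁻¹ := by
        rw [abs_le]
        constructor
        · have : (0:ℝ) ≤ 3 * (t^4)⁻¹ := by positivity
          have h5 : 3 * (x^4)⁻¹ ≤ 3 * (t^4)⁻¹ := by linarith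
          linarith
        · have : (0:ℝ) ≤ 3 * (x^4)⁻¹ := by positivity
          have : (0:ℝ) ≤ 3 * (t^4)⁻¹ := by positivity
          linarith
      nlinarith
  have htend : Filter.Tendsto f Filter.atTop (nhds 0) := by
    have hi : Filter.Tendsto (fun x : ℝ => x⁻¹ - (x^3)⁻¹) Filter.atTop (nhds 0) := by
      have h1 : Filter.Tendsto (fun x : ℝ => (x^3)⁻¹) Filter.atTop (nhds 0) :=
        tendsto_inv_atTop_zero.comp (tendsto_pow_atTop three_ne_zero)
      have := tendsto_inv_atTop_zero.sub h1
      simpa using this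
    have h1 := (tendsto_gauss_zero.mul hi).neg
    simp only [zero_mul, neg_zero] at h1
    exact h1
  have key : ∫ x in Set.Ioi t, f' x = 0 - f t :=
    MeasureTheory.integral_Ioi_of_hasDerivAt_of_tendsto'
      (fun x hx => hderiv x hx) hint htend
  have hle : ∫ x in Set.Ioi t, f' x ≤ G t := by
    refine setIntegral_mono_on hint (integrableOn_gauss t) measurableSet_Ioi ?_
    intro x hx
    have hx0 : (0:ℝ) < x := lt_trans ht hx
    have h3 : (0:ℝ) ≤ 3 * (x^4)⁻¹ := by positivity
    have := (Real.exp_pos (-x^2/2)).le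
    rw [hf']
    nlinarith
  rw [key, hf] at hle
  calc Real.exp (-t^2/2) * (t⁻¹ - (t^3)⁻¹)
      = 0 - -(Real.exp (-t^2/2) * (t⁻¹ - (t^3)⁻¹)) := by ring
    _ ≤ G t := hle


lemma measure_tail {Ω : Type*} [MeasurableSpace Ω] (P : MeasureTheory.Measure Ω)
    [MeasureTheory.IsProbabilityMeasure P]
    (n : ℕ) (hn : 1 ≤ n) (β cn : ℝ) (hβ : 0 < β) (hcn : 0 < cn)
    (X : Ω → ℝ) (hX : Measurable X)
    (hg : MeasureTheory.Measure.map X P = ProbabilityTheory.gaussianReal 0 n) :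
    (P {ω | cn ≤ Real.exp (-β * X ω)}).toReal
      = (Real.sqrt (2*π))⁻¹ * G (Real.log cn / (β * Real.sqrt n)) := by
  have hn0 : (0:ℝ) < n := by exact_mod_cast hn
  have hsn : (0:ℝ) < Real.sqrt n := Real.sqrt_pos.mpr hn0
  set t : ℝ := Real.log cn / (β * Real.sqrt n) with ht
  set s : ℝ := -(Real.log cn) / β with hs
  have hset : {ω | cn ≤ Real.exp (-β * X ω)} = X ⁻¹' (Set.Iic s) := by
    ext ω
    simp only [Set.mem_setOf_eq, Set.mem_preimage, Set.mem_Iic]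
    rw [← Real.log_le_iff_le_exp hcn, hs]
    constructor
    · intro h
      rw [le_div_iff₀ hβ]
      nlinarith
    · intro h
      rw [le_div_iff₀ hβ] at h
      nlinarith
  have h1 : P {ω | cn ≤ Real.exp (-β * X ω)}
      = ProbabilityTheory.gaussianReal 0 n (Set.Iic s) := by
    rw [hset, ← MeasureTheory.Measure.map_apply hX measurableSet_Iic, hg]
  set c₀ : ℝ := -(Real.sqrt n)⁻¹ with hc₀
  have hvar : (NNReal.mk (c₀^2) (sq_nonneg _) * (n : ℝ≥0) : ℝ≥0) = 1 := by
    ext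
    push_cast
    rw [hc₀]
    rw [neg_pow]
    simp only [neg_neg, even_two, Even.neg_pow]
    rw [inv_pow, Real.sq_sqrt hn0.le]
    field_simp
  have h2 : ProbabilityTheory.gaussianReal 0 n (Set.Iic s)
      = ProbabilityTheory.gaussianReal 0 1 (Set.Ici t) := by
    have hmap := ProbabilityTheory.gaussianReal_map_const_mul (μ := 0) (v := (n : ℝ≥0)) c₀
    rw [mul_zero, hvar] at hmap
    have happ := congrArg (fun m => m (Set.Ici t)) hmap
    rw [MeasureTheory.Measure.map_apply (measurable_const_mul c₀) measurableSet_Ici] at happ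
    have hpre : (c₀ * ·) ⁻¹' (Set.Ici t) = Set.Iic s := by
      ext x
      simp only [Set.mem_preimage, Set.mem_Ici, Set.mem_Iic]
      rw [ht, hs, hc₀]
      rw [div_le_iff₀ (by positivity), le_div_iff₀ hβ]
      have he : -(Real.sqrt (n:ℝ))⁻¹ * x * (β * Real.sqrt (n:ℝ)) = -(x*β) := by
        field_simp
      rw [he]
      constructor
      · intro h; linarith
      · intro h; linarith
    rw [hpre] at happ
    exact happ
  have h3 : ProbabilityTheory.gaussianReal 0 1 (Set.Ici t)
      = ENNReal.ofReal ((Real.sqrt (2*π))⁻¹ * G t) := by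
    rw [ProbabilityTheory.gaussianReal_apply_eq_integral 0 one_ne_zero]
    congr 1
    have hpdf : ∀ x : ℝ, ProbabilityTheory.gaussianPDFReal 0 1 x
        = (Real.sqrt (2*π))⁻¹ * Real.exp (-x^2/2) := by
      intro x
      rw [ProbabilityTheory.gaussianPDFReal]
      norm_num
    simp_rw [hpdf]
    rw [MeasureTheory.integral_const_mul, G, MeasureTheory.integral_Ici_eq_integral_Ioi]
  rw [h1, h2, h3, ENNReal.toReal_ofReal]
  have := (G_pos t).le
  positivity

lemma log_G_le {t : ℝ} (ht : 0 < t) : Real.log (G t) ≤ -t^2/2 - Real.log t := by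
  have h := G_le t ht
  have h2 := (Real.log_le_log_iff (G_pos t) (by positivity)).mpr h
  rwa [Real.log_div (Real.exp_ne_zero _) ht.ne', Real.log_exp] at h2

lemma log_G_ge {t : ℝ} (ht : 2 ≤ t) :
    -t^2/2 - Real.log t + Real.log (1 - (t^2)⁻¹) ≤ Real.log (G t) := by
  have ht0 : (0:ℝ) < t := by linarith
  have hfac : t⁻¹ - (t^3)⁻¹ = t⁻¹ * (1 - (t^2)⁻¹) := by
    field_simp
  have hq : (0:ℝ) < 1 - (t^2)⁻¹ := by
    have h4 : (4:ℝ) ≤ t^2 := by nlinarith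
    have : (t^2)⁻¹ ≤ (4:ℝ)⁻¹ := inv_anti₀ (by norm_num) h4
    linarith
  have h := G_ge t ht0
  have hlhs : 0 < Real.exp (-t^2/2) * (t⁻¹ - (t^3)⁻¹) := by
    rw [hfac]; positivity
  have h2 := (Real.log_le_log_iff hlhs (G_pos t)).mpr h
  rw [hfac, ← mul_assoc, Real.log_mul (by positivity) hq.ne',
    Real.log_mul (Real.exp_ne_zero _) (by positivity), Real.log_exp, Real.log_inv] at h2
  linarith

lemma sqrt_nat_tendsto : Filter.Tendsto (fun n : ℕ => Real.sqrt n) Filter.atTop Filter.atTop := by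
  rw [Filter.tendsto_atTop_atTop]
  intro M
  refine ⟨⌈M^2⌉₊, fun n hn => ?_⟩
  rcases le_or_gt M 0 with h|h
  · exact h.trans (Real.sqrt_nonneg _)
  · have h1 : M^2 ≤ (n:ℝ) := le_trans (Nat.le_ceil _) (by exact_mod_cast hn)
    calc M = Real.sqrt (M^2) := (Real.sqrt_sq h.le).symm
    _ ≤ Real.sqrt n := Real.sqrt_le_sqrt h1

lemma tendsto_atTop_of_G (u : ℕ → ℝ)
    (h : Filter.Tendsto (fun n => G (u n)) Filter.atTop (nhds 0)) :
    Filter.Tendsto u Filter.atTop Filter.atTop := by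
  rw [Filter.tendsto_atTop]
  intro M
  filter_upwards [h.eventually_lt_const (G_pos M)] with n hn
  by_contra hle
  push_neg at hle
  exact absurd (G_anti hle.le) (not_le.mpr hn)

end CnAux

set_option maxHeartbeats 2000000 in
theorem cn_asymptotics
    {Ω : Type*} [MeasurableSpace Ω] (P : Measure Ω) [IsProbabilityMeasure P]
    (H : (n : ℕ) → (Fin n → Bool) → Ω → ℝ)
    (hmeas : ∀ n x, Measurable (H n x))
    (hgauss : ∀ n x, Measure.map (H n x) P = gaussianReal 0 n)
    (hindep : iIndepFun
      (fun p : (Σ n : ℕ, (Fin n → Bool)) => H p.1 p.2) P)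
    (β : ℝ) (hβ : 0 < β)
    (ε : ℝ) (hε0 : 0 < ε) (hε1 : ε < 1)
    (c : ℕ → ℝ)
    (hc : ∀ n, 1 ≤ n → ∀ x : Fin n → Bool, 0 < c n ∧
      (2 : ℝ) ^ (ε * n) * (P {ω | c n ≤ Real.exp (-β * H n x ω)}).toReal = 1) :
    Tendsto (fun n : ℕ =>
        2 * (Real.sqrt (2 * ε * Real.log 2) / β) *
            ((n : ℝ) * β * Real.sqrt (2 * ε * Real.log 2) - Real.log (c n)) -
          Real.log (Real.sqrt (2 * ε * Real.log 2) ^ 2 * n / 2) -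
          Real.log (4 * Real.pi))
      atTop (nhds 0) := by
  have hlog2 : (0:ℝ) < Real.log 2 := Real.log_pos one_lt_two
  have hπ : (0:ℝ) < π := Real.pi_pos
  set βc : ℝ := Real.sqrt (2 * ε * Real.log 2) with hβcdef
  have hβcpos : 0 < βc := Real.sqrt_pos.mpr (by positivity)
  have hβc2 : βc^2 = 2 * ε * Real.log 2 := Real.sq_sqrt (by positivity)
  set b : ℕ → ℝ := fun n => Real.log (c n) / (β * Real.sqrt n) with hbdef
  set a : ℕ → ℝ := fun n => βc * Real.sqrt n with hadef
  have hsq : ∀ n : ℕ, (Real.sqrt (n:ℝ))^2 = (n:ℝ) := fun n => Real.sq_sqrt (Nat.cast_nonneg n)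
  have hGb : ∀ n, 1 ≤ n → CnAux.G (b n) = Real.sqrt (2*π) * ((2:ℝ) ^ (ε*(n:ℝ)))⁻¹ := by
    intro n hn
    obtain ⟨hcn, heq⟩ := hc n hn (fun _ => true)
    rw [CnAux.measure_tail P n hn β (c n) hβ hcn _ (hmeas n _) (hgauss n _)] at heq
    have h2 : (0:ℝ) < (2:ℝ)^(ε*(n:ℝ)) := Real.rpow_pos_of_pos two_pos _
    have hs2π : (0:ℝ) < Real.sqrt (2*π) := Real.sqrt_pos.mpr (by positivity)
    have hb : b n = Real.log (c n) / (β * Real.sqrt n) := rfl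
    rw [hb]
    field_simp at heq ⊢
    linear_combination heq
  have hGb0 : Tendsto (fun n => CnAux.G (b n)) atTop (nhds 0) := by
    have hbot : Tendsto (fun n : ℕ => -(ε*(n:ℝ))) atTop atBot :=
      tendsto_neg_atTop_atBot.comp (Tendsto.const_mul_atTop hε0 tendsto_natCast_atTop_atTop)
    have h2 : Tendsto (fun n : ℕ => (2:ℝ) ^ (-(ε*(n:ℝ)))) atTop (nhds 0) :=
      (tendsto_rpow_atBot_of_base_gt_one 2 one_lt_two).comp hbot
    have h3 := h2.const_mul (Real.sqrt (2*π))
    rw [mul_zero] at h3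
    refine h3.congr' ?_
    filter_upwards [eventually_ge_atTop 1] with n hn
    rw [hGb n hn, Real.rpow_neg two_pos.le]
  have hbtop : Tendsto b atTop atTop := CnAux.tendsto_atTop_of_G b hGb0
  have hatop : Tendsto a atTop atTop :=
    Tendsto.const_mul_atTop hβcpos (CnAux.sqrt_nat_tendsto.comp tendsto_id)
  set r : ℕ → ℝ := fun n =>
    (b n)^2 + 2*Real.log (b n) + Real.log (2*π) - 2*(ε*(n:ℝ))*Real.log 2 with hrdef
  have hlogGb : ∀ n, 1 ≤ n →
      Real.log (CnAux.G (b n)) = Real.log (2*π)/2 - (ε*(n:ℝ))*Real.log 2 := by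
    intro n hn
    rw [hGb n hn, Real.log_mul (by positivity) (by positivity), Real.log_inv,
      Real.log_rpow two_pos, Real.log_sqrt (by positivity)]
    ring
  have hev : ∀ᶠ n : ℕ in atTop, 1 ≤ n ∧ 2 ≤ b n :=
    (eventually_ge_atTop 1).and (hbtop.eventually_ge_atTop 2)
  have hr_ub : ∀ᶠ n in atTop, r n ≤ 0 := by
    filter_upwards [hev] with n hn
    obtain ⟨hn1, hb2⟩ := hn
    have h := CnAux.log_G_le (t := b n) (by linarith)
    rw [hlogGb n hn1] at h
    simp only [hrdef]
    linarith
  have hr_lb : ∀ᶠ n in atTop, 2*Real.log (1 - ((b n)^2)⁻¹) ≤ r n := by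
    filter_upwards [hev] with n hn
    obtain ⟨hn1, hb2⟩ := hn
    have h := CnAux.log_G_ge hb2
    rw [hlogGb n hn1] at h
    simp only [hrdef]
    linarith
  have hr0 : Tendsto r atTop (nhds 0) := by
    have h1 : Tendsto (fun n => ((b n)^2)⁻¹) atTop (nhds 0) :=
      tendsto_inv_atTop_zero.comp ((tendsto_pow_atTop two_ne_zero).comp hbtop)
    have h2 : Tendsto (fun n => 1 - ((b n)^2)⁻¹) atTop (nhds 1) := by
      have := (tendsto_const_nhds (x := (1:ℝ)) (f := atTop)).sub h1
      simpa using this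
    have h3 : Tendsto (fun n => Real.log (1 - ((b n)^2)⁻¹)) atTop (nhds 0) := by
      have := (Real.continuousAt_log one_ne_zero).tendsto.comp h2
      simpa [Function.comp_def] using this
    have hlow : Tendsto (fun n => 2*Real.log (1 - ((b n)^2)⁻¹)) atTop (nhds 0) := by
      have := h3.const_mul (2:ℝ)
      simpa using this
    exact tendsto_of_tendsto_of_tendsto_of_le_of_le' hlow tendsto_const_nhds hr_lb hr_ub
  have ha2 : ∀ n : ℕ, (a n)^2 = 2*(ε*(n:ℝ))*Real.log 2 := by
    intro n
    have han : a n = βc * Real.sqrt n := rfl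
    rw [han, mul_pow, hβc2, hsq]
    ring
  have hlog2π : (0:ℝ) ≤ Real.log (2*π) :=
    Real.log_nonneg (by nlinarith [Real.pi_gt_three])
  have hmain : ∀ᶠ n in atTop,
      (0 ≤ a n - b n ∧ a n - b n ≤ 2*(Real.log (a n)/(a n)) + (Real.log (2*π)+1) * (a n)⁻¹)
      ∧ (0 ≤ Real.log (a n) - Real.log (b n) ∧
         Real.log (a n) - Real.log (b n) ≤ (a n - b n)/2) := by
    filter_upwards [hev, hr_ub, hr_lb, hatop.eventually_ge_atTop 1] with n hn hub hlb ha1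
    obtain ⟨hn1, hb2⟩ := hn
    have hbpos : (0:ℝ) < b n := by linarith
    have hapos : (0:ℝ) < a n := by linarith
    have hlogb0 : 0 ≤ Real.log (b n) := Real.log_nonneg (by linarith)
    have hba : b n ≤ a n := by
      have h1 : (b n)^2 ≤ (a n)^2 := by
        rw [ha2 n]
        simp only [hrdef] at hub
        linarith
      exact (pow_le_pow_iff_left₀ hbpos.le hapos.le two_ne_zero).mp h1
    have hlogba : Real.log (b n) ≤ Real.log (a n) :=
      (Real.log_le_log_iff hbpos hapos).mpr hba
    have hrlow : -1 ≤ r n := by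
      have hb4 : (4:ℝ) ≤ (b n)^2 := by nlinarith
      have h1 : (3/4 : ℝ) ≤ 1 - ((b n)^2)⁻¹ := by
        have : ((b n)^2)⁻¹ ≤ (4:ℝ)⁻¹ := inv_anti₀ (by norm_num) hb4
        linarith
      have h2 : Real.log (3/4) ≤ Real.log (1 - ((b n)^2)⁻¹) :=
        (Real.log_le_log_iff (by norm_num) (by linarith)).mpr h1
      have h3 : Real.log (4/3) ≤ 1/2 := by
        have := Real.log_le_sub_one_of_pos (x := (4/3:ℝ)) (by norm_num)
        linarith
      have h4 : Real.log (3/4) = - Real.log (4/3) := by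
        rw [← Real.log_inv]
        norm_num
      calc (-1:ℝ) ≤ 2 * Real.log (3/4) := by linarith
        _ ≤ 2 * Real.log (1 - ((b n)^2)⁻¹) := by linarith
        _ ≤ r n := hlb
    have hdiff : (a n - b n) * a n ≤ 2*Real.log (a n) + (Real.log (2*π) + 1) := by
      have h5 : (a n - b n) * a n ≤ (a n - b n)*(a n + b n) := by nlinarith
      have h7 : (a n)^2 - (b n)^2 = 2*Real.log (b n) + Real.log (2*π) - r n := by
        rw [ha2 n]
        simp only [hrdef]
        ring
      nlinarith
    refine ⟨⟨by linarith, ?_⟩, ⟨by linarith, ?_⟩⟩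
    · have e1 : a n - b n = ((a n - b n) * a n) * (a n)⁻¹ := by
        field_simp
      have e2 := mul_le_mul_of_nonneg_right hdiff (inv_nonneg.mpr hapos.le)
      calc a n - b n = ((a n - b n) * a n) * (a n)⁻¹ := e1
        _ ≤ (2*Real.log (a n) + (Real.log (2*π)+1)) * (a n)⁻¹ := e2
        _ = 2*(Real.log (a n)/(a n)) + (Real.log (2*π)+1) * (a n)⁻¹ := by
            rw [div_eq_mul_inv]
            ring
    · have h9 : Real.log (a n) - Real.log (b n) = Real.log (a n / b n) :=
        (Real.log_div hapos.ne' hbpos.ne').symm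
      have h10 := Real.log_le_sub_one_of_pos (div_pos hapos hbpos)
      have h11 : a n / b n - 1 = (a n - b n)/ b n := by field_simp
      have h12 : (a n - b n)/b n ≤ (a n - b n)/2 := by
        rw [div_le_div_iff₀ hbpos (by norm_num)]
        nlinarith
      linarith
  have hbound0 : Tendsto (fun n => 2*(Real.log (a n)/(a n)) + (Real.log (2*π)+1) * (a n)⁻¹)
      atTop (nhds 0) := by
    have h1 : Tendsto (fun x : ℝ => 2*(Real.log x/x) + (Real.log (2*π)+1) * x⁻¹)
        atTop (nhds 0) := by
      have ha := Real.isLittleO_log_id_atTop.tendsto_div_nhds_zero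
      have hb := tendsto_inv_atTop_zero (𝕜 := ℝ)
      have := (ha.const_mul 2).add (hb.const_mul (Real.log (2*π)+1))
      simpa using this
    exact h1.comp hatop
  have habd : Tendsto (fun n => a n - b n) atTop (nhds 0) := by
    refine squeeze_zero' ?_ ?_ hbound0
    · filter_upwards [hmain] with n hn
      exact hn.1.1
    · filter_upwards [hmain] with n hn
      exact hn.1.2
  have hlogd0 : Tendsto (fun n => Real.log (a n) - Real.log (b n)) atTop (nhds 0) := by
    have hhalf : Tendsto (fun n => (a n - b n)/2) atTop (nhds 0) := by
      have := habd.div_const 2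
      simpa using this
    refine squeeze_zero' ?_ ?_ hhalf
    · filter_upwards [hmain] with n hn
      exact hn.2.1
    · filter_upwards [hmain] with n hn
      exact hn.2.2
  have hT : Tendsto (fun n => 2*(Real.log (b n) - Real.log (a n)) + (a n - b n)^2 - r n)
      atTop (nhds 0) := by
    have h1 := ((hlogd0.neg.const_mul 2).add (habd.mul habd)).sub hr0
    have h2 : (2:ℝ) * -0 + 0*0 - 0 = 0 := by norm_num
    rw [h2] at h1
    refine h1.congr (fun n => ?_)
    ring
  have hfinal : ∀ᶠ n in atTop,
      2*(Real.log (b n) - Real.log (a n)) + (a n - b n)^2 - r n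
        = 2 * (βc / β) * ((n:ℝ) * β * βc - Real.log (c n))
          - Real.log (βc^2 * (n:ℝ)/2) - Real.log (4*π) := by
    filter_upwards [hev] with n hn
    obtain ⟨hn1, hb2⟩ := hn
    have hn0 : (0:ℝ) < n := by exact_mod_cast hn1
    have hsn : (0:ℝ) < Real.sqrt (n:ℝ) := Real.sqrt_pos.mpr hn0
    have han : a n = βc * Real.sqrt n := rfl
    have hapos : (0:ℝ) < a n := by rw [han]; positivity
    have hlogc : Real.log (c n) = β * Real.sqrt n * b n := by
      show Real.log (c n) = β * Real.sqrt n * (Real.log (c n) / (β * Real.sqrt n))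
      field_simp
    have claim1 : 2 * (βc / β) * ((n:ℝ) * β * βc - Real.log (c n))
        = (a n)^2 - (b n)^2 + (a n - b n)^2 := by
      rw [hlogc, han]
      have hs := hsq n
      field_simp
      linear_combination (-2*βc^2) * hs
    have claim2 : Real.log (βc^2 * (n:ℝ)/2) + Real.log (4*π)
        = Real.log (2*π) + 2*Real.log (a n) := by
      have h1 : Real.log ((βc^2*(n:ℝ)/2)*(4*π))
          = Real.log (βc^2*(n:ℝ)/2) + Real.log (4*π) :=
        Real.log_mul (ne_of_gt (by positivity)) (ne_of_gt (by positivity))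
      have h2 : Real.log ((a n)^2) = 2 * Real.log (a n) := by
        rw [Real.log_pow]
        push_cast
        ring
      have h3 : Real.log ((2*π) * (a n)^2)
          = Real.log (2*π) + Real.log ((a n)^2) :=
        Real.log_mul (ne_of_gt (by positivity)) (ne_of_gt (by positivity))
      have h4 : (βc^2*(n:ℝ)/2)*(4*π) = (2*π)*(a n)^2 := by
        rw [han, mul_pow, hsq n]
        ring
      rw [← h1, h4, h3, h2]
    have hreq : r n = (b n)^2 + 2*Real.log (b n) + Real.log (2*π) - 2*(ε*(n:ℝ))*Real.log 2 := rfl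
    have ha2n := ha2 n
    linarith [claim1, claim2]
  exact hT.congr' hfinal
end
end

section
/- Fix 0 < ε < 1 and let x_n = δ_n/ε where δ_n > 0. If x_n → 0 as n → ∞ and n·β·β_c(ε)·x_n − log r_n* → +∞, then lim_{n→∞} log( r_n(ε − δ_n) / r_n(ε) ) / (n·x_n) = −β·β_c(ε)/2; in particular log(r_n(ε−δ_n)/r_n(ε)) = −(n β β_c(ε) x_n/2)(1+o(1)). -/
open MeasureTheory ProbabilityTheory Filter Real Set

noncomputable section

/-- lower bound constant for the Gaussian tail -/
def lbc : ℝ := Real.exp (-(3:ℝ)/2) / Real.sqrt (2*Real.pi)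

lemma lbc_pos : 0 < lbc := by
  unfold lbc
  positivity

/-- standard normal CDF -/
def stdCDF (t : ℝ) : ℝ := ((gaussianReal 0 1) (Set.Iic t)).toReal

lemma gaussianPDFReal_zero_one (x : ℝ) :
    gaussianPDFReal 0 1 x = (Real.sqrt (2*Real.pi))⁻¹ * Real.exp (-x^2/2) := by
  simp [gaussianPDFReal]

lemma stdCDF_eq (t : ℝ) :
    stdCDF t = ∫ x in Set.Iic t, (Real.sqrt (2*Real.pi))⁻¹ * Real.exp (-x^2/2) := by
  have h : (gaussianPDFReal 0 1) = fun x => (Real.sqrt (2*Real.pi))⁻¹ * Real.exp (-x^2/2) :=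
    funext gaussianPDFReal_zero_one
  rw [stdCDF, gaussianReal_apply_eq_integral 0 one_ne_zero, ENNReal.toReal_ofReal, h]
  exact setIntegral_nonneg measurableSet_Iic fun x _ => gaussianPDFReal_nonneg 0 1 x

lemma stdCDF_mono {a b : ℝ} (h : a ≤ b) : stdCDF a ≤ stdCDF b :=
  ENNReal.toReal_mono (measure_ne_top _ _) (measure_mono (Set.Iic_subset_Iic.mpr h))

lemma integrable_phi : Integrable (fun x : ℝ => (Real.sqrt (2*Real.pi))⁻¹ * Real.exp (-x^2/2)) := by
  have h := integrable_gaussianPDFReal 0 1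
  have hfun : (gaussianPDFReal 0 1) = fun x => (Real.sqrt (2*Real.pi))⁻¹ * Real.exp (-x^2/2) :=
    funext gaussianPDFReal_zero_one
  rwa [hfun] at h

lemma integrable_xphi :
    Integrable (fun x : ℝ => -x * ((Real.sqrt (2*Real.pi))⁻¹ * Real.exp (-x^2/2))) := by
  have h := (integrable_mul_exp_neg_mul_sq (b := (1:ℝ)/2) (by norm_num)).const_mul
    (-(Real.sqrt (2*Real.pi))⁻¹)
  have heq : (fun x : ℝ => -(Real.sqrt (2*Real.pi))⁻¹ * (x * Real.exp (-(1/2) * x^2)))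
      = (fun x : ℝ => -x * ((Real.sqrt (2*Real.pi))⁻¹ * Real.exp (-x^2/2))) := by
    funext x
    rw [show -(1/2:ℝ)*x^2 = -x^2/2 from by ring]
    ring
  rwa [heq] at h

lemma tendsto_phi_atBot :
    Tendsto (fun x : ℝ => (Real.sqrt (2*Real.pi))⁻¹ * Real.exp (-x^2/2)) atBot (nhds 0) := by
  have hsq : Tendsto (fun x : ℝ => x^2) atBot atTop := by
    have h := (tendsto_pow_atTop (two_ne_zero)).comp tendsto_neg_atBot_atTop (α := ℝ)
    refine h.congr fun x => ?_
    simp [Function.comp, neg_sq]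
  have harg : Tendsto (fun x : ℝ => -x^2/2) atBot atBot := by
    have h := (tendsto_neg_atTop_atBot.comp hsq)
    have h2 := h.atBot_div_const (show (0:ℝ) < 2 by norm_num)
    exact h2.congr fun x => rfl
  have := (Real.tendsto_exp_atBot.comp harg).const_mul ((Real.sqrt (2*Real.pi))⁻¹)
  simpa using this

lemma hasDerivAt_phi (x : ℝ) :
    HasDerivAt (fun y : ℝ => (Real.sqrt (2*Real.pi))⁻¹ * Real.exp (-y^2/2))
      (-x * ((Real.sqrt (2*Real.pi))⁻¹ * Real.exp (-x^2/2))) x := by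
  have h1 : HasDerivAt (fun y : ℝ => -y^2/2) (-x) x := by
    have h := (hasDerivAt_pow 2 x).neg.div_const 2
    exact h.congr_deriv (by simp; ring)
  have h2 := (h1.exp).const_mul ((Real.sqrt (2*Real.pi))⁻¹)
  exact h2.congr_deriv (by ring)

lemma integral_xphi (a : ℝ) :
    ∫ x in Set.Iic a, -x * ((Real.sqrt (2*Real.pi))⁻¹ * Real.exp (-x^2/2)) =
      (Real.sqrt (2*Real.pi))⁻¹ * Real.exp (-a^2/2) := by
  have h := integral_Iic_of_hasDerivAt_of_tendsto
    (f := fun y : ℝ => (Real.sqrt (2*Real.pi))⁻¹ * Real.exp (-y^2/2))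
    (f' := fun x : ℝ => -x * ((Real.sqrt (2*Real.pi))⁻¹ * Real.exp (-x^2/2)))
    (a := a) (m := 0)
    ((hasDerivAt_phi a).continuousAt.continuousWithinAt)
    (fun x _ => hasDerivAt_phi x)
    (integrable_xphi.integrableOn)
    tendsto_phi_atBot
  simpa using h

lemma stdCDF_upper {s : ℝ} (hs : 1 ≤ s) : stdCDF (-s) ≤ Real.exp (-s^2/2) := by
  have hs0 : 0 < s := lt_of_lt_of_le one_pos hs
  rw [stdCDF_eq]
  have hle : ∫ x in Set.Iic (-s), (Real.sqrt (2*Real.pi))⁻¹ * Real.exp (-x^2/2) ≤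
      ∫ x in Set.Iic (-s), (1/s) * (-x * ((Real.sqrt (2*Real.pi))⁻¹ * Real.exp (-x^2/2))) := by
    refine setIntegral_mono_on integrable_phi.integrableOn
      ((integrable_xphi.const_mul (1/s)).integrableOn) measurableSet_Iic fun x hx => ?_
    simp only [Set.mem_Iic] at hx
    have hxneg : s ≤ -x := by linarith
    have hphi : 0 ≤ (Real.sqrt (2*Real.pi))⁻¹ * Real.exp (-x^2/2) := by positivity
    have h1 : 1 ≤ (1/s) * (-x) := by
      rw [one_div, ← div_eq_inv_mul, le_div_iff₀ hs0]
      linarith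
    calc (Real.sqrt (2*Real.pi))⁻¹ * Real.exp (-x^2/2)
        = 1 * ((Real.sqrt (2*Real.pi))⁻¹ * Real.exp (-x^2/2)) := by ring
      _ ≤ ((1/s) * (-x)) * ((Real.sqrt (2*Real.pi))⁻¹ * Real.exp (-x^2/2)) :=
          mul_le_mul_of_nonneg_right h1 hphi
      _ = (1/s) * (-x * ((Real.sqrt (2*Real.pi))⁻¹ * Real.exp (-x^2/2))) := by ring
  have h2 : ∫ x in Set.Iic (-s), (1/s) * (-x * ((Real.sqrt (2*Real.pi))⁻¹ * Real.exp (-x^2/2)))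
      = (1/s) * ((Real.sqrt (2*Real.pi))⁻¹ * Real.exp (-s^2/2)) := by
    rw [integral_const_mul, integral_xphi]
    norm_num
  rw [h2] at hle
  refine hle.trans ?_
  have h2pi : (1:ℝ) ≤ Real.sqrt (2*Real.pi) := by
    rw [show (1:ℝ) = Real.sqrt 1 by simp]
    exact Real.sqrt_le_sqrt (by nlinarith [Real.pi_gt_three])
  have hinv : (Real.sqrt (2*Real.pi))⁻¹ ≤ 1 := by
    rw [inv_le_one_iff₀]; right; exact h2pi
  have hexp : (0:ℝ) < Real.exp (-s^2/2) := Real.exp_pos _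
  have h1s : 1/s ≤ 1 := by rw [div_le_one hs0]; exact hs
  have hinv0 : (0:ℝ) ≤ (Real.sqrt (2*Real.pi))⁻¹ := by positivity
  have hm1 : (1/s) * (Real.sqrt (2*Real.pi))⁻¹ ≤ 1 := by nlinarith
  calc 1/s * ((Real.sqrt (2*Real.pi))⁻¹ * Real.exp (-s^2/2))
      = ((1/s) * (Real.sqrt (2*Real.pi))⁻¹) * Real.exp (-s^2/2) := by ring
    _ ≤ 1 * Real.exp (-s^2/2) := mul_le_mul_of_nonneg_right hm1 hexp.le
    _ = Real.exp (-s^2/2) := one_mul _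

lemma stdCDF_lower {s : ℝ} (hs : 1 ≤ s) :
    lbc * Real.exp (-s^2/2) / s ≤ stdCDF (-s) := by
  have hs0 : 0 < s := lt_of_lt_of_le one_pos hs
  have hu0 : 0 < 1/s := by positivity
  have hu1 : 1/s ≤ 1 := by rw [div_le_one hs0]; exact hs
  rw [stdCDF_eq]
  set m : ℝ := (Real.sqrt (2*Real.pi))⁻¹ * Real.exp (-(s + 1/s)^2/2) with hm
  have step1 : ∫ x in Set.Icc (-s - 1/s) (-s), (fun _ : ℝ => m) x ≤
      ∫ x in Set.Icc (-s - 1/s) (-s), (Real.sqrt (2*Real.pi))⁻¹ * Real.exp (-x^2/2) := by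
    refine setIntegral_mono_on ((integrableOn_const_iff).mpr (Or.inr ?_))
      integrable_phi.integrableOn measurableSet_Icc fun x hx => ?_
    · exact measure_Icc_lt_top
    · obtain ⟨hx1, hx2⟩ := hx
      have hxb : x^2 ≤ (s + 1/s)^2 := by
        have h1 : -(s + 1/s) ≤ x := by linarith
        have h2 : x ≤ s + 1/s := by nlinarith
        exact sq_le_sq' h1 h2
      have : Real.exp (-(s + 1/s)^2/2) ≤ Real.exp (-x^2/2) := by
        apply Real.exp_le_exp.mpr; linarith
      rw [hm]
      have hC : (0:ℝ) ≤ (Real.sqrt (2*Real.pi))⁻¹ := by positivity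
      exact mul_le_mul_of_nonneg_left this hC
  have step0 : ∫ x in Set.Icc (-s - 1/s) (-s), (fun _ : ℝ => m) x = (1/s) * m := by
    rw [setIntegral_const, Real.volume_real_Icc]
    rw [show -s - (-s - 1/s) = 1/s by ring, max_eq_left hu0.le, smul_eq_mul]
  have step2 : ∫ x in Set.Icc (-s - 1/s) (-s), (Real.sqrt (2*Real.pi))⁻¹ * Real.exp (-x^2/2) ≤
      ∫ x in Set.Iic (-s), (Real.sqrt (2*Real.pi))⁻¹ * Real.exp (-x^2/2) := by
    refine setIntegral_mono_set integrable_phi.integrableOn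
      (Eventually.of_forall fun x => by positivity) ?_
    exact HasSubset.Subset.eventuallyLE Set.Icc_subset_Iic_self
  have hms : lbc * Real.exp (-s^2/2) / s ≤ (1/s) * m := by
    rw [hm, lbc]
    have hsq : (s + 1/s)^2 ≤ s^2 + 3 := by
      have h1 : s * (1/s) = 1 := by field_simp
      nlinarith [sq_nonneg (1/s)]
    have hexp : Real.exp (-(s + 1/s)^2/2) ≥ Real.exp (-(3:ℝ)/2) * Real.exp (-s^2/2) := by
      rw [← Real.exp_add]
      apply Real.exp_le_exp.mpr; linarith
    rw [div_le_iff₀ hs0]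
    have hC : (0:ℝ) ≤ (Real.sqrt (2*Real.pi))⁻¹ := by positivity
    have h2 : (1/s) * ((Real.sqrt (2*Real.pi))⁻¹ * Real.exp (-(s + 1/s)^2/2)) * s
        = (Real.sqrt (2*Real.pi))⁻¹ * Real.exp (-(s + 1/s)^2/2) := by
      field_simp
    rw [h2]
    calc Real.exp (-(3:ℝ)/2) / Real.sqrt (2*Real.pi) * Real.exp (-s^2/2)
        = (Real.sqrt (2*Real.pi))⁻¹ * (Real.exp (-(3:ℝ)/2) * Real.exp (-s^2/2)) := by ring
      _ ≤ (Real.sqrt (2*Real.pi))⁻¹ * Real.exp (-(s + 1/s)^2/2) :=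
          mul_le_mul_of_nonneg_left hexp hC
  calc lbc * Real.exp (-s^2/2) / s ≤ (1/s) * m := hms
    _ = ∫ x in Set.Icc (-s - 1/s) (-s), (fun _ : ℝ => m) x := step0.symm
    _ ≤ ∫ x in Set.Icc (-s - 1/s) (-s), (Real.sqrt (2*Real.pi))⁻¹ * Real.exp (-x^2/2) := step1
    _ ≤ ∫ x in Set.Iic (-s), (Real.sqrt (2*Real.pi))⁻¹ * Real.exp (-x^2/2) := step2

lemma tail_bounds {t p : ℝ} (hp0 : 0 < p) (heq : stdCDF (-t) = p)
    (hsmall : p < lbc * Real.exp (-(1:ℝ)/2)) :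
    1 ≤ t ∧ t^2 ≤ -2*Real.log p ∧ -2*Real.log p - 2*Real.log (t/lbc) ≤ t^2 := by
  have hlbc := lbc_pos
  have ht : 1 ≤ t := by
    by_contra hcon
    push_neg at hcon
    have h1 : stdCDF (-(1:ℝ)) ≤ stdCDF (-t) := stdCDF_mono (by linarith)
    have h2 := stdCDF_lower (le_refl (1:ℝ))
    rw [heq] at h1
    have h3 : lbc * Real.exp (-(1:ℝ)/2) ≤ p := by
      calc lbc * Real.exp (-(1:ℝ)/2) = lbc * Real.exp (-(1:ℝ)^2/2) / 1 := by norm_num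
        _ ≤ stdCDF (-(1:ℝ)) := h2
        _ ≤ p := h1
    linarith
  have ht0 : 0 < t := lt_of_lt_of_le one_pos ht
  have hub := stdCDF_upper ht
  rw [heq] at hub
  have hupper : t^2 ≤ -2*Real.log p := by
    have := (Real.log_le_iff_le_exp hp0).mpr hub
    linarith
  refine ⟨ht, hupper, ?_⟩
  have hlb := stdCDF_lower ht
  rw [heq] at hlb
  rw [div_le_iff₀ ht0] at hlb
  have h3 : Real.exp (-t^2/2) ≤ p * (t/lbc) := by
    calc Real.exp (-t^2/2) = lbc * Real.exp (-t^2/2) / lbc := by field_simp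
      _ ≤ p * t / lbc := by gcongr
      _ = p * (t/lbc) := by ring
  have h4 : -t^2/2 ≤ Real.log (p * (t/lbc)) := (Real.le_log_iff_exp_le (by positivity)).mpr h3
  rw [Real.log_mul (ne_of_gt hp0) (by positivity)] at h4
  linarith

lemma prob_tail {Ω : Type*} [MeasurableSpace Ω] (P : Measure Ω) [IsProbabilityMeasure P]
    (h : Ω → ℝ) (hm : Measurable h) (n : ℕ) (hn : 1 ≤ n)
    (hg : Measure.map h P = gaussianReal 0 n) (β ρ : ℝ) (hβ : 0 < β) (hρ : 0 < ρ) :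
    (P {ω | ρ ≤ Real.exp (-β * h ω)}).toReal
      = stdCDF (-(Real.log ρ / (β * Real.sqrt n))) := by
  have hn0 : (0:ℝ) < n := by exact_mod_cast hn
  have hsn : 0 < Real.sqrt n := Real.sqrt_pos.mpr hn0
  set a : ℝ := -Real.log ρ / β with ha
  have hset : {ω | ρ ≤ Real.exp (-β * h ω)} = h ⁻¹' (Set.Iic a) := by
    ext ω
    simp only [Set.mem_setOf_eq, Set.mem_preimage, Set.mem_Iic, ha]
    rw [← Real.log_le_iff_le_exp hρ, le_div_iff₀ hβ]
    constructor
    · intro hh; nlinarith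
    · intro hh; nlinarith
  have hv : (⟨(Real.sqrt n)^2, sq_nonneg _⟩ : NNReal) * 1 = (n : NNReal) := by
    rw [mul_one]
    exact NNReal.coe_injective (by push_cast; exact Real.sq_sqrt (Nat.cast_nonneg n))
  have hmap := gaussianReal_map_const_mul (μ := 0) (v := 1) (Real.sqrt n)
  rw [mul_zero, show NNReal.mk ((Real.sqrt n)^2) (sq_nonneg _) * 1 = (n:NNReal) from hv] at hmap
  have hpre : (fun y : ℝ => Real.sqrt n * y) ⁻¹' (Set.Iic a) = Set.Iic (a / Real.sqrt n) := by
    ext y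
    simp only [Set.mem_preimage, Set.mem_Iic]
    exact (le_div_iff₀' hsn).symm
  have hgn : (gaussianReal 0 (n : NNReal)) (Set.Iic a)
      = (gaussianReal 0 1) (Set.Iic (a / Real.sqrt n)) := by
    rw [← hmap, Measure.map_apply (measurable_const_mul _) measurableSet_Iic, hpre]
  have hval : a / Real.sqrt n = -(Real.log ρ / (β * Real.sqrt n)) := by
    rw [ha]; field_simp
  rw [hset, ← Measure.map_apply hm measurableSet_Iic, hg, hgn, hval, stdCDF]

lemma abs_bound {A En x ta tb n : ℝ}
    (hA0 : 0 < A) (hn1 : 1 ≤ n) (hx0 : 0 < x) (hx12 : x ≤ 1/2)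
    (hta1 : 1 ≤ ta) (htb1 : 1 ≤ tb)
    (hta2 : ta^2 ≤ A*n*(1-x)) (hta3 : A*n*(1-x) - En ≤ ta^2)
    (htb2 : tb^2 ≤ A*n) (htb3 : A*n - En ≤ tb^2)
    (hE0 : 0 ≤ En) (hE1 : 2*En ≤ A*n) :
    |(ta - tb) - Real.sqrt A * Real.sqrt n * (Real.sqrt (1-x) - 1)|
      ≤ 3*(En/(Real.sqrt A * Real.sqrt n)) := by
  have hn0 : (0:ℝ) < n := lt_of_lt_of_le one_pos hn1
  have h1x : 0 ≤ 1 - x := by linarith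
  set S : ℝ := Real.sqrt A * Real.sqrt n with hSdef
  have hS0 : 0 < S := mul_pos (Real.sqrt_pos.mpr hA0) (Real.sqrt_pos.mpr hn0)
  have hS2 : S^2 = A*n := by
    rw [hSdef, mul_pow, Real.sq_sqrt hA0.le, Real.sq_sqrt hn0.le]
  set Sa : ℝ := S * Real.sqrt (1-x) with hSadef
  have hSa0 : 0 < Sa := mul_pos hS0 (Real.sqrt_pos.mpr (by linarith))
  have hSa2 : Sa^2 = A*n*(1-x) := by
    rw [hSadef, mul_pow, hS2, Real.sq_sqrt h1x]
  have hE_S : En ≤ S^2 := by rw [hS2]; linarith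
  have hE_Sa : En ≤ Sa^2 := by
    rw [hSa2]
    nlinarith [mul_nonneg (mul_pos hA0 hn0).le (show (0:ℝ) ≤ 1/2 - x by linarith)]
  have c1 : ta ≤ Sa := by
    have h := Real.sqrt_le_sqrt (hta2.trans_eq hSa2.symm)
    rwa [Real.sqrt_sq (by linarith), Real.sqrt_sq hSa0.le] at h
  have c2 : tb ≤ S := by
    have h := Real.sqrt_le_sqrt (htb2.trans_eq hS2.symm)
    rwa [Real.sqrt_sq (by linarith), Real.sqrt_sq hS0.le] at h
  have c3 : S - En/S ≤ tb := by
    have hq : (S - En/S)^2 ≤ tb^2 := by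
      have hexp : (S - En/S)^2 = S^2 - 2*En + (En/S)^2 := by field_simp; ring
      have h2 : (En/S)^2 ≤ En := by
        rw [div_pow, div_le_iff₀ (by positivity)]
        nlinarith
      linarith
    calc S - En/S ≤ |S - En/S| := le_abs_self _
      _ = Real.sqrt ((S - En/S)^2) := (Real.sqrt_sq_eq_abs _).symm
      _ ≤ Real.sqrt (tb^2) := Real.sqrt_le_sqrt hq
      _ = tb := Real.sqrt_sq (by linarith)
  have c4 : Sa - En/Sa ≤ ta := by
    have hq : (Sa - En/Sa)^2 ≤ ta^2 := by
      have hexp : (Sa - En/Sa)^2 = Sa^2 - 2*En + (En/Sa)^2 := by field_simp; ring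
      have h2 : (En/Sa)^2 ≤ En := by
        rw [div_pow, div_le_iff₀ (by positivity)]
        nlinarith
      linarith
    calc Sa - En/Sa ≤ |Sa - En/Sa| := le_abs_self _
      _ = Real.sqrt ((Sa - En/Sa)^2) := (Real.sqrt_sq_eq_abs _).symm
      _ ≤ Real.sqrt (ta^2) := Real.sqrt_le_sqrt hq
      _ = ta := Real.sqrt_sq (by linarith)
  have hhalf : (1/2:ℝ) ≤ Real.sqrt (1-x) := by
    rw [show (1/2:ℝ) = Real.sqrt ((1/2)^2) from (Real.sqrt_sq (by norm_num)).symm]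
    exact Real.sqrt_le_sqrt (by nlinarith)
  have hSa_half : S/2 ≤ Sa := by
    have h := mul_le_mul_of_nonneg_left hhalf hS0.le
    rw [hSadef]
    linarith
  have hdivSa : En/Sa ≤ 2*(En/S) := by
    have h1 : En/Sa ≤ En/(S/2) :=
      div_le_div_of_nonneg_left hE0 (by linarith) hSa_half
    have h2 : En/(S/2) = 2*(En/S) := by
      rw [div_div_eq_mul_div]
      ring
    linarith
  have hES0 : 0 ≤ En/S := by positivity
  have hgoal : Real.sqrt A * Real.sqrt n * (Real.sqrt (1-x) - 1) = Sa - S := by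
    rw [hSadef, hSdef]; ring
  rw [hgoal]
  rw [abs_le]
  constructor
  · linarith [c4, c2, hdivSa, hES0]
  · linarith [c1, c3, hES0]

set_option maxHeartbeats 1000000 in
theorem rn_ratio_asymptotics
    {Ω : Type*} [MeasurableSpace Ω] (P : Measure Ω) [IsProbabilityMeasure P]
    (H : (n : ℕ) → (Fin n → Bool) → Ω → ℝ)
    (hmeas : ∀ n x, Measurable (H n x))
    (hgauss : ∀ n x, Measure.map (H n x) P = gaussianReal 0 n)
    (hindep : iIndepFun
      (fun p : (Σ n : ℕ, (Fin n → Bool)) => H p.1 p.2) P)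
    (β : ℝ) (hβ : 0 < β)
    (ε : ℝ) (hε0 : 0 < ε) (hε1 : ε < 1)
    (r : ℕ → ℝ → ℝ)
    (hr : ∀ n, 1 ≤ n → ∀ ρ : ℝ, 0 < ρ → ∀ x : Fin n → Bool, 0 < r n ρ ∧
      (2 : ℝ) ^ (ρ * n) * (P {ω | r n ρ ≤ Real.exp (-β * H n x ω)}).toReal = 1)
    (cstar : ℝ) (hcstar : 1 + Real.log 4 < cstar)
    (rstar : ℕ → ℝ)
    (hrstar : ∀ n, 2 ≤ n → ∀ x : Fin n → Bool, 0 < rstar n ∧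
      (n : ℝ) ^ cstar * (P {ω | rstar n ≤ Real.exp (-β * H n x ω)}).toReal = 1)
    (δ : ℕ → ℝ) (hδpos : ∀ n, 0 < δ n) (hδ0 : Tendsto δ atTop (nhds 0))
    (hx0 : Tendsto (fun n : ℕ => δ n / ε) atTop (nhds 0))
    (hgrow : Tendsto (fun n : ℕ =>
      (n : ℝ) * β * Real.sqrt (2 * ε * Real.log 2) * (δ n / ε) - Real.log (rstar n))
      atTop atTop) :
    Tendsto (fun n : ℕ =>
        Real.log (r n (ε - δ n) / r n ε) / ((n : ℝ) * (δ n / ε)))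
      atTop (nhds (-(β * Real.sqrt (2 * ε * Real.log 2)) / 2)) := by
  have hln2 : 0 < Real.log 2 := Real.log_pos one_lt_two
  have hcst1 : 1 < cstar := by
    have h4 : 0 < Real.log 4 := Real.log_pos (by norm_num)
    linarith
  have hcst0 : 0 < cstar := by linarith
  set C₀ : ℝ := Real.log (2*Real.log 2) - 2*Real.log lbc with hC0def
  set C₁ : ℝ := Real.log (2*cstar) - 2*Real.log lbc with hC1def
  have hxpos : ∀ n, 0 < δ n / ε := fun n => div_pos (hδpos n) hε0
  have hcast : Tendsto (fun n : ℕ => (n:ℝ)) atTop atTop := tendsto_natCast_atTop_atTop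
  -- key quantile bounds for r
  have keyQ : ∀ n : ℕ, 1 ≤ n → ∀ ρ : ℝ, 0 < ρ → ρ ≤ 1 →
      (2:ℝ)^(-(ρ * (n:ℝ))) < lbc * Real.exp (-(1:ℝ)/2) →
      (1 ≤ Real.log (r n ρ) / (β * Real.sqrt n) ∧
       (Real.log (r n ρ) / (β * Real.sqrt n))^2 ≤ 2*ρ*Real.log 2*(n:ℝ) ∧
       2*ρ*Real.log 2*(n:ℝ) - (Real.log n + C₀) ≤ (Real.log (r n ρ) / (β * Real.sqrt n))^2) := by
    intro n hn ρ hρ0 hρ1 hsm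
    have hn0 : (0:ℝ) < n := by exact_mod_cast hn
    obtain ⟨hrpos, heqn⟩ := hr n hn ρ hρ0 (fun _ => true)
    have hptoReal := eq_inv_of_mul_eq_one_right heqn
    have hprob := prob_tail P (H n (fun _ => true)) (hmeas n _) n hn (hgauss n _)
      β (r n ρ) hβ hrpos
    set tt := Real.log (r n ρ) / (β * Real.sqrt n) with htt_def
    have heqs : stdCDF (-tt) = (2:ℝ)^(-(ρ*(n:ℝ))) := by
      rw [← hprob, hptoReal, Real.rpow_neg (by norm_num : (0:ℝ) ≤ 2)]
    have hp0 : (0:ℝ) < (2:ℝ)^(-(ρ*(n:ℝ))) := Real.rpow_pos_of_pos two_pos _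
    obtain ⟨h1, h2, h3⟩ := tail_bounds hp0 heqs hsm
    have hlogp : Real.log ((2:ℝ)^(-(ρ*(n:ℝ)))) = -(ρ*(n:ℝ)) * Real.log 2 :=
      Real.log_rpow two_pos _
    rw [hlogp] at h2 h3
    have hring : -2*(-(ρ*(n:ℝ)) * Real.log 2) = 2*ρ*Real.log 2*(n:ℝ) := by ring
    refine ⟨h1, by linarith, ?_⟩
    have htt0 : 0 < tt := lt_of_lt_of_le one_pos h1
    have hb : tt^2 ≤ 2*Real.log 2*(n:ℝ) := by
      nlinarith [mul_nonneg (mul_nonneg (show (0:ℝ) ≤ 1-ρ by linarith) hln2.le) hn0.le]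
    have hY : tt ≤ Real.sqrt (2*Real.log 2*(n:ℝ)) := by
      calc tt = Real.sqrt (tt^2) := (Real.sqrt_sq htt0.le).symm
        _ ≤ _ := Real.sqrt_le_sqrt hb
    have hlog_tt : 2*Real.log (tt/lbc) ≤ Real.log n + C₀ := by
      rw [Real.log_div (ne_of_gt htt0) (ne_of_gt lbc_pos)]
      have h5 : Real.log tt ≤ Real.log (Real.sqrt (2*Real.log 2*(n:ℝ))) :=
        Real.log_le_log htt0 hY
      have h6 : Real.log (Real.sqrt (2*Real.log 2*(n:ℝ)))
          = (1/2) * Real.log (2*Real.log 2*(n:ℝ)) := by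
        rw [Real.log_sqrt (by positivity)]; ring
      have h7 : Real.log (2*Real.log 2*(n:ℝ)) = Real.log (2*Real.log 2) + Real.log n :=
        Real.log_mul (by positivity) (ne_of_gt hn0)
      rw [hC0def]
      linarith
    linarith
  -- small probability eventualities
  have hpos_rhs : (0:ℝ) < lbc * Real.exp (-(1:ℝ)/2) := mul_pos lbc_pos (Real.exp_pos _)
  have hsmall1 : ∀ᶠ n : ℕ in atTop, (2:ℝ)^(-((ε/2) * (n:ℝ))) < lbc * Real.exp (-(1:ℝ)/2) := by
    have hbase : (2:ℝ)^(-(ε/2)) < 1 :=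
      Real.rpow_lt_one_of_one_lt_of_neg one_lt_two (by linarith)
    have hb0 : (0:ℝ) ≤ (2:ℝ)^(-(ε/2)) := (Real.rpow_pos_of_pos two_pos _).le
    have htend : Tendsto (fun n:ℕ => ((2:ℝ)^(-(ε/2)))^n) atTop (nhds 0) :=
      tendsto_pow_atTop_nhds_zero_of_lt_one hb0 hbase
    have htend2 : Tendsto (fun n:ℕ => (2:ℝ)^(-((ε/2)*(n:ℝ)))) atTop (nhds 0) := by
      refine htend.congr fun n => ?_
      rw [← Real.rpow_natCast ((2:ℝ)^(-(ε/2))) n, ← Real.rpow_mul (by norm_num : (0:ℝ) ≤ 2)]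
      ring_nf
    exact htend2.eventually_lt_const hpos_rhs
  have hsmall2 : ∀ᶠ n : ℕ in atTop, ((n:ℝ))^(-cstar) < lbc * Real.exp (-(1:ℝ)/2) := by
    have h := (tendsto_rpow_neg_atTop hcst0).comp hcast
    exact h.eventually_lt_const hpos_rhs
  -- log n is eventually linearly small
  have hεl2 : 0 < ε*Real.log 2/2 := div_pos (mul_pos hε0 hln2) two_pos
  have hloglin : ∀ᶠ n : ℕ in atTop, Real.log n ≤ (ε*Real.log 2/2) * (n:ℝ) := by
    have h := Asymptotics.isLittleO_iff.mp Real.isLittleO_log_id_atTop hεl2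
    have h2 := hcast |>.eventually h
    filter_upwards [h2] with n hb
    have hn0 : (0:ℝ) ≤ n := Nat.cast_nonneg n
    simp only [Real.norm_eq_abs, id] at hb
    calc Real.log n ≤ |Real.log n| := le_abs_self _
      _ ≤ (ε*Real.log 2/2)*|(n:ℝ)| := hb
      _ = (ε*Real.log 2/2)*(n:ℝ) := by rw [abs_of_nonneg hn0]
  have hC0lin : ∀ᶠ n : ℕ in atTop, C₀ ≤ (ε*Real.log 2/2)*(n:ℝ) :=
    (Tendsto.const_mul_atTop hεl2 (hcast)).eventually_ge_atTop C₀
  have hE1ev : ∀ᶠ n : ℕ in atTop, Real.log n + C₀ ≤ ε*Real.log 2*(n:ℝ) := by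
    filter_upwards [hloglin, hC0lin] with n h1 h2
    linarith
  have hE0ev : ∀ᶠ n : ℕ in atTop, 0 ≤ Real.log n + C₀ := by
    have := (Real.tendsto_log_atTop.comp (hcast)).eventually_ge_atTop (-C₀)
    filter_upwards [this] with n h
    simp only [Function.comp] at h
    linarith
  have hxev : ∀ᶠ n : ℕ in atTop, δ n / ε ≤ 1/2 :=
    (hx0.eventually_lt_const (by norm_num : (0:ℝ) < 1/2)).mono fun n h => h.le
  -- lower bound on log rstar
  have hC1ev : ∀ᶠ n : ℕ in atTop, C₁ ≤ (2*cstar - 2)*Real.log n := by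
    have h := (Tendsto.const_mul_atTop (show (0:ℝ) < 2*cstar - 2 by linarith)
      (Real.tendsto_log_atTop.comp (hcast))).eventually_ge_atTop C₁
    filter_upwards [h] with n hh
    simpa [Function.comp] using hh
  have hts : ∀ᶠ n : ℕ in atTop,
      β * (Real.sqrt n * Real.sqrt (Real.log n)) ≤ Real.log (rstar n) := by
    filter_upwards [eventually_ge_atTop 2, hsmall2, hC1ev] with n h2 hsm hC1b
    have hn1 : 1 ≤ n := le_trans one_le_two h2
    have hn2 : (2:ℝ) ≤ n := by exact_mod_cast h2
    have hn0 : (0:ℝ) < n := by linarith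
    obtain ⟨hrs0, heqn⟩ := hrstar n h2 (fun _ => true)
    have hptoReal := eq_inv_of_mul_eq_one_right heqn
    have hprob := prob_tail P (H n (fun _ => true)) (hmeas n _) n hn1 (hgauss n _)
      β (rstar n) hβ hrs0
    set ts := Real.log (rstar n) / (β * Real.sqrt n) with hts_def
    have heqs : stdCDF (-ts) = (n:ℝ)^(-cstar) := by
      rw [← hprob, hptoReal, Real.rpow_neg hn0.le]
    obtain ⟨h1t, h2t, h3t⟩ := tail_bounds (Real.rpow_pos_of_pos hn0 _) heqs hsm
    have hlogp : Real.log ((n:ℝ)^(-cstar)) = -cstar * Real.log n := Real.log_rpow hn0 _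
    rw [hlogp] at h2t h3t
    have hln0 : 0 ≤ Real.log n := Real.log_nonneg (by linarith)
    have hlnn : Real.log n ≤ (n:ℝ) := by
      have := Real.log_le_sub_one_of_pos hn0
      linarith
    have hts0 : 0 < ts := lt_of_lt_of_le one_pos h1t
    have hb : ts^2 ≤ 2*cstar*(n:ℝ) := by
      nlinarith [mul_le_mul_of_nonneg_left hlnn (show (0:ℝ) ≤ 2*cstar by linarith)]
    have htsle : ts ≤ Real.sqrt (2*cstar*(n:ℝ)) := by
      calc ts = Real.sqrt (ts^2) := (Real.sqrt_sq hts0.le).symm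
        _ ≤ _ := Real.sqrt_le_sqrt hb
    have hlog_ts : 2*Real.log (ts/lbc) ≤ Real.log n + C₁ := by
      rw [Real.log_div (ne_of_gt hts0) (ne_of_gt lbc_pos)]
      have h5 : Real.log ts ≤ Real.log (Real.sqrt (2*cstar*(n:ℝ))) :=
        Real.log_le_log hts0 htsle
      have h6 : Real.log (Real.sqrt (2*cstar*(n:ℝ)))
          = (1/2) * Real.log (2*cstar*(n:ℝ)) := by
        rw [Real.log_sqrt (by positivity)]; ring
      have h7 : Real.log (2*cstar*(n:ℝ)) = Real.log (2*cstar) + Real.log n :=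
        Real.log_mul (by positivity) (ne_of_gt hn0)
      rw [hC1def]
      linarith
    have hts2 : Real.log n ≤ ts^2 := by nlinarith
    have hts_ge : Real.sqrt (Real.log n) ≤ ts := by
      calc Real.sqrt (Real.log n) ≤ Real.sqrt (ts^2) := Real.sqrt_le_sqrt hts2
        _ = ts := Real.sqrt_sq hts0.le
    have hrw : Real.log (rstar n) = ts * (β * Real.sqrt n) := by
      rw [hts_def]
      field_simp
    rw [hrw]
    have hbs : (0:ℝ) ≤ β * Real.sqrt n := by positivity
    calc β*(Real.sqrt n * Real.sqrt (Real.log n))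
        = Real.sqrt (Real.log n) * (β*Real.sqrt n) := by ring
      _ ≤ ts * (β*Real.sqrt n) := mul_le_mul_of_nonneg_right hts_ge hbs
  have hnxev : ∀ᶠ n : ℕ in atTop, Real.sqrt n * Real.sqrt (Real.log n)
      ≤ Real.sqrt (2*ε*Real.log 2) * ((n:ℝ)*(δ n/ε)) := by
    filter_upwards [hts, hgrow.eventually_ge_atTop 0] with n h1 h2
    have hid : (n:ℝ)*β*Real.sqrt (2*ε*Real.log 2)*(δ n/ε)
        = β*(Real.sqrt (2*ε*Real.log 2)*((n:ℝ)*(δ n/ε))) := by ring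
    have h3 : β*(Real.sqrt n*Real.sqrt (Real.log n))
        ≤ β*(Real.sqrt (2*ε*Real.log 2)*((n:ℝ)*(δ n/ε))) := by linarith
    exact le_of_mul_le_mul_left h3 hβ
  -- the error bound tends to zero
  have hsq_atTop : Tendsto (fun n : ℕ => Real.sqrt n) atTop atTop := by
    have h := (tendsto_rpow_atTop (by norm_num : (0:ℝ) < 1/2)).comp
      (hcast)
    refine h.congr fun n => ?_
    simp only [Function.comp]
    rw [← Real.sqrt_eq_rpow]
  have hdiv0 : Tendsto (fun n : ℕ => Real.log n/(n:ℝ)) atTop (nhds 0) := by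
    have h := Real.isLittleO_log_id_atTop.tendsto_div_nhds_zero
    have h2 := h.comp (hcast)
    simpa [Function.comp_def] using h2
  have hsqrtdiv : Tendsto (fun n : ℕ => Real.sqrt (Real.log n/(n:ℝ))) atTop (nhds 0) := by
    have := (Real.continuous_sqrt.tendsto 0).comp hdiv0
    simpa only [Function.comp_def, Real.sqrt_zero] using this
  have hCdiv : Tendsto (fun n : ℕ => |C₀|/Real.sqrt n) atTop (nhds 0) :=
    Tendsto.const_div_atTop hsq_atTop _
  have hgto : Tendsto (fun n : ℕ => Real.sqrt (2*ε*Real.log 2) *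
      (Real.sqrt (Real.log n/(n:ℝ)) + |C₀|/Real.sqrt n)) atTop (nhds 0) := by
    have := (hsqrtdiv.add hCdiv).const_mul (Real.sqrt (2*ε*Real.log 2))
    simpa using this
  have hlog1ev : ∀ᶠ n : ℕ in atTop, 1 ≤ Real.log n := by
    have := (Real.tendsto_log_atTop.comp (hcast)).eventually_ge_atTop 1
    filter_upwards [this] with n h
    simpa [Function.comp] using h
  have hDto : Tendsto (fun n : ℕ => (Real.log n + C₀)/((n:ℝ)*(δ n/ε))) atTop (nhds 0) := by
    apply squeeze_zero' ?_ ?_ hgto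
    · filter_upwards [hE0ev, eventually_ge_atTop 1] with n h1 h2
      have hn0 : (0:ℝ) < n := by exact_mod_cast h2
      exact div_nonneg h1 (mul_pos hn0 (hxpos n)).le
    · filter_upwards [hnxev, hE0ev, hlog1ev, eventually_ge_atTop 1] with n hnx hE0n hln1 hn1
      have hn0 : (0:ℝ) < n := by exact_mod_cast hn1
      have hx0n := hxpos n
      have hnx0 : 0 < (n:ℝ)*(δ n/ε) := mul_pos hn0 hx0n
      have hln0 : (0:ℝ) ≤ Real.log n := by linarith
      have hsn0 : 0 < Real.sqrt n := Real.sqrt_pos.mpr hn0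
      have hsl0 : 0 < Real.sqrt n * Real.sqrt (Real.log n) :=
        mul_pos hsn0 (Real.sqrt_pos.mpr (by linarith))
      have hsA0 : (0:ℝ) ≤ Real.sqrt (2*ε*Real.log 2) := Real.sqrt_nonneg _
      have step1 : (Real.log n + C₀)/((n:ℝ)*(δ n/ε))
          ≤ ((Real.log n + C₀)*Real.sqrt (2*ε*Real.log 2))/(Real.sqrt n*Real.sqrt (Real.log n)) := by
        rw [div_le_div_iff₀ hnx0 hsl0]
        calc (Real.log n + C₀)*(Real.sqrt n*Real.sqrt (Real.log n))
            ≤ (Real.log n + C₀)*(Real.sqrt (2*ε*Real.log 2)*((n:ℝ)*(δ n/ε))) :=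
              mul_le_mul_of_nonneg_left hnx hE0n
          _ = (Real.log n + C₀)*Real.sqrt (2*ε*Real.log 2)*((n:ℝ)*(δ n/ε)) := by ring
      have hterm1 : Real.log n/(Real.sqrt n*Real.sqrt (Real.log n))
          = Real.sqrt (Real.log n/(n:ℝ)) := by
        rw [Real.sqrt_div hln0, div_eq_div_iff hsl0.ne' hsn0.ne']
        linear_combination (-Real.sqrt (n:ℝ)) * Real.mul_self_sqrt hln0
      have hterm2 : C₀/(Real.sqrt n*Real.sqrt (Real.log n)) ≤ |C₀|/Real.sqrt n := by
        apply div_le_div₀ (abs_nonneg _) (le_abs_self _) hsn0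
        exact le_mul_of_one_le_right hsn0.le (Real.one_le_sqrt.mpr hln1)
      have step2 : ((Real.log n + C₀)*Real.sqrt (2*ε*Real.log 2))/(Real.sqrt n*Real.sqrt (Real.log n))
          = Real.sqrt (2*ε*Real.log 2)*(Real.log n/(Real.sqrt n*Real.sqrt (Real.log n)))
            + Real.sqrt (2*ε*Real.log 2)*(C₀/(Real.sqrt n*Real.sqrt (Real.log n))) := by
        ring
      have step3 := mul_le_mul_of_nonneg_left hterm2 hsA0
      calc (Real.log n + C₀)/((n:ℝ)*(δ n/ε))
          ≤ ((Real.log n + C₀)*Real.sqrt (2*ε*Real.log 2))/(Real.sqrt n*Real.sqrt (Real.log n)) := step1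
        _ = Real.sqrt (2*ε*Real.log 2)*(Real.log n/(Real.sqrt n*Real.sqrt (Real.log n)))
            + Real.sqrt (2*ε*Real.log 2)*(C₀/(Real.sqrt n*Real.sqrt (Real.log n))) := step2
        _ ≤ Real.sqrt (2*ε*Real.log 2)*Real.sqrt (Real.log n/(n:ℝ))
            + Real.sqrt (2*ε*Real.log 2)*(|C₀|/Real.sqrt n) := by
            rw [hterm1]
            linarith
        _ = Real.sqrt (2*ε*Real.log 2) * (Real.sqrt (Real.log n/(n:ℝ)) + |C₀|/Real.sqrt n) := by
            ring
  have hBto : Tendsto (fun n : ℕ => (3*β/Real.sqrt (2*ε*Real.log 2)) *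
      ((Real.log n + C₀)/((n:ℝ)*(δ n/ε)))) atTop (nhds 0) := by
    have := hDto.const_mul (3*β/Real.sqrt (2*ε*Real.log 2))
    simpa using this
  -- the main squeeze
  have hQMev : ∀ᶠ n : ℕ in atTop,
      |Real.log (r n (ε - δ n) / r n ε) / ((n:ℝ)*(δ n/ε))
        - β*Real.sqrt (2*ε*Real.log 2)*((Real.sqrt (1 - δ n/ε) - 1)/(δ n/ε))|
      ≤ (3*β/Real.sqrt (2*ε*Real.log 2)) * ((Real.log n + C₀)/((n:ℝ)*(δ n/ε))) := by
    filter_upwards [eventually_ge_atTop 1, hxev, hsmall1, hE1ev, hE0ev] with n hn1 hx12 hsm1n hE1n hE0n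
    have hn0 : (0:ℝ) < n := by exact_mod_cast hn1
    have hn1' : (1:ℝ) ≤ n := by exact_mod_cast hn1
    have hx0n := hxpos n
    have hδhalf : δ n ≤ ε/2 := by
      have := (div_le_iff₀ hε0).mp hx12
      linarith
    have hεδ0 : 0 < ε - δ n := by linarith
    have hεδ1 : ε - δ n ≤ 1 := by linarith [hδpos n]
    have hεδhalf : ε/2 ≤ ε - δ n := by linarith
    have hmono : ∀ a b : ℝ, a ≤ b → (2:ℝ)^(-(b*(n:ℝ))) ≤ (2:ℝ)^(-(a*(n:ℝ))) := by
      intro a b hab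
      apply (Real.rpow_le_rpow_left_iff one_lt_two).mpr
      nlinarith
    have hsm_a : (2:ℝ)^(-((ε - δ n)*(n:ℝ))) < lbc * Real.exp (-(1:ℝ)/2) :=
      lt_of_le_of_lt (hmono _ _ hεδhalf) hsm1n
    have hsm_b : (2:ℝ)^(-(ε*(n:ℝ))) < lbc * Real.exp (-(1:ℝ)/2) :=
      lt_of_le_of_lt (hmono _ _ (by linarith : ε/2 ≤ ε)) hsm1n
    obtain ⟨h1a, h2a, h3a⟩ := keyQ n hn1 (ε - δ n) hεδ0 hεδ1 hsm_a
    obtain ⟨h1b, h2b, h3b⟩ := keyQ n hn1 ε hε0 hε1.le hsm_b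
    set ta := Real.log (r n (ε - δ n)) / (β * Real.sqrt n) with hta_def
    set tb := Real.log (r n ε) / (β * Real.sqrt n) with htb_def
    have hAx : 2*(ε - δ n)*Real.log 2*(n:ℝ) = (2*ε*Real.log 2)*(n:ℝ)*(1 - δ n/ε) := by
      field_simp
    rw [hAx] at h2a h3a
    have habs := abs_bound (A := 2*ε*Real.log 2) (En := Real.log n + C₀) (x := δ n/ε)
      (ta := ta) (tb := tb) (n := (n:ℝ))
      (by positivity) hn1' hx0n hx12 h1a h1b h2a h3a h2b h3b hE0n (by linarith)
    -- now algebra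
    have hra := (hr n hn1 (ε - δ n) hεδ0 (fun _ => true)).1
    have hrb := (hr n hn1 ε hε0 (fun _ => true)).1
    have hsn0 : (0:ℝ) < Real.sqrt n := Real.sqrt_pos.mpr hn0
    have hβs : β * Real.sqrt n ≠ 0 := by positivity
    have hnn : Real.sqrt n * Real.sqrt n = (n:ℝ) := Real.mul_self_sqrt hn0.le
    have hlogdiv : Real.log (r n (ε - δ n) / r n ε)
        = ta*(β*Real.sqrt n) - tb*(β*Real.sqrt n) := by
      rw [Real.log_div (ne_of_gt hra) (ne_of_gt hrb), hta_def, htb_def,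
        div_mul_cancel₀ _ hβs, div_mul_cancel₀ _ hβs]
    have hQeq : Real.log (r n (ε - δ n) / r n ε) / ((n:ℝ)*(δ n/ε))
        = (ta - tb)*(β*Real.sqrt n)/((n:ℝ)*(δ n/ε)) := by
      rw [hlogdiv]; ring
    have hMeq : β*Real.sqrt (2*ε*Real.log 2)*((Real.sqrt (1 - δ n/ε) - 1)/(δ n/ε))
        = (Real.sqrt (2*ε*Real.log 2)*Real.sqrt n*(Real.sqrt (1 - δ n/ε) - 1))
          *(β*Real.sqrt n)/((n:ℝ)*(δ n/ε)) := by
      have h1 : (Real.sqrt (2*ε*Real.log 2)*Real.sqrt n*(Real.sqrt (1 - δ n/ε)-1))*(β*Real.sqrt n)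
          = β*Real.sqrt (2*ε*Real.log 2)*(Real.sqrt (1 - δ n/ε)-1)*(Real.sqrt n*Real.sqrt n) := by
        ring
      rw [hnn] at h1
      have h2 : ((Real.sqrt (1 - δ n/ε)-1)/(δ n/ε))*((n:ℝ)*(δ n/ε))
          = (Real.sqrt (1 - δ n/ε)-1)*(n:ℝ) := by
        rw [div_mul_eq_mul_div, mul_div_assoc, mul_div_cancel_right₀ _ (ne_of_gt hx0n)]
      rw [eq_div_iff (ne_of_gt (mul_pos hn0 hx0n)), h1]
      calc β*Real.sqrt (2*ε*Real.log 2)*((Real.sqrt (1 - δ n/ε)-1)/(δ n/ε))*((n:ℝ)*(δ n/ε))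
          = β*Real.sqrt (2*ε*Real.log 2)*(((Real.sqrt (1 - δ n/ε)-1)/(δ n/ε))*((n:ℝ)*(δ n/ε))) := by
            ring
        _ = β*Real.sqrt (2*ε*Real.log 2)*((Real.sqrt (1 - δ n/ε)-1)*(n:ℝ)) := by rw [h2]
        _ = β*Real.sqrt (2*ε*Real.log 2)*(Real.sqrt (1 - δ n/ε)-1)*(n:ℝ) := by ring
    rw [hQeq, hMeq]
    have hfac : (ta - tb)*(β*Real.sqrt n)/((n:ℝ)*(δ n/ε))
        - (Real.sqrt (2*ε*Real.log 2)*Real.sqrt n*(Real.sqrt (1 - δ n/ε) - 1))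
          *(β*Real.sqrt n)/((n:ℝ)*(δ n/ε))
        = ((ta - tb) - Real.sqrt (2*ε*Real.log 2)*Real.sqrt n*(Real.sqrt (1 - δ n/ε) - 1))
          *((β*Real.sqrt n)/((n:ℝ)*(δ n/ε))) := by
      ring
    rw [hfac, abs_mul, abs_of_pos (show (0:ℝ) < (β*Real.sqrt n)/((n:ℝ)*(δ n/ε)) by positivity)]
    calc |(ta - tb) - Real.sqrt (2*ε*Real.log 2)*Real.sqrt n*(Real.sqrt (1 - δ n/ε) - 1)|
          *((β*Real.sqrt n)/((n:ℝ)*(δ n/ε)))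
        ≤ (3*((Real.log n + C₀)/(Real.sqrt (2*ε*Real.log 2)*Real.sqrt n)))
          *((β*Real.sqrt n)/((n:ℝ)*(δ n/ε))) :=
          mul_le_mul_of_nonneg_right habs (by positivity)
      _ = (3*(Real.log n + C₀)*β)*(Real.sqrt n/(Real.sqrt (2*ε*Real.log 2)*Real.sqrt n))
            /((n:ℝ)*(δ n/ε)) := by ring
      _ = (3*β/Real.sqrt (2*ε*Real.log 2)) * ((Real.log n + C₀)/((n:ℝ)*(δ n/ε))) := by
          rw [show Real.sqrt (n:ℝ) / (Real.sqrt (2*ε*Real.log 2) * Real.sqrt (n:ℝ))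
              = 1/Real.sqrt (2*ε*Real.log 2) from by
            rw [mul_comm, ← div_div, div_self hsn0.ne']]
          ring
  -- main term limit
  have hcont : Tendsto (fun y : ℝ => -(1/(1 + Real.sqrt (1 - y)))) (nhds 0) (nhds (-(1/2))) := by
    have h1 : ContinuousAt (fun y : ℝ => 1 + Real.sqrt (1 - y)) 0 := by
      apply ContinuousAt.add continuousAt_const
      exact (Real.continuous_sqrt.comp (continuous_const.sub continuous_id)).continuousAt
    have h2 : ContinuousAt (fun y : ℝ => -(1/(1 + Real.sqrt (1 - y)))) 0 := by
      apply ContinuousAt.neg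
      apply ContinuousAt.div continuousAt_const h1
      simp
    have h3 := h2.tendsto
    simp only [sub_zero, Real.sqrt_one] at h3
    convert h3 using 2
    norm_num
  have hmain0 : Tendsto (fun n : ℕ => (Real.sqrt (1 - δ n/ε) - 1)/(δ n/ε)) atTop
      (nhds (-(1/2))) := by
    refine (hcont.comp hx0).congr' ?_
    filter_upwards [hxev] with n h12
    have hx0n := hxpos n
    simp only [Function.comp]
    generalize hu : δ n/ε = u at h12 hx0n ⊢
    have h1x : (0:ℝ) ≤ 1 - u := by linarith
    have hs := Real.mul_self_sqrt h1x
    have hden : (0:ℝ) < 1 + Real.sqrt (1 - u) := by positivity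
    field_simp
    nlinarith [hs]
  have hMto : Tendsto (fun n : ℕ => β*Real.sqrt (2*ε*Real.log 2)
      *((Real.sqrt (1 - δ n/ε) - 1)/(δ n/ε))) atTop
      (nhds (-(β * Real.sqrt (2*ε*Real.log 2))/2)) := by
    have h := hmain0.const_mul (β*Real.sqrt (2*ε*Real.log 2))
    rw [show (β*Real.sqrt (2*ε*Real.log 2))*(-(1/2))
      = -(β*Real.sqrt (2*ε*Real.log 2))/2 from by ring] at h
    exact h
  have hsub : Tendsto (fun n : ℕ => Real.log (r n (ε - δ n) / r n ε) / ((n:ℝ)*(δ n/ε))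
      - β*Real.sqrt (2*ε*Real.log 2)*((Real.sqrt (1 - δ n/ε) - 1)/(δ n/ε))) atTop (nhds 0) := by
    apply squeeze_zero_norm' ?_ hBto
    filter_upwards [hQMev] with n h
    simpa [Real.norm_eq_abs] using h
  have hfinal := hMto.add hsub
  rw [add_zero] at hfinal
  refine hfinal.congr fun n => by ring
end
end

section
/- ℙ-almost surely, lim_{n→∞} n^{c*} · ( n^{c*}·2^{−n}·|V_n*| − 1 ) = 0; that is, |V_n*| = 2^n n^{−c*}(1 + o(n^{−c*})) almost surely. -/
open MeasureTheory ProbabilityTheory Filter Real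

noncomputable section

theorem Vstar_cardinality
    {Ω : Type*} [MeasurableSpace Ω] (P : Measure Ω) [IsProbabilityMeasure P]
    (H : (n : ℕ) → (Fin n → Bool) → Ω → ℝ)
    (hmeas : ∀ n x, Measurable (H n x))
    (hgauss : ∀ n x, Measure.map (H n x) P = gaussianReal 0 n)
    (hindep : iIndepFun
      (fun p : (Σ n : ℕ, (Fin n → Bool)) => H p.1 p.2) P)
    (β : ℝ) (hβ : 0 < β)
    (cstar : ℝ) (hcstar : 1 + Real.log 4 < cstar)
    (rstar : ℕ → ℝ)
    (hrstar : ∀ n, 2 ≤ n → ∀ x : Fin n → Bool, 0 < rstar n ∧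
      (n : ℝ) ^ cstar * (P {ω | rstar n ≤ Real.exp (-β * H n x ω)}).toReal = 1) :
    ∀ᵐ ω ∂P, Tendsto (fun n : ℕ =>
        (n : ℝ) ^ cstar *
          ((n : ℝ) ^ cstar * ((2 : ℝ) ^ n)⁻¹ *
            (Set.ncard {x : Fin n → Bool | rstar n ≤ Real.exp (-β * H n x ω)} : ℝ) - 1))
      atTop (nhds 0) := by
  classical
  have hc0 : (0 : ℝ) < cstar := by
    have : (0:ℝ) < Real.log 4 := Real.log_pos (by norm_num)
    linarith
  -- the events and indicator variables
  set E : (n : ℕ) → (Fin n → Bool) → Set Ω :=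
    fun n x => {ω | rstar n ≤ Real.exp (-β * H n x ω)} with hE
  have hEmeas : ∀ n x, MeasurableSet (E n x) := fun n x =>
    measurableSet_le measurable_const (Real.measurable_exp.comp ((hmeas n x).const_mul (-β)))
  set Y : (n : ℕ) → (Fin n → Bool) → Ω → ℝ :=
    fun n x => (E n x).indicator (fun _ => (1:ℝ)) with hY
  have hYmemℒp : ∀ n x, MemLp (Y n x) 2 P := fun n x =>
    memLp_indicator_const 2 (hEmeas n x) 1 (Or.inr (measure_ne_top P _))
  have hYint : ∀ n x, ∫ ω, Y n x ω ∂P = (P (E n x)).toReal := by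
    intro n x
    rw [hY]
    rw [integral_indicator_const (1:ℝ) (hEmeas n x), smul_eq_mul, mul_one, measureReal_def]
  have hYsq : ∀ n x, (Y n x) ^ 2 = Y n x := by
    intro n x
    funext ω
    simp only [Pi.pow_apply, hY, Set.indicator_apply]
    split_ifs <;> norm_num
  -- pairwise independence of the indicators within level n
  have hYindep : ∀ n, ∀ x y : Fin n → Bool, x ≠ y → IndepFun (Y n x) (Y n y) P := by
    intro n x y hxy
    have hne : (⟨n, x⟩ : Σ n : ℕ, (Fin n → Bool)) ≠ ⟨n, y⟩ := by
      intro h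
      exact hxy (eq_of_heq (Sigma.mk.inj_iff.mp h).2)
    have h1 : IndepFun (H n x) (H n y) P := hindep.indepFun hne
    have hφ : Measurable ({t : ℝ | rstar n ≤ Real.exp (-β * t)}.indicator
        (fun _ => (1:ℝ))) := by
      apply measurable_const.indicator
      exact measurableSet_le measurable_const (Real.measurable_exp.comp
        (measurable_id.const_mul (-β)))
    have hcomp : ∀ z : Fin n → Bool, Y n z =
        ({t : ℝ | rstar n ≤ Real.exp (-β * t)}.indicator (fun _ => (1:ℝ))) ∘ (H n z) := by
      intro z; funext ω
      simp only [Function.comp_apply, hY, Set.indicator_apply, hE, Set.mem_setOf_eq]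
    rw [hcomp x, hcomp y]
    exact h1.comp hφ hφ
  -- the sum
  set S : (n : ℕ) → Ω → ℝ := fun n => ∑ x : Fin n → Bool, Y n x with hSdef
  have hcard : ∀ n : ℕ, (Fintype.card (Fin n → Bool)) = 2 ^ n := by
    intro n; simp [Fintype.card_fun]
  -- ncard identity
  have hncard : ∀ n (ω : Ω),
      ((Set.ncard {x : Fin n → Bool | rstar n ≤ Real.exp (-β * H n x ω)}) : ℝ) = S n ω := by
    intro n ω
    rw [Set.ncard_eq_toFinset_card', Set.toFinset_setOf, Finset.card_filter]
    push_cast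
    rw [hSdef]
    simp only [Finset.sum_apply]
    refine Finset.sum_congr rfl fun x _ => ?_
    simp only [hY, Set.indicator_apply]
    rfl
  -- the common probability for n ≥ 2
  have hprob : ∀ n, 2 ≤ n → ∀ x, (P (E n x)).toReal = ((n:ℝ) ^ cstar)⁻¹ := by
    intro n hn x
    have hNpos : (0:ℝ) < (n:ℝ) := by positivity
    have hQ : (0:ℝ) < (n:ℝ) ^ cstar := Real.rpow_pos_of_pos hNpos _
    have h : (n:ℝ) ^ cstar * (P (E n x)).toReal = 1 := (hrstar n hn x).2
    exact mul_left_cancel₀ hQ.ne' (h.trans (mul_inv_cancel₀ hQ.ne').symm)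
  -- mean of S
  have hmean : ∀ n, 2 ≤ n → ∫ ω, S n ω ∂P = 2 ^ n * ((n:ℝ) ^ cstar)⁻¹ := by
    intro n hn
    rw [hSdef]
    simp only [Finset.sum_apply]
    rw [integral_finset_sum _ (fun x _ => (hYmemℒp n x).integrable one_le_two)]
    simp only [hYint, hprob n hn]
    rw [Finset.sum_const, Finset.card_univ, hcard, nsmul_eq_mul]
    push_cast
    ring
  -- variance bound
  have hvar : ∀ n, 2 ≤ n → variance (S n) P ≤ 2 ^ n * ((n:ℝ) ^ cstar)⁻¹ := by
    intro n hn
    rw [hSdef, IndepFun.variance_sum (fun x _ => hYmemℒp n x)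
      (fun x _ y _ hxy => hYindep n x y hxy)]
    have hb : ∀ x : Fin n → Bool, variance (Y n x) P ≤ ((n:ℝ) ^ cstar)⁻¹ := by
      intro x
      calc variance (Y n x) P ≤ ∫ ω, ((Y n x) ^ 2) ω ∂P :=
            variance_le_expectation_sq (hYmemℒp n x).1
        _ = ((n:ℝ) ^ cstar)⁻¹ := by
            rw [hYsq n x]
            rw [hYint n x, hprob n hn x]
    calc (∑ x : Fin n → Bool, variance (Y n x) P)
        ≤ ∑ _x : Fin n → Bool, ((n:ℝ) ^ cstar)⁻¹ := Finset.sum_le_sum fun x _ => hb x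
      _ = 2 ^ n * ((n:ℝ) ^ cstar)⁻¹ := by
          rw [Finset.sum_const, Finset.card_univ, hcard, nsmul_eq_mul]; push_cast; ring
  -- main Borel-Cantelli step
  have main : ∀ ε : ℝ, 0 < ε → ∀ᵐ ω ∂P, ∀ᶠ n in atTop, 2 ≤ n →
      |S n ω - 2 ^ n * ((n:ℝ) ^ cstar)⁻¹| < ε * 2 ^ n / (n:ℝ) ^ (2 * cstar) := by
    intro ε hε
    set B : ℕ → Set Ω := fun n =>
      if 2 ≤ n then
        {ω | ε * 2 ^ n / (n:ℝ) ^ (2 * cstar) ≤ |S n ω - ∫ a, S n a ∂P|}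
      else ∅ with hB
    have hsum : (∑' n, P (B n)) ≠ ⊤ := by
      set g : ℕ → ℝ := fun n => (n:ℝ) ^ (3 * cstar) / (ε ^ 2 * 2 ^ n) with hg
      have hgnonneg : ∀ n, 0 ≤ g n := by
        intro n; apply div_nonneg (Real.rpow_nonneg (Nat.cast_nonneg n) _); positivity
      have hgsum : Summable g := by
        set k := ⌈3 * cstar⌉₊ with hk
        have hcomp : Summable (fun n : ℕ => ε⁻¹ ^ 2 * ((n:ℕ) ^ k * (1/2 : ℝ) ^ n)) :=
          (summable_pow_mul_geometric_of_norm_lt_one (r := (1/2:ℝ)) k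
            (by rw [Real.norm_eq_abs]; rw [abs_of_pos] <;> norm_num)).mul_left _
        refine Summable.of_nonneg_of_le hgnonneg (fun n => ?_) hcomp
        rcases Nat.eq_zero_or_pos n with rfl | hn
        · have hg0 : g 0 = 0 := by
            simp [hg, Real.zero_rpow (show 3 * cstar ≠ 0 by positivity)]
          rw [hg0]
          positivity
        · have h1 : (1:ℝ) ≤ (n:ℝ) := by exact_mod_cast hn
          have hle : (n:ℝ) ^ (3 * cstar) ≤ (n:ℝ) ^ (k : ℕ) := by
            rw [← Real.rpow_natCast (n:ℝ) k]
            exact Real.rpow_le_rpow_of_exponent_le h1 (Nat.le_ceil _)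
          have heq : ε⁻¹ ^ 2 * ((n:ℝ) ^ k * (1/2 : ℝ) ^ n)
              = (n:ℝ) ^ (k:ℕ) / (ε ^ 2 * 2 ^ n) := by
            field_simp
            rw [← mul_pow]; norm_num
          rw [hg, heq]
          exact div_le_div_of_nonneg_right hle (by positivity) |>.trans_eq rfl
      have hterm : ∀ n, P (B n) ≤ ENNReal.ofReal (g n) := by
        intro n
        simp only [hB]
        split_ifs with hn
        · have hNpos : (0:ℝ) < (n:ℝ) := by
            have : (0:ℕ) < n := by omega
            exact_mod_cast this
          have hQ : (0:ℝ) < (n:ℝ) ^ cstar := Real.rpow_pos_of_pos hNpos _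
          have hc : (0:ℝ) < ε * 2 ^ n / (n:ℝ) ^ (2 * cstar) := by
            apply div_pos (by positivity) (Real.rpow_pos_of_pos hNpos _)
          have hS2 : MemLp (S n) 2 P := by
            rw [hSdef]; exact memLp_finset_sum' _ (fun x _ => hYmemℒp n x)
          calc P {ω | ε * 2 ^ n / (n:ℝ) ^ (2 * cstar) ≤ |S n ω - ∫ a, S n a ∂P|}
              ≤ ENNReal.ofReal (variance (S n) P / (ε * 2 ^ n / (n:ℝ) ^ (2 * cstar)) ^ 2) :=
                meas_ge_le_variance_div_sq hS2 hc
            _ ≤ ENNReal.ofReal (g n) := by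
                apply ENNReal.ofReal_le_ofReal
                have h44 : ((n:ℝ) ^ (2 * cstar)) ^ 2 = (n:ℝ) ^ (4 * cstar) := by
                  rw [← Real.rpow_natCast ((n:ℝ) ^ (2 * cstar)) 2, ← Real.rpow_mul hNpos.le]
                  norm_num
                  ring_nf
                have h34 : (n:ℝ) ^ (3 * cstar) * (n:ℝ) ^ cstar = (n:ℝ) ^ (4 * cstar) := by
                  rw [← Real.rpow_add hNpos]; ring_nf
                have hkey : (2 ^ n * ((n:ℝ) ^ cstar)⁻¹)
                    / (ε * 2 ^ n / (n:ℝ) ^ (2 * cstar)) ^ 2 = g n := by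
                  rw [div_pow, mul_pow, h44, hg]
                  field_simp
                  rw [← h34]; ring
                calc variance (S n) P / (ε * 2 ^ n / (n:ℝ) ^ (2 * cstar)) ^ 2
                    ≤ (2 ^ n * ((n:ℝ) ^ cstar)⁻¹)
                        / (ε * 2 ^ n / (n:ℝ) ^ (2 * cstar)) ^ 2 :=
                      by gcongr ?_ / _; exact hvar n hn
                  _ = g n := hkey
        · simp
      have hlttop : (∑' n, P (B n)) < ⊤ :=
        calc (∑' n, P (B n)) ≤ ∑' n, ENNReal.ofReal (g n) := ENNReal.tsum_le_tsum hterm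
          _ = ENNReal.ofReal (∑' n, g n) := (ENNReal.ofReal_tsum_of_nonneg hgnonneg hgsum).symm
          _ < ⊤ := ENNReal.ofReal_lt_top
      exact hlttop.ne
    filter_upwards [ae_eventually_notMem hsum] with ω hω
    filter_upwards [hω] with n hn h2
    change ω ∉ (if 2 ≤ n then {ω | ε * 2 ^ n / (n:ℝ) ^ (2 * cstar) ≤ |S n ω - ∫ a, S n a ∂P|} else ∅) at hn
    rw [if_pos h2] at hn
    simp only [Set.mem_setOf_eq, not_le] at hn
    rw [hmean n h2] at hn
    exact hn
  have hAE : ∀ᵐ ω ∂P, ∀ k : ℕ, ∀ᶠ n in atTop, 2 ≤ n →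
      |S n ω - 2 ^ n * ((n:ℝ) ^ cstar)⁻¹| < (1/((k:ℝ)+1)) * 2 ^ n / (n:ℝ) ^ (2 * cstar) :=
    ae_all_iff.2 fun k => main _ (by positivity)
  filter_upwards [hAE] with ω hω
  rw [Metric.tendsto_atTop]
  intro ε hε
  obtain ⟨k, hk⟩ := exists_nat_one_div_lt hε
  obtain ⟨N, hN⟩ := eventually_atTop.mp ((hω k).and (eventually_ge_atTop 2))
  refine ⟨N, fun n hn => ?_⟩
  obtain ⟨hlt0, h2⟩ := hN n hn
  have hlt := hlt0 h2
  have hNpos : (0:ℝ) < (n:ℝ) := by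
    have : (0:ℕ) < n := by omega
    exact_mod_cast this
  have hQ : (0:ℝ) < (n:ℝ) ^ cstar := Real.rpow_pos_of_pos hNpos _
  have h2c : (0:ℝ) < (n:ℝ) ^ (2 * cstar) := Real.rpow_pos_of_pos hNpos _
  rw [Real.dist_eq, sub_zero, hncard n ω]
  have hadd : (n:ℝ) ^ (2 * cstar) = (n:ℝ) ^ cstar * (n:ℝ) ^ cstar := by
    rw [← Real.rpow_add hNpos]; ring_nf
  have hexpr : (n:ℝ) ^ cstar * ((n:ℝ) ^ cstar * ((2:ℝ) ^ n)⁻¹ * S n ω - 1)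
      = (n:ℝ) ^ (2 * cstar) * ((2:ℝ) ^ n)⁻¹ * (S n ω - 2 ^ n * ((n:ℝ) ^ cstar)⁻¹) := by
    rw [hadd]
    have h2n : ((2:ℝ) ^ n) ≠ 0 := by positivity
    field_simp
  rw [hexpr, abs_mul, abs_of_nonneg (by positivity)]
  have hfin : (n:ℝ) ^ (2 * cstar) * ((2:ℝ) ^ n)⁻¹ *
      ((1/((k:ℝ)+1)) * 2 ^ n / (n:ℝ) ^ (2 * cstar)) = 1/((k:ℝ)+1) := by
    field_simp
  calc (n:ℝ) ^ (2 * cstar) * ((2:ℝ) ^ n)⁻¹ * |S n ω - 2 ^ n * ((n:ℝ) ^ cstar)⁻¹|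
      < (n:ℝ) ^ (2 * cstar) * ((2:ℝ) ^ n)⁻¹ *
        ((1/((k:ℝ)+1)) * 2 ^ n / (n:ℝ) ^ (2 * cstar)) := by
        apply mul_lt_mul_of_pos_left hlt (by positivity)
    _ = 1/((k:ℝ)+1) := hfin
    _ < ε := hk
end
end

section
/- For every η > 0, ℙ-almost surely, for all but finitely many n, |T_n \ T_n°| ≤ (1+η)·n^4·2^{n(1−2ε_n)}. -/
open MeasureTheory ProbabilityTheory Filter Real
open scoped ENNReal

noncomputable section

/-- The `n`-dimensional hypercube graph on `{-1,1}^n ≃ (Fin n → Bool)`: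
two vertices are adjacent iff they differ in exactly one coordinate. -/
def hypercube (n : ℕ) : SimpleGraph (Fin n → Bool) where
  Adj x y := hammingDist x y = 1
  symm := ⟨fun x y h => (hammingDist_comm y x).trans h⟩
  loopless := ⟨fun x h => by simp [hammingDist_self] at h⟩

instance (n : ℕ) : DecidableRel (hypercube n).Adj :=
  fun x y => inferInstanceAs (Decidable (hammingDist x y = 1))

namespace TnAux

variable {n : ℕ}

def flip1 (y : Fin n → Bool) (j : Fin n) : Fin n → Bool := Function.update y j (!(y j))

lemma exists_diff {z w : Fin n → Bool} (h : hammingDist z w = 1) : ∃ j, z j ≠ w j := by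
  by_contra hc
  push_neg at hc
  have : z = w := funext hc
  simp [this, hammingDist_self] at h

lemma eq_flip1_of_hamming_one {z w : Fin n → Bool} {j : Fin n}
    (h : hammingDist z w = 1) (hj : z j ≠ w j) : w = flip1 z j := by
  have hfil : Finset.filter (fun i => z i ≠ w i) Finset.univ = {j} := by
    apply Finset.eq_singleton_iff_unique_mem.mpr
    constructor
    · simpa using hj
    · intro a ha
      by_contra hne
      have hcard : 2 ≤ (Finset.filter (fun i => z i ≠ w i) Finset.univ).card := by
        have : ({a, j} : Finset (Fin n)) ⊆ Finset.filter (fun i => z i ≠ w i) Finset.univ := by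
          intro b hb
          simp only [Finset.mem_insert, Finset.mem_singleton] at hb
          rcases hb with rfl | rfl
          · exact ha
          · simpa using hj
        calc 2 = ({a, j} : Finset (Fin n)).card := (Finset.card_pair hne).symm
        _ ≤ _ := Finset.card_le_card this
      rw [hammingDist] at h
      omega
  funext i
  by_cases hij : i = j
  · subst hij
    have := hj
    simp only [flip1, Function.update_self]
    cases hzi : z i <;> cases hwi : w i <;> simp_all
  · have : i ∉ ({i | z i ≠ w i} : Finset (Fin n)) := by
      rw [hfil]; simpa using hij
    simp only [Finset.mem_filter] at this
    have hzw : z i = w i := by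
      by_contra hc
      exact this (by simpa using hc)
    simp [flip1, Function.update_apply, hij, ← hzw]

def vtx {k : ℕ} (x : Fin n → Bool) (d : Fin k → Fin n) : ℕ → (Fin n → Bool)
  | 0 => x
  | i+1 => if h : i < k then flip1 (vtx x d i) (d ⟨i, h⟩) else vtx x d i

@[simp] lemma vtx_zero {k : ℕ} (x : Fin n → Bool) (d : Fin k → Fin n) : vtx x d 0 = x := rfl

lemma vtx_succ_of_lt {k : ℕ} (x : Fin n → Bool) (d : Fin k → Fin n) {i : ℕ} (h : i < k) :
    vtx x d (i+1) = flip1 (vtx x d i) (d ⟨i, h⟩) := by simp [vtx, h]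

end TnAux

section WalkLemmas

variable {V : Type*} {G : SimpleGraph V}

lemma getVert_mem_support' {u v : V} (p : G.Walk u v) (i : ℕ) : p.getVert i ∈ p.support := by
  induction p generalizing i with
  | nil => simp [SimpleGraph.Walk.getVert]
  | cons h q ih =>
    cases i with
    | zero => simp
    | succ m =>
      rw [SimpleGraph.Walk.getVert_cons_succ]
      simp [ih m]

lemma isPath_getVert_inj {u v : V} {p : G.Walk u v} (hp : p.IsPath) :
    ∀ i j : ℕ, i ≤ p.length → j ≤ p.length → p.getVert i = p.getVert j → i = j := by
  induction p with
  | nil => intro i j hi hj _; simp at hi hj; omega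
  | cons h q ih =>
    rw [SimpleGraph.Walk.cons_isPath_iff] at hp
    intro i j hi hj heq
    match i, j with
    | 0, 0 => rfl
    | 0, (m+1) =>
      exfalso
      rw [SimpleGraph.Walk.getVert_zero, SimpleGraph.Walk.getVert_cons_succ] at heq
      exact hp.2 (heq ▸ getVert_mem_support' q m)
    | (m+1), 0 =>
      exfalso
      rw [SimpleGraph.Walk.getVert_zero, SimpleGraph.Walk.getVert_cons_succ] at heq
      exact hp.2 (heq ▸ getVert_mem_support' q m)
    | (m+1), (l+1) =>
      rw [SimpleGraph.Walk.getVert_cons_succ, SimpleGraph.Walk.getVert_cons_succ] at heq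
      simp only [SimpleGraph.Walk.length_cons] at hi hj
      have := ih hp.1 m l (by omega) (by omega) heq
      omega

end WalkLemmas

namespace TnAux

open Classical in
def tupleSet (n k : ℕ) : Finset ((Fin n → Bool) × (Fin k → Fin n)) :=
  Finset.univ.filter fun p =>
    ∀ i ∈ Finset.range (k+1), ∀ j ∈ Finset.range (k+1), vtx p.1 p.2 i = vtx p.1 p.2 j → i = j

def tupleEvent (n k : ℕ) (a b : ℝ) (τ : (Fin n → Bool) → ℝ)
    (p : (Fin n → Bool) × (Fin k → Fin n)) : Prop :=
  ∀ i ∈ Finset.range (k+1), (if i = 0 ∨ i = k then a else b) ≤ τ (vtx p.1 p.2 i)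

open Classical in
def Ncount (n : ℕ) (a b : ℝ) (τ : (Fin n → Bool) → ℝ) : ℕ :=
  ∑ k ∈ Finset.Icc 1 (2^n), ((tupleSet n k).filter (tupleEvent n k a b τ)).card

open Classical in
lemma ncard_bad_le_Ncount (n : ℕ) (a b : ℝ) (τ : (Fin n → Bool) → ℝ)
    (T Vs : Set (Fin n → Bool))
    (hT : T = {x | a ≤ τ x}) (hVs : Vs = {x | b ≤ τ x}) :
    Set.ncard (T \ {x | x ∈ T ∧ ∀ y ∈ T,
        (∃ hx : x ∈ Vs, ∃ hy : y ∈ Vs,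
          (SimpleGraph.induce Vs (hypercube n)).Reachable ⟨y, hy⟩ ⟨x, hx⟩) → y = x})
      ≤ Ncount n a b τ := by
  classical
  -- extraction: each bad x yields a tuple
  have extract : ∀ x ∈ (T \ {x | x ∈ T ∧ ∀ y ∈ T,
        (∃ hx : x ∈ Vs, ∃ hy : y ∈ Vs,
          (SimpleGraph.induce Vs (hypercube n)).Reachable ⟨y, hy⟩ ⟨x, hx⟩) → y = x}),
      ∃ k : ℕ, k ∈ Finset.Icc 1 (2^n) ∧ ∃ d : Fin k → Fin n,
        ((x, d) ∈ tupleSet n k ∧ tupleEvent n k a b τ (x, d)) := by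
    intro x hx
    obtain ⟨hxT, hxbad⟩ := hx
    simp only [Set.mem_setOf_eq, not_and, not_forall] at hxbad
    obtain ⟨y, hyT, hrch, hyx⟩ := hxbad hxT
    obtain ⟨hxV, hyV, hreach⟩ := hrch
    obtain ⟨w⟩ := hreach.symm
    let q : (SimpleGraph.induce Vs (hypercube n)).Walk ⟨x, hxV⟩ ⟨y, hyV⟩ := w.toPath
    have hq : q.IsPath := w.toPath.2
    set k := q.length with hk
    -- vertex sequence in the ambient cube
    let gv : ℕ → (Fin n → Bool) := fun i => (q.getVert i).1
    have hgv0 : gv 0 = x := by simp [gv]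
    have hgvk : gv k = y := by simp [gv, hk, SimpleGraph.Walk.getVert_length]
    have hadj : ∀ i : ℕ, i < k → hammingDist (gv i) (gv (i+1)) = 1 := by
      intro i hi
      have := q.adj_getVert_succ hi
      exact this
    -- the flip directions
    have hdiff : ∀ i : ℕ, i < k → ∃ j, gv i j ≠ gv (i+1) j := fun i hi => exists_diff (hadj i hi)
    let d : Fin k → Fin n := fun i => Classical.choose (hdiff i i.2)
    have hvtx : ∀ i : ℕ, i ≤ k → vtx x d i = gv i := by
      intro i hi
      induction i with
      | zero => simp [hgv0]
      | succ m ih =>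
        have hm : m < k := by omega
        rw [vtx_succ_of_lt x d hm, ih (by omega)]
        exact (eq_flip1_of_hamming_one (hadj m hm) (Classical.choose_spec (hdiff m hm))).symm
    have hinj : ∀ i ≤ k, ∀ j ≤ k, gv i = gv j → i = j := by
      intro i hi j hj hij
      exact isPath_getVert_inj hq i j hi hj (Subtype.val_injective hij)
    have hk1 : 1 ≤ k := by
      by_contra hc
      have hk0 : k = 0 := by omega
      apply hyx
      rw [← hgvk, hk0, hgv0]
    have hk2 : k ≤ 2^n := by
      have : Function.Injective (fun i : Fin (k+1) => gv i) := by
        intro i j hij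
        exact Fin.ext (hinj i (by omega) j (by omega) hij)
      have hcard := Fintype.card_le_of_injective _ this
      simp only [Fintype.card_fin] at hcard
      have : Fintype.card (Fin n → Bool) = 2^n := by
        simp [Fintype.card_fun]
      omega
    refine ⟨k, Finset.mem_Icc.mpr ⟨hk1, hk2⟩, d, ?_, ?_⟩
    · simp only [tupleSet, Finset.mem_filter, Finset.mem_univ, true_and]
      intro i hi j hj hij
      simp only [Finset.mem_range] at hi hj
      rw [hvtx i (by omega), hvtx j (by omega)] at hij
      exact hinj i (by omega) j (by omega) hij
    · intro i hi
      simp only [Finset.mem_range] at hi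
      rw [hvtx i (by omega)]
      by_cases h0 : i = 0 ∨ i = k
      · simp only [h0, if_true]
        rcases h0 with rfl | rfl
        · rw [hgv0]; rw [hT] at hxT; exact hxT
        · rw [hgvk]; rw [hT] at hyT; exact hyT
      · simp only [h0, if_false]
        have : gv i ∈ Vs := (q.getVert i).2
        rw [hVs] at this
        exact this
  -- build the injection into the sigma finset
  set Bad := (T \ {x | x ∈ T ∧ ∀ y ∈ T,
        (∃ hx : x ∈ Vs, ∃ hy : y ∈ Vs,
          (SimpleGraph.induce Vs (hypercube n)).Reachable ⟨y, hy⟩ ⟨x, hx⟩) → y = x}) with hBad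
  set Tgt : Finset (Σ k : ℕ, (Fin n → Bool) × (Fin k → Fin n)) :=
    (Finset.Icc 1 (2^n)).sigma (fun k => (tupleSet n k).filter (tupleEvent n k a b τ)) with hTgt
  have key : Set.ncard Bad ≤ Tgt.card := by
    have f : ∀ x : Bad, {z : Σ k : ℕ, (Fin n → Bool) × (Fin k → Fin n) // z ∈ Tgt ∧ z.2.1 = ↑x} := by
      rintro ⟨x, hx⟩
      obtain ⟨hk, hd⟩ := Classical.choose_spec (extract x hx)
      obtain ⟨hmem, hev⟩ := Classical.choose_spec hd
      exact ⟨⟨Classical.choose (extract x hx), (x, Classical.choose hd)⟩,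
        Finset.mem_sigma.mpr ⟨hk, Finset.mem_filter.mpr ⟨hmem, hev⟩⟩, rfl⟩
    have finj : Function.Injective (fun x : Bad => ((f x) : Σ k : ℕ, (Fin n → Bool) × (Fin k → Fin n))) := by
      intro x₁ x₂ h
      have h1 : ((f x₁) : Σ k : ℕ, (Fin n → Bool) × (Fin k → Fin n)).2.1 = ↑x₁ := (f x₁).2.2
      have h2 : ((f x₂) : Σ k : ℕ, (Fin n → Bool) × (Fin k → Fin n)).2.1 = ↑x₂ := (f x₂).2.2
      simp only at h
      rw [h] at h1
      ext
      rw [← h1, h2]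
    have fmem : ∀ x : Bad, ((f x) : Σ k : ℕ, (Fin n → Bool) × (Fin k → Fin n)) ∈ Tgt :=
      fun x => (f x).2.1
    have hcard1 : Set.ncard Bad = Nat.card Bad := Nat.card_coe_set_eq Bad ▸ rfl
    have : Nat.card Bad ≤ Nat.card {z // z ∈ Tgt} := by
      apply Nat.card_le_card_of_injective
        (fun x : Bad => (⟨((f x) : Σ k : ℕ, (Fin n → Bool) × (Fin k → Fin n)), fmem x⟩ : {z // z ∈ Tgt}))
      intro x₁ x₂ h
      exact finj (congrArg Subtype.val h)
    rw [hcard1]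
    calc Nat.card Bad ≤ Nat.card {z // z ∈ Tgt} := this
    _ = Tgt.card := by rw [Nat.card_eq_fintype_card, Fintype.card_coe]
  have hcard : Tgt.card = Ncount n a b τ := by
    rw [hTgt, Finset.card_sigma, Ncount]
  omega

end TnAux

namespace TnAux

variable {Ω : Type*} [MeasurableSpace Ω]

lemma evtSet_real_measurable (β c : ℝ) : MeasurableSet {t : ℝ | c ≤ Real.exp (-β * t)} := by
  have hf : Measurable fun t : ℝ => Real.exp (-β * t) :=
    (Real.continuous_exp.comp (continuous_const.mul continuous_id)).measurable
  exact hf measurableSet_Ici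

lemma evt_measurable (P : Measure Ω) (H : (n : ℕ) → (Fin n → Bool) → Ω → ℝ)
    (hmeas : ∀ n x, Measurable (H n x)) (β : ℝ) (n : ℕ) (x : Fin n → Bool) (c : ℝ) :
    MeasurableSet {ω | c ≤ Real.exp (-β * H n x ω)} :=
  hmeas n x (evtSet_real_measurable β c)

lemma prob_iInter (P : Measure Ω) (H : (n : ℕ) → (Fin n → Bool) → Ω → ℝ)
    (hmeas : ∀ n x, Measurable (H n x))
    (hindep : iIndepFun
      (fun p : (Σ n : ℕ, (Fin n → Bool)) => H p.1 p.2) P)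
    (β : ℝ) (n k : ℕ) (v : Fin (k+1) → (Fin n → Bool)) (hv : Function.Injective v)
    (c : Fin (k+1) → ℝ) :
    P (⋂ i, {ω | c i ≤ Real.exp (-β * H n (v i) ω)})
      = ∏ i, P {ω | c i ≤ Real.exp (-β * H n (v i) ω)} := by
  classical
  set g : Fin (k+1) → (Σ m : ℕ, (Fin m → Bool)) := fun i => ⟨n, v i⟩ with hg
  have hginj : Function.Injective g := by
    intro i j hij
    rw [hg] at hij
    simp only [Sigma.mk.inj_iff, heq_eq_eq, true_and] at hij
    exact hv hij
  set S : (Σ m : ℕ, (Fin m → Bool)) → Set ℝ := fun p =>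
    if h : ∃ i, g i = p then {t | c (Classical.choose h) ≤ Real.exp (-β * t)} else Set.univ
    with hS
  set F : (Σ m : ℕ, (Fin m → Bool)) → Set Ω := fun p => (H p.1 p.2) ⁻¹' (S p) with hF
  have hSmeas : ∀ p, MeasurableSet (S p) := by
    intro p
    rw [hS]
    by_cases h : ∃ i, g i = p
    · simp only [dif_pos h]
      exact evtSet_real_measurable β _
    · simp only [dif_neg h]
      exact MeasurableSet.univ
  have hFg : ∀ i, F (g i) = {ω | c i ≤ Real.exp (-β * H n (v i) ω)} := by
    intro i
    have h : ∃ j, g j = g i := ⟨i, rfl⟩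
    have hch : Classical.choose h = i := hginj (Classical.choose_spec h)
    rw [hF]
    simp only [hS, dif_pos h, hch]
    rfl
  have hmb := hindep.meas_biInter (S := Finset.image g Finset.univ) (s := F)
    (fun p _ => ⟨S p, hSmeas p, rfl⟩)
  have hIeq : (⋂ p ∈ Finset.image g Finset.univ, F p) = ⋂ i, F (g i) := by
    ext ω
    simp [Finset.mem_image]
  have hPeq : (∏ p ∈ Finset.image g Finset.univ, P (F p)) = ∏ i, P (F (g i)) :=
    Finset.prod_image (fun i _ j _ h => hginj h)
  rw [hIeq, hPeq] at hmb
  simp only [hFg] at hmb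
  exact hmb

end TnAux

namespace TnAux

variable {Ω : Type*} [MeasurableSpace Ω]

open Classical in
lemma card_filter_endpoints (k : ℕ) (hk : 1 ≤ k) :
    (Finset.univ.filter (fun i : Fin (k+1) => (i : ℕ) = 0 ∨ (i : ℕ) = k)).card = 2 := by
  have : (Finset.univ.filter (fun i : Fin (k+1) => (i : ℕ) = 0 ∨ (i : ℕ) = k))
      = {(⟨0, by omega⟩ : Fin (k+1)), ⟨k, by omega⟩} := by
    ext i
    simp only [Finset.mem_filter, Finset.mem_univ, true_and, Finset.mem_insert,
      Finset.mem_singleton]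
    constructor
    · rintro (h | h) <;> [left; right] <;> exact Fin.ext h
    · rintro (rfl | rfl) <;> [left; right] <;> rfl
  rw [this, Finset.card_insert_of_notMem (by simp [Fin.ext_iff]; omega), Finset.card_singleton]

open Classical in
lemma tupleEvent_prob (P : Measure Ω) [IsProbabilityMeasure P]
    (H : (n : ℕ) → (Fin n → Bool) → Ω → ℝ)
    (hmeas : ∀ n x, Measurable (H n x))
    (hindep : iIndepFun
      (fun p : (Σ n : ℕ, (Fin n → Bool)) => H p.1 p.2) P)
    (β a b pa pb : ℝ) (n k : ℕ) (hk : 1 ≤ k)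
    (hpa : ∀ z : Fin n → Bool, P {ω | a ≤ Real.exp (-β * H n z ω)} = ENNReal.ofReal pa)
    (hpb : ∀ z : Fin n → Bool, P {ω | b ≤ Real.exp (-β * H n z ω)} = ENNReal.ofReal pb)
    (p : (Fin n → Bool) × (Fin k → Fin n)) (hp : p ∈ tupleSet n k) :
    P {ω | tupleEvent n k a b (fun z => Real.exp (-β * H n z ω)) p}
      = ENNReal.ofReal pa ^ 2 * ENNReal.ofReal pb ^ (k-1) := by
  classical
  set v : Fin (k+1) → (Fin n → Bool) := fun i => vtx p.1 p.2 (i : ℕ) with hv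
  have hvinj : Function.Injective v := by
    intro i j hij
    simp only [tupleSet, Finset.mem_filter] at hp
    exact Fin.ext (hp.2 i (Finset.mem_range.mpr i.2) j (Finset.mem_range.mpr j.2) hij)
  set c : Fin (k+1) → ℝ := fun i => if (i : ℕ) = 0 ∨ (i : ℕ) = k then a else b with hc
  have hset : {ω | tupleEvent n k a b (fun z => Real.exp (-β * H n z ω)) p}
      = ⋂ i, {ω | c i ≤ Real.exp (-β * H n (v i) ω)} := by
    ext ω
    simp only [Set.mem_setOf_eq, Set.mem_iInter, tupleEvent]
    constructor
    · intro h i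
      exact h (i : ℕ) (Finset.mem_range.mpr i.2)
    · intro h i hi
      have := h ⟨i, Finset.mem_range.mp hi⟩
      exact this
  rw [hset, prob_iInter P H hmeas hindep β n k v hvinj c]
  have hfac : ∀ i : Fin (k+1), P {ω | c i ≤ Real.exp (-β * H n (v i) ω)}
      = if (i : ℕ) = 0 ∨ (i : ℕ) = k then ENNReal.ofReal pa else ENNReal.ofReal pb := by
    intro i
    by_cases h : (i : ℕ) = 0 ∨ (i : ℕ) = k
    · simp only [hc, h, if_true]
      exact hpa (v i)
    · simp only [hc, h, if_false]
      exact hpb (v i)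
  calc (∏ i, P {ω | c i ≤ Real.exp (-β * H n (v i) ω)})
      = ∏ i : Fin (k+1), (if (i : ℕ) = 0 ∨ (i : ℕ) = k
          then ENNReal.ofReal pa else ENNReal.ofReal pb) := Finset.prod_congr rfl (fun i _ => hfac i)
    _ = ENNReal.ofReal pa ^ 2 * ENNReal.ofReal pb ^ (k-1) := by
        rw [Finset.prod_ite, Finset.prod_const, Finset.prod_const, card_filter_endpoints k hk]
        congr 1
        have h1 := Finset.card_filter_add_card_filter_not
          (s := (Finset.univ : Finset (Fin (k+1))))
          (p := fun i : Fin (k+1) => (i : ℕ) = 0 ∨ (i : ℕ) = k)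
        rw [card_filter_endpoints k hk] at h1
        simp only [Finset.card_univ, Fintype.card_fin] at h1
        congr 1
        omega

end TnAux

namespace TnAux

variable {Ω : Type*} [MeasurableSpace Ω]

open Classical in
lemma tupleEvent_measurable (H : (n : ℕ) → (Fin n → Bool) → Ω → ℝ)
    (hmeas : ∀ n x, Measurable (H n x)) (β a b : ℝ) (n k : ℕ)
    (p : (Fin n → Bool) × (Fin k → Fin n)) :
    MeasurableSet {ω | tupleEvent n k a b (fun z => Real.exp (-β * H n z ω)) p} := by
  have : {ω | tupleEvent n k a b (fun z => Real.exp (-β * H n z ω)) p}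
      = ⋂ i ∈ Finset.range (k+1),
        {ω | (if i = 0 ∨ i = k then a else b) ≤ Real.exp (-β * H n (vtx p.1 p.2 i) ω)} := by
    ext ω
    simp [tupleEvent]
  rw [this]
  exact MeasurableSet.biInter (Set.to_countable _)
    (fun i _ => hmeas n _ (evtSet_real_measurable β _))

open Classical in
lemma lintegral_card_le (P : Measure Ω) [IsProbabilityMeasure P]
    (H : (n : ℕ) → (Fin n → Bool) → Ω → ℝ)
    (hmeas : ∀ n x, Measurable (H n x))
    (hindep : iIndepFun
      (fun p : (Σ n : ℕ, (Fin n → Bool)) => H p.1 p.2) P)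
    (β a b pa pb : ℝ) (n k : ℕ) (hk : 1 ≤ k)
    (hpa : ∀ z : Fin n → Bool, P {ω | a ≤ Real.exp (-β * H n z ω)} = ENNReal.ofReal pa)
    (hpb : ∀ z : Fin n → Bool, P {ω | b ≤ Real.exp (-β * H n z ω)} = ENNReal.ofReal pb) :
    ∫⁻ ω, (((tupleSet n k).filter
        (tupleEvent n k a b (fun z => Real.exp (-β * H n z ω)))).card : ℝ≥0∞) ∂P
      ≤ (2^n * n^k : ℕ) * (ENNReal.ofReal pa ^ 2 * ENNReal.ofReal pb ^ (k-1)) := by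
  classical
  have hrw : ∀ ω, (((tupleSet n k).filter
        (tupleEvent n k a b (fun z => Real.exp (-β * H n z ω)))).card : ℝ≥0∞)
      = ∑ p ∈ tupleSet n k,
          Set.indicator {ω' | tupleEvent n k a b (fun z => Real.exp (-β * H n z ω')) p}
            (fun _ => (1 : ℝ≥0∞)) ω := by
    intro ω
    rw [Finset.card_filter, Nat.cast_sum]
    apply Finset.sum_congr rfl
    intro p _
    by_cases h : tupleEvent n k a b (fun z => Real.exp (-β * H n z ω)) p
    · rw [if_pos h, Set.indicator_of_mem
        (show ω ∈ {ω' | tupleEvent n k a b (fun z => Real.exp (-β * H n z ω')) p} from h)]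
      norm_num
    · rw [if_neg h, Set.indicator_of_notMem
        (show ω ∉ {ω' | tupleEvent n k a b (fun z => Real.exp (-β * H n z ω')) p} from h)]
      norm_num
  calc ∫⁻ ω, (((tupleSet n k).filter
        (tupleEvent n k a b (fun z => Real.exp (-β * H n z ω)))).card : ℝ≥0∞) ∂P
      = ∑ p ∈ tupleSet n k, ∫⁻ ω,
          Set.indicator {ω' | tupleEvent n k a b (fun z => Real.exp (-β * H n z ω')) p}
            (fun _ => (1 : ℝ≥0∞)) ω ∂P := by
        rw [← lintegral_finset_sum]
        · simp only [hrw]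
        · intro p _
          exact (measurable_const.indicator (tupleEvent_measurable H hmeas β a b n k p))
    _ = ∑ p ∈ tupleSet n k,
          P {ω' | tupleEvent n k a b (fun z => Real.exp (-β * H n z ω')) p} := by
        apply Finset.sum_congr rfl
        intro p _
        rw [lintegral_indicator_const (tupleEvent_measurable H hmeas β a b n k p), one_mul]
    _ = ∑ p ∈ tupleSet n k, (ENNReal.ofReal pa ^ 2 * ENNReal.ofReal pb ^ (k-1)) := by
        apply Finset.sum_congr rfl
        intro p hp
        exact tupleEvent_prob P H hmeas hindep β a b pa pb n k hk hpa hpb p hp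
    _ = (tupleSet n k).card * (ENNReal.ofReal pa ^ 2 * ENNReal.ofReal pb ^ (k-1)) := by
        rw [Finset.sum_const, nsmul_eq_mul]
    _ ≤ (2^n * n^k : ℕ) * (ENNReal.ofReal pa ^ 2 * ENNReal.ofReal pb ^ (k-1)) := by
        apply mul_le_mul_left
        have hle : (tupleSet n k).card ≤ 2^n * n^k := by
          have h1 : (tupleSet n k).card ≤ (Finset.univ : Finset ((Fin n → Bool) × (Fin k → Fin n))).card :=
            Finset.card_le_univ _
          have h2 : (Finset.univ : Finset ((Fin n → Bool) × (Fin k → Fin n))).card = 2^n * n^k := by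
            rw [Finset.card_univ, Fintype.card_prod, Fintype.card_fun, Fintype.card_fun]
            simp
          omega
        exact_mod_cast Nat.cast_le.mpr hle

end TnAux

namespace TnAux

lemma real_sum_bound (n : ℕ) (hn : 2 ≤ n) (cstar e η : ℝ) (hcs : 2 ≤ cstar) (hη : 0 ≤ η) :
    ∑ k ∈ Finset.Icc 1 (2^n), ((2^n * n^k : ℕ) : ℝ) *
        ((((2:ℝ) ^ (e * (n:ℝ)))⁻¹)^2 * (((n:ℝ) ^ cstar)⁻¹)^(k-1))
      ≤ (2 / (n:ℝ)^3) * ((1 + η) * (n:ℝ)^4 * (2:ℝ) ^ ((n:ℝ) * (1 - 2*e))) := by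
  have hn0 : (0:ℝ) < n := by positivity
  have hn1 : (1:ℝ) ≤ (n:ℝ) := by exact_mod_cast Nat.one_le_of_lt hn
  have hn2 : (2:ℝ) ≤ (n:ℝ) := by exact_mod_cast hn
  set X : ℝ := (2:ℝ) ^ ((n:ℝ) * (1 - 2*e)) with hX
  have hXpos : 0 < X := Real.rpow_pos_of_pos (by norm_num) _
  set q : ℝ := (n:ℝ) * ((n:ℝ) ^ cstar)⁻¹ with hq
  have hqpos : 0 ≤ q := by positivity
  have hq12 : q ≤ 1/2 := by
    have h1 : q = ((n:ℝ) ^ (cstar - 1))⁻¹ := by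
      rw [hq, Real.rpow_sub hn0, Real.rpow_one]
      field_simp
    rw [h1]
    have h2 : (2:ℝ) ≤ (n:ℝ) ^ (cstar - 1) := by
      calc (2:ℝ) ≤ (n:ℝ) := hn2
      _ = (n:ℝ) ^ (1:ℝ) := (Real.rpow_one _).symm
      _ ≤ (n:ℝ) ^ (cstar - 1) := Real.rpow_le_rpow_of_exponent_le hn1 (by linarith)
    rw [inv_le_comm₀ (by linarith) (by norm_num)]
    · linarith
  -- rewrite each term
  have hterm : ∀ k ∈ Finset.Icc 1 (2^n), ((2^n * n^k : ℕ) : ℝ) *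
      ((((2:ℝ) ^ (e * (n:ℝ)))⁻¹)^2 * (((n:ℝ) ^ cstar)⁻¹)^(k-1))
      = X * (n:ℝ) * q^(k-1) := by
    intro k hk
    obtain ⟨hk1, hk2⟩ := Finset.mem_Icc.mp hk
    have hcast : ((2^n * n^k : ℕ) : ℝ) = (2:ℝ)^n * (n:ℝ)^k := by push_cast; ring
    have hpa2 : (((2:ℝ) ^ (e * (n:ℝ)))⁻¹)^2 = (2:ℝ) ^ (-(2 * e * (n:ℝ))) := by
      rw [← Real.rpow_neg (by norm_num : (0:ℝ) ≤ 2)]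
      rw [← Real.rpow_natCast ((2:ℝ) ^ (-(e * (n:ℝ)))) 2, ← Real.rpow_mul (by norm_num)]
      ring_nf
    have h2n : (2:ℝ)^n = (2:ℝ) ^ ((n:ℕ):ℝ) := (Real.rpow_natCast 2 n).symm
    have hXeq : (2:ℝ)^n * (((2:ℝ) ^ (e * (n:ℝ)))⁻¹)^2 = X := by
      rw [hpa2, h2n, ← Real.rpow_add (by norm_num : (0:ℝ) < 2), hX]
      congr 1
      ring
    have hnk : (n:ℝ)^k = (n:ℝ) * (n:ℝ)^(k-1) := by
      conv_lhs => rw [show k = (k-1) + 1 by omega]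
      ring
    have hq' : (n:ℝ)^(k-1) * (((n:ℝ) ^ cstar)⁻¹)^(k-1) = q^(k-1) := by
      rw [hq, mul_pow]
    calc ((2^n * n^k : ℕ) : ℝ) * ((((2:ℝ) ^ (e * (n:ℝ)))⁻¹)^2 * (((n:ℝ) ^ cstar)⁻¹)^(k-1))
        = ((2:ℝ)^n * (((2:ℝ) ^ (e * (n:ℝ)))⁻¹)^2) *
            ((n:ℝ) * ((n:ℝ)^(k-1) * (((n:ℝ) ^ cstar)⁻¹)^(k-1))) := by
          rw [hcast, hnk]; ring
      _ = X * (n:ℝ) * q^(k-1) := by rw [hXeq, hq']; ring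
  rw [Finset.sum_congr rfl hterm]
  rw [← Finset.mul_sum]
  have hsum : ∑ k ∈ Finset.Icc 1 (2^n), q^(k-1) ≤ 2 := by
    have hIcc : Finset.Icc 1 (2^n) = Finset.Ico 1 (2^n + 1) := by
      rw [Finset.Ico_add_one_right_eq_Icc]
    rw [hIcc, Finset.sum_Ico_eq_sum_range]
    have h1 : ∀ j ∈ Finset.range (2^n + 1 - 1), q^(1 + j - 1) ≤ (1/2:ℝ)^j := by
      intro j _
      have : q^(1 + j - 1) = q^j := by congr 1; omega
      rw [this]
      exact pow_le_pow_left₀ hqpos hq12 j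
    calc ∑ j ∈ Finset.range (2^n + 1 - 1), q^(1 + j - 1)
        ≤ ∑ j ∈ Finset.range (2^n + 1 - 1), (1/2:ℝ)^j := Finset.sum_le_sum h1
      _ ≤ 2 := sum_geometric_two_le _
  calc X * (n:ℝ) * ∑ k ∈ Finset.Icc 1 (2^n), q^(k-1)
      ≤ X * (n:ℝ) * 2 := by
        apply mul_le_mul_of_nonneg_left hsum (by positivity)
    _ ≤ (2 / (n:ℝ)^3) * ((1 + η) * (n:ℝ)^4 * X) := by
        have heq : (2 / (n:ℝ)^3) * ((1 + η) * (n:ℝ)^4 * X) = (1+η) * (X * (n:ℝ) * 2) := by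
          field_simp
        rw [heq]
        nlinarith [mul_pos (mul_pos hXpos hn0) (by norm_num : (0:ℝ) < 2)]

end TnAux

namespace TnAux

variable {Ω : Type*} [MeasurableSpace Ω]

open Classical in
lemma measurable_cardfun (H : (n : ℕ) → (Fin n → Bool) → Ω → ℝ)
    (hmeas : ∀ n x, Measurable (H n x)) (β a b : ℝ) (n k : ℕ) :
    Measurable fun ω => (((tupleSet n k).filter
        (tupleEvent n k a b (fun z => Real.exp (-β * H n z ω)))).card : ℝ≥0∞) := by
  have hfun : (fun ω => (((tupleSet n k).filter
        (tupleEvent n k a b (fun z => Real.exp (-β * H n z ω)))).card : ℝ≥0∞))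
      = fun ω => ∑ p ∈ tupleSet n k,
          Set.indicator {ω' | tupleEvent n k a b (fun z => Real.exp (-β * H n z ω')) p}
            (fun _ => (1 : ℝ≥0∞)) ω := by
    funext ω
    rw [Finset.card_filter, Nat.cast_sum]
    apply Finset.sum_congr rfl
    intro p _
    by_cases h : tupleEvent n k a b (fun z => Real.exp (-β * H n z ω)) p
    · rw [if_pos h, Set.indicator_of_mem
        (show ω ∈ {ω' | tupleEvent n k a b (fun z => Real.exp (-β * H n z ω')) p} from h)]
      norm_num
    · rw [if_neg h, Set.indicator_of_notMem
        (show ω ∉ {ω' | tupleEvent n k a b (fun z => Real.exp (-β * H n z ω')) p} from h)]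
      norm_num
  rw [hfun]
  exact Finset.measurable_sum _
    (fun p _ => measurable_const.indicator (tupleEvent_measurable H hmeas β a b n k p))

open Classical in
lemma measurable_Ncountfun (H : (n : ℕ) → (Fin n → Bool) → Ω → ℝ)
    (hmeas : ∀ n x, Measurable (H n x)) (β a b : ℝ) (n : ℕ) :
    Measurable fun ω => (Ncount n a b (fun z => Real.exp (-β * H n z ω)) : ℝ≥0∞) := by
  have hfun : (fun ω => (Ncount n a b (fun z => Real.exp (-β * H n z ω)) : ℝ≥0∞))
      = fun ω => ∑ k ∈ Finset.Icc 1 (2^n), (((tupleSet n k).filter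
          (tupleEvent n k a b (fun z => Real.exp (-β * H n z ω)))).card : ℝ≥0∞) := by
    funext ω
    rw [Ncount, Nat.cast_sum]
  rw [hfun]
  exact Finset.measurable_sum _ (fun k _ => measurable_cardfun H hmeas β a b n k)

open Classical in
lemma measure_bad_le (P : Measure Ω) [IsProbabilityMeasure P]
    (H : (n : ℕ) → (Fin n → Bool) → Ω → ℝ)
    (hmeas : ∀ n x, Measurable (H n x))
    (hindep : iIndepFun
      (fun p : (Σ n : ℕ, (Fin n → Bool)) => H p.1 p.2) P)
    (β a b : ℝ) (n : ℕ) (hn : 2 ≤ n) (cstar e η : ℝ) (hcs : 2 ≤ cstar) (hη : 0 ≤ η)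
    (hpa : ∀ z : Fin n → Bool, P {ω | a ≤ Real.exp (-β * H n z ω)}
        = ENNReal.ofReal (((2:ℝ) ^ (e * (n:ℝ)))⁻¹))
    (hpb : ∀ z : Fin n → Bool, P {ω | b ≤ Real.exp (-β * H n z ω)}
        = ENNReal.ofReal (((n:ℝ) ^ cstar)⁻¹)) :
    P {ω | ENNReal.ofReal ((1 + η) * (n:ℝ)^4 * (2:ℝ) ^ ((n:ℝ) * (1 - 2*e)))
        ≤ (Ncount n a b (fun z => Real.exp (-β * H n z ω)) : ℝ≥0∞)}
      ≤ ENNReal.ofReal (2 / (n:ℝ)^3) := by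
  have hn0 : (0:ℝ) < n := by positivity
  set pa : ℝ := ((2:ℝ) ^ (e * (n:ℝ)))⁻¹ with hpaval
  set pb : ℝ := ((n:ℝ) ^ cstar)⁻¹ with hpbval
  have hpa0 : 0 ≤ pa := by positivity
  have hpb0 : 0 ≤ pb := by positivity
  set t : ℝ := (1 + η) * (n:ℝ)^4 * (2:ℝ) ^ ((n:ℝ) * (1 - 2*e)) with ht
  have ht0 : 0 < t := by
    have : (0:ℝ) < (2:ℝ) ^ ((n:ℝ) * (1 - 2*e)) := Real.rpow_pos_of_pos (by norm_num) _
    positivity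
  set S : ℝ := ∑ k ∈ Finset.Icc 1 (2^n), ((2^n * n^k : ℕ) : ℝ) * (pa^2 * pb^(k-1)) with hS
  -- bound the integral
  have hlint : ∫⁻ ω, (Ncount n a b (fun z => Real.exp (-β * H n z ω)) : ℝ≥0∞) ∂P
      ≤ ENNReal.ofReal S := by
    have h1 : ∀ ω, (Ncount n a b (fun z => Real.exp (-β * H n z ω)) : ℝ≥0∞)
        = ∑ k ∈ Finset.Icc 1 (2^n), (((tupleSet n k).filter
            (tupleEvent n k a b (fun z => Real.exp (-β * H n z ω)))).card : ℝ≥0∞) := by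
      intro ω; rw [Ncount, Nat.cast_sum]
    calc ∫⁻ ω, (Ncount n a b (fun z => Real.exp (-β * H n z ω)) : ℝ≥0∞) ∂P
        = ∑ k ∈ Finset.Icc 1 (2^n), ∫⁻ ω, (((tupleSet n k).filter
            (tupleEvent n k a b (fun z => Real.exp (-β * H n z ω)))).card : ℝ≥0∞) ∂P := by
          rw [← lintegral_finset_sum _ (fun k _ => measurable_cardfun H hmeas β a b n k)]
          simp only [h1]
      _ ≤ ∑ k ∈ Finset.Icc 1 (2^n),
            ENNReal.ofReal (((2^n * n^k : ℕ) : ℝ) * (pa^2 * pb^(k-1))) := by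
          apply Finset.sum_le_sum
          intro k hk
          have hk1 : 1 ≤ k := (Finset.mem_Icc.mp hk).1
          calc ∫⁻ ω, (((tupleSet n k).filter
              (tupleEvent n k a b (fun z => Real.exp (-β * H n z ω)))).card : ℝ≥0∞) ∂P
              ≤ (2^n * n^k : ℕ) * (ENNReal.ofReal pa ^ 2 * ENNReal.ofReal pb ^ (k-1)) :=
                lintegral_card_le P H hmeas hindep β a b pa pb n k hk1 hpa hpb
            _ = ENNReal.ofReal (((2^n * n^k : ℕ) : ℝ) * (pa^2 * pb^(k-1))) := by
                rw [← ENNReal.ofReal_pow hpa0, ← ENNReal.ofReal_pow hpb0,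
                  ← ENNReal.ofReal_mul (by positivity), ← ENNReal.ofReal_natCast,
                  ← ENNReal.ofReal_mul (by positivity)]
      _ = ENNReal.ofReal S := by
          rw [hS, ENNReal.ofReal_sum_of_nonneg (fun k _ => by positivity)]
  -- Markov
  have hmarkov := mul_meas_ge_le_lintegral₀
    (measurable_Ncountfun H hmeas β a b n).aemeasurable (μ := P) (ENNReal.ofReal t)
  have hchain : ENNReal.ofReal t * P {ω | ENNReal.ofReal t
      ≤ (Ncount n a b (fun z => Real.exp (-β * H n z ω)) : ℝ≥0∞)}
      ≤ ENNReal.ofReal (2 / (n:ℝ)^3) * ENNReal.ofReal t := by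
    calc ENNReal.ofReal t * P {ω | ENNReal.ofReal t
        ≤ (Ncount n a b (fun z => Real.exp (-β * H n z ω)) : ℝ≥0∞)}
        ≤ ∫⁻ ω, (Ncount n a b (fun z => Real.exp (-β * H n z ω)) : ℝ≥0∞) ∂P := hmarkov
      _ ≤ ENNReal.ofReal S := hlint
      _ ≤ ENNReal.ofReal ((2 / (n:ℝ)^3) * t) := by
          apply ENNReal.ofReal_le_ofReal
          rw [hS, ht, hpaval, hpbval]
          exact real_sum_bound n hn cstar e η hcs hη
      _ = ENNReal.ofReal (2 / (n:ℝ)^3) * ENNReal.ofReal t := by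
          rw [ENNReal.ofReal_mul (by positivity)]
  have htne : ENNReal.ofReal t ≠ 0 := by
    simp only [ne_eq, ENNReal.ofReal_eq_zero, not_le]
    exact ht0
  have httop : ENNReal.ofReal t ≠ ⊤ := ENNReal.ofReal_ne_top
  rw [mul_comm] at hchain
  exact (ENNReal.mul_le_mul_iff_left htne httop).mp hchain

end TnAux

open TnAux in
theorem Tn_minus_Tcirc_cardinality
    {Ω : Type*} [MeasurableSpace Ω] (P : Measure Ω) [IsProbabilityMeasure P]
    (H : (n : ℕ) → (Fin n → Bool) → Ω → ℝ)
    (hmeas : ∀ n x, Measurable (H n x))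
    (hgauss : ∀ n x, Measure.map (H n x) P = gaussianReal 0 n)
    (hindep : iIndepFun
      (fun p : (Σ n : ℕ, (Fin n → Bool)) => H p.1 p.2) P)
    (β : ℝ) (hβ : 0 < β)
    (cstar : ℝ) (hcstar : 1 + Real.log 4 < cstar)
    (rstar : ℕ → ℝ)
    (hrstar : ∀ n, 2 ≤ n → ∀ x : Fin n → Bool, 0 < rstar n ∧
      (n : ℝ) ^ cstar * (P {ω | rstar n ≤ Real.exp (-β * H n x ω)}).toReal = 1)
    (ε : ℝ) (hε0 : 0 < ε) (hε1 : ε < 1)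
    (r : ℕ → ℝ → ℝ)
    (hr : ∀ n, 1 ≤ n → ∀ ρ : ℝ, 0 < ρ → ∀ x : Fin n → Bool, 0 < r n ρ ∧
      (2 : ℝ) ^ (ρ * n) * (P {ω | r n ρ ≤ Real.exp (-β * H n x ω)}).toReal = 1)
    (δ : ℕ → ℝ) (hδpos : ∀ n, 0 < δ n) (hδ0 : Tendsto δ atTop (nhds 0)) :
    ∀ η : ℝ, 0 < η → ∀ᵐ ω ∂P, ∀ᶠ n : ℕ in atTop,
      ∀ T Vs : Set (Fin n → Bool),
        T = {x : Fin n → Bool | r n (ε - δ n) ≤ Real.exp (-β * H n x ω)} →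
        Vs = {x : Fin n → Bool | rstar n ≤ Real.exp (-β * H n x ω)} →
        (Set.ncard (T \ {x : Fin n → Bool | x ∈ T ∧ ∀ y ∈ T,
              (∃ hx : x ∈ Vs, ∃ hy : y ∈ Vs,
                (SimpleGraph.induce Vs (hypercube n)).Reachable ⟨y, hy⟩ ⟨x, hx⟩) →
              y = x}) : ℝ)
          ≤ (1 + η) * n ^ 4 * (2 : ℝ) ^ ((n : ℝ) * (1 - 2 * (ε - δ n))) := by
  intro η hη
  have hcs : 2 ≤ cstar := by
    have h4 : (1:ℝ) < Real.log 4 := by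
      rw [show (4:ℝ) = 2^(2:ℕ) by norm_num, Real.log_pow]
      push_cast
      nlinarith [Real.log_two_gt_d9]
    linarith
  obtain ⟨n₁, hn₁⟩ := eventually_atTop.mp (hδ0.eventually_lt_const hε0)
  set n₀ : ℕ := max 2 n₁ with hn₀def
  set Nf : (n : ℕ) → Ω → ℕ := fun n ω =>
    Ncount n (r n (ε - δ n)) (rstar n) (fun z => Real.exp (-β * H n z ω)) with hNf
  set tval : ℕ → ℝ := fun n =>
    (1 + η) * (n:ℝ)^4 * (2:ℝ) ^ ((n:ℝ) * (1 - 2*(ε - δ n))) with htval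
  set C : ℕ → Set Ω := fun n =>
    if n₀ ≤ n then {ω | ENNReal.ofReal (tval n) ≤ (Nf n ω : ℝ≥0∞)} else ∅ with hC
  have hbound : ∀ n, P (C n) ≤ ENNReal.ofReal (2 / (n:ℝ)^3) := by
    intro n
    by_cases h : n₀ ≤ n
    · have hn2 : 2 ≤ n := le_trans (le_max_left _ _) h
      have hne : 0 < ε - δ n := by
        have := hn₁ n (le_trans (le_max_right _ _) h)
        linarith
      have hpa : ∀ z : Fin n → Bool, P {ω | r n (ε - δ n) ≤ Real.exp (-β * H n z ω)}
          = ENNReal.ofReal (((2:ℝ) ^ ((ε - δ n) * (n:ℝ)))⁻¹) := by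
        intro z
        obtain ⟨hrpos, heq⟩ := hr n (by omega) (ε - δ n) hne z
        have h2 : (0:ℝ) < (2:ℝ) ^ ((ε - δ n) * (n:ℝ)) := Real.rpow_pos_of_pos (by norm_num) _
        have h3 : (P {ω | r n (ε - δ n) ≤ Real.exp (-β * H n z ω)}).toReal
            = ((2:ℝ) ^ ((ε - δ n) * (n:ℝ)))⁻¹ := by
          rw [inv_eq_one_div, eq_div_iff h2.ne', mul_comm]
          exact heq
        rw [← h3, ENNReal.ofReal_toReal (measure_ne_top P _)]
      have hpb : ∀ z : Fin n → Bool, P {ω | rstar n ≤ Real.exp (-β * H n z ω)}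
          = ENNReal.ofReal (((n:ℝ) ^ cstar)⁻¹) := by
        intro z
        obtain ⟨hrpos, heq⟩ := hrstar n hn2 z
        have h2 : (0:ℝ) < (n:ℝ) ^ cstar :=
          Real.rpow_pos_of_pos (by positivity) _
        have h3 : (P {ω | rstar n ≤ Real.exp (-β * H n z ω)}).toReal
            = ((n:ℝ) ^ cstar)⁻¹ := by
          rw [inv_eq_one_div, eq_div_iff h2.ne', mul_comm]
          exact heq
        rw [← h3, ENNReal.ofReal_toReal (measure_ne_top P _)]
      have := measure_bad_le P H hmeas hindep β (r n (ε - δ n)) (rstar n) n hn2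
        cstar (ε - δ n) η hcs hη.le hpa hpb
      rw [hC]
      simp only [if_pos h]
      exact this
    · rw [hC]
      simp only [if_neg h, measure_empty]
      positivity
  have hsummable : Summable (fun n : ℕ => 2 / (n:ℝ)^3) := by
    have h1 : Summable (fun n : ℕ => 1 / (n:ℝ)^(3:ℕ)) :=
      Real.summable_one_div_nat_pow.mpr (by norm_num)
    exact (h1.mul_left 2).congr (fun n => by field_simp)
  have hCsum : (∑' n, P (C n)) ≠ ⊤ := by
    have h1 : (∑' n, P (C n)) ≤ ∑' (n : ℕ), ENNReal.ofReal (2 / (n:ℝ)^3) :=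
      ENNReal.tsum_le_tsum hbound
    have h2 : (∑' (n : ℕ), ENNReal.ofReal (2 / (n:ℝ)^3))
        = ENNReal.ofReal (∑' (n : ℕ), 2 / (n:ℝ)^3) :=
      (ENNReal.ofReal_tsum_of_nonneg (fun n => by positivity) hsummable).symm
    rw [h2] at h1
    exact ne_top_of_le_ne_top ENNReal.ofReal_ne_top h1
  have hBC := MeasureTheory.ae_eventually_notMem hCsum
  filter_upwards [hBC] with ω hω
  filter_upwards [hω, eventually_ge_atTop n₀] with n hωn hn₀n
  intro T Vs hT hVs
  have hdet : Set.ncard (T \ {x : Fin n → Bool | x ∈ T ∧ ∀ y ∈ T,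
        (∃ hx : x ∈ Vs, ∃ hy : y ∈ Vs,
          (SimpleGraph.induce Vs (hypercube n)).Reachable ⟨y, hy⟩ ⟨x, hx⟩) → y = x})
      ≤ Nf n ω :=
    ncard_bad_le_Ncount n (r n (ε - δ n)) (rstar n)
      (fun z => Real.exp (-β * H n z ω)) T Vs hT hVs
  have hωn' : ¬ (ENNReal.ofReal (tval n) ≤ (Nf n ω : ℝ≥0∞)) := by
    intro hcon
    apply hωn
    rw [hC]
    simp only [if_pos hn₀n]
    exact hcon
  have h2 : (Nf n ω : ℝ≥0∞) ≤ ENNReal.ofReal (tval n) := (not_le.mp hωn').le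
  rw [← ENNReal.ofReal_natCast (Nf n ω)] at h2
  have htnn : 0 ≤ tval n := by
    have : (0:ℝ) < (2:ℝ) ^ ((n:ℝ) * (1 - 2*(ε - δ n))) := Real.rpow_pos_of_pos (by norm_num) _
    have : (0:ℝ) ≤ (n:ℝ)^4 := by positivity
    rw [htval]
    positivity
  have h3 : ((Nf n ω : ℕ) : ℝ) ≤ tval n := (ENNReal.ofReal_le_ofReal_iff htnn).mp h2
  calc (Set.ncard (T \ {x : Fin n → Bool | x ∈ T ∧ ∀ y ∈ T,
        (∃ hx : x ∈ Vs, ∃ hy : y ∈ Vs,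
          (SimpleGraph.induce Vs (hypercube n)).Reachable ⟨y, hy⟩ ⟨x, hx⟩) → y = x}) : ℝ)
      ≤ ((Nf n ω : ℕ) : ℝ) := by exact_mod_cast hdet
    _ ≤ tval n := h3
    _ = (1 + η) * n ^ 4 * (2 : ℝ) ^ ((n : ℝ) * (1 - 2 * (ε - δ n))) := by rw [htval]
end
end

section
/- Let M_n = {x ∈ V_n : τ_n(x) > τ_n(y) for all neighbors y of x} be the set of local minima of the Hamiltonian H_n, and let V̄_n* = {x ∈ V_n : τ_n(x) ≤ 1/r_n*}. Then ℙ-almost surely, for all but finitely many n, V̄_n* ∩ M_n = ∅. -/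
open MeasureTheory ProbabilityTheory Filter Real
open scoped ENNReal NNReal

noncomputable section

lemma adj_update (n : ℕ) (x : Fin n → Bool) (i : Fin n) :
    (hypercube n).Adj x (Function.update x i (!(x i))) := by
  show hammingDist x (Function.update x i (!(x i))) = 1
  rw [hammingDist, Finset.card_eq_one]
  refine ⟨i, ?_⟩
  ext j
  rcases eq_or_ne j i with rfl | hj
  · simp [Function.update_self, (Bool.not_ne_self (x j)).symm]
  · simp [Function.update_of_ne hj, hj]

lemma update_inj (n : ℕ) (x : Fin n → Bool) :
    Function.Injective fun i : Fin n => Function.update x i (!(x i)) := by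
  intro i j hij
  by_contra hne
  have h1 : Function.update x i (!(x i)) i = Function.update x j (!(x j)) i := congrFun hij i
  rw [Function.update_self, Function.update_of_ne hne] at h1
  exact Bool.not_ne_self (x i) h1

lemma gaussian_symm (v : NNReal) (t : ℝ) :
    gaussianReal 0 v (Set.Iic (-t)) = gaussianReal 0 v (Set.Ici t) := by
  have h := gaussianReal_map_const_mul (μ := 0) (v := v) (-1)
  have hv : ((.mk ((-1:ℝ)^2) (sq_nonneg _) : NNReal) * v : NNReal) = v := by
    apply NNReal.eq; simp
  rw [hv, mul_zero] at h
  have hpre : ((-1 : ℝ) * ·) ⁻¹' Set.Iic (-t) = Set.Ici t := by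
    ext u
    simp only [Set.mem_preimage, Set.mem_Iic, Set.mem_Ici, neg_one_mul, neg_le_neg_iff]
  calc gaussianReal 0 v (Set.Iic (-t))
      = ((gaussianReal 0 v).map ((-1 : ℝ) * ·)) (Set.Iic (-t)) := by rw [h]
    _ = gaussianReal 0 v (((-1 : ℝ) * ·) ⁻¹' Set.Iic (-t)) :=
        Measure.map_apply (measurable_const_mul _) measurableSet_Iic
    _ = gaussianReal 0 v (Set.Ici t) := by rw [hpre]

theorem no_local_minima_in_Vbar
    {Ω : Type*} [MeasurableSpace Ω] (P : Measure Ω) [IsProbabilityMeasure P]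
    (H : (n : ℕ) → (Fin n → Bool) → Ω → ℝ)
    (hmeas : ∀ n x, Measurable (H n x))
    (hgauss : ∀ n x, Measure.map (H n x) P = gaussianReal 0 n)
    (hindep : iIndepFun
      (fun p : (Σ n : ℕ, (Fin n → Bool)) => H p.1 p.2) P)
    (β : ℝ) (hβ : 0 < β)
    (cstar : ℝ) (hcstar : 1 + Real.log 4 < cstar)
    (rstar : ℕ → ℝ)
    (hrstar : ∀ n, 2 ≤ n → ∀ x : Fin n → Bool, 0 < rstar n ∧
      (n : ℝ) ^ cstar * (P {ω | rstar n ≤ Real.exp (-β * H n x ω)}).toReal = 1) :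
    ∀ᵐ ω ∂P, ∀ᶠ n : ℕ in atTop,
      {x : Fin n → Bool | Real.exp (-β * H n x ω) ≤ (rstar n)⁻¹} ∩
        {x : Fin n → Bool | ∀ y : Fin n → Bool, (hypercube n).Adj x y →
          Real.exp (-β * H n y ω) < Real.exp (-β * H n x ω)} = ∅ := by
  classical
  have hc2 : (2 : ℝ) ≤ cstar := by
    have h4 : (1 : ℝ) < Real.log 4 := by
      rw [Real.lt_log_iff_exp_lt (by norm_num)]
      calc Real.exp 1 < 2.7182818286 := Real.exp_one_lt_d9
        _ < 4 := by norm_num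
    linarith
  set S : ℕ → Set Ω := fun n =>
    {ω | ({x : Fin n → Bool | Real.exp (-β * H n x ω) ≤ (rstar n)⁻¹} ∩
        {x : Fin n → Bool | ∀ y : Fin n → Bool, (hypercube n).Adj x y →
          Real.exp (-β * H n y ω) < Real.exp (-β * H n x ω)}).Nonempty} with hSdef
  have hbound : ∀ n, 2 ≤ n → P (S n) ≤ 2⁻¹ ^ n := by
    intro n hn
    have hr : 0 < rstar n := (hrstar n hn (fun _ => true)).1
    set t : ℝ := Real.log (rstar n) / β with ht
    have hn1 : (1 : ℝ) ≤ n := by exact_mod_cast Nat.one_le_of_lt hn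
    -- single event probability
    have hq : ∀ y : Fin n → Bool,
        P ((H n y) ⁻¹' Set.Ici t) = ENNReal.ofReal (((n:ℝ) ^ cstar)⁻¹) := by
      intro y
      have hset : {ω | rstar n ≤ Real.exp (-β * H n y ω)} = (H n y) ⁻¹' Set.Iic (-t) := by
        ext ω
        simp only [Set.mem_setOf_eq, Set.mem_preimage, Set.mem_Iic]
        rw [← Real.log_le_iff_le_exp hr]
        have hneg : -t = (-Real.log (rstar n)) / β := by rw [ht]; ring
        rw [hneg, le_div_iff₀ hβ]
        constructor
        · intro h; nlinarith
        · intro h; nlinarith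
      have hIic : P ((H n y) ⁻¹' Set.Iic (-t)) = gaussianReal 0 n (Set.Iic (-t)) := by
        rw [← hgauss n y, Measure.map_apply (hmeas n y) measurableSet_Iic]
      have hIci : P ((H n y) ⁻¹' Set.Ici t) = gaussianReal 0 n (Set.Ici t) := by
        rw [← hgauss n y, Measure.map_apply (hmeas n y) measurableSet_Ici]
      have heq : P ((H n y) ⁻¹' Set.Ici t) = P {ω | rstar n ≤ Real.exp (-β * H n y ω)} := by
        rw [hset, hIic, hIci, gaussian_symm]
      have htr := (hrstar n hn y).2
      have hnpos : (0 : ℝ) < (n:ℝ) ^ cstar := Real.rpow_pos_of_pos (by linarith) _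
      have htoReal : (P {ω | rstar n ≤ Real.exp (-β * H n y ω)}).toReal = ((n:ℝ) ^ cstar)⁻¹ := by
        field_simp at htr ⊢
        linarith
      rw [heq, ← htoReal, ENNReal.ofReal_toReal (measure_ne_top _ _)]
    -- union bound setup
    set g : (Fin n → Bool) → Fin n → (Fin n → Bool) := fun x i => Function.update x i (!(x i))
    have hsub : S n ⊆ ⋃ x : Fin n → Bool, ⋂ i : Fin n, (H n (g x i)) ⁻¹' Set.Ici t := by
      intro ω hω
      obtain ⟨x, hx1, hx2⟩ := hω
      refine Set.mem_iUnion.2 ⟨x, Set.mem_iInter.2 fun i => ?_⟩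
      have hadj := adj_update n x i
      have hlt := hx2 (g x i) hadj
      have hle : Real.exp (-β * H n (g x i) ω) ≤ (rstar n)⁻¹ := le_of_lt (lt_of_lt_of_le hlt hx1)
      have : Real.exp (-β * H n (g x i) ω) ≤ Real.exp (-(Real.log (rstar n))) := by
        rwa [Real.exp_neg, Real.exp_log hr]
      rw [Real.exp_le_exp] at this
      simp only [Set.mem_preimage, Set.mem_Ici, ht]
      rw [div_le_iff₀ hβ]
      nlinarith
    have hTx : ∀ x : Fin n → Bool,
        P (⋂ i : Fin n, (H n (g x i)) ⁻¹' Set.Ici t)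
          = ENNReal.ofReal (((n:ℝ) ^ cstar)⁻¹) ^ n := by
      intro x
      have hinj : Function.Injective fun i : Fin n => (⟨n, g x i⟩ : Σ m : ℕ, (Fin m → Bool)) := by
        intro i j hij
        exact update_inj n x (eq_of_heq (Sigma.mk.inj_iff.1 hij).2)
      have key := hindep.measure_inter_preimage_eq_mul
        (S := Finset.univ.image (fun i : Fin n => (⟨n, g x i⟩ : Σ m : ℕ, (Fin m → Bool))))
        (sets := fun _ => Set.Ici t) (fun i _ => measurableSet_Ici)
      rw [Finset.set_biInter_finset_image, Finset.prod_image
        (fun i _ j _ h => hinj h)] at key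
      simp only [Finset.mem_univ, Set.iInter_true] at key
      rw [key]
      simp only [hq, Finset.prod_const, Finset.card_univ, Fintype.card_fin]
    have hcard : ∀ x : Fin n → Bool, (⋂ i ∈ (Finset.univ : Finset (Fin n)),
        (H n (g x i)) ⁻¹' Set.Ici t) = ⋂ i : Fin n, (H n (g x i)) ⁻¹' Set.Ici t := by
      intro x; simp
    have hqle : ENNReal.ofReal (((n:ℝ) ^ cstar)⁻¹) ≤ ENNReal.ofReal (4⁻¹ : ℝ) := by
      apply ENNReal.ofReal_le_ofReal
      have h4 : (4:ℝ) ≤ (n:ℝ) ^ cstar := by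
        calc (4:ℝ) = (2:ℝ) ^ (2:ℝ) := by
              rw [Real.rpow_two]; norm_num
          _ ≤ (2:ℝ) ^ cstar := Real.rpow_le_rpow_left_iff (by norm_num) |>.2 hc2
          _ ≤ (n:ℝ) ^ cstar := Real.rpow_le_rpow (by norm_num) (by exact_mod_cast hn) (by linarith)
      rw [inv_le_inv₀ (by linarith) (by norm_num)] at *
      · exact h4
    calc P (S n) ≤ P (⋃ x : Fin n → Bool, ⋂ i : Fin n, (H n (g x i)) ⁻¹' Set.Ici t) :=
          measure_mono hsub
      _ ≤ ∑ x : Fin n → Bool, P (⋂ i : Fin n, (H n (g x i)) ⁻¹' Set.Ici t) :=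
          measure_iUnion_fintype_le _ _
      _ = ∑ _x : Fin n → Bool, ENNReal.ofReal (((n:ℝ) ^ cstar)⁻¹) ^ n := by
          exact Finset.sum_congr rfl fun x _ => hTx x
      _ = 2 ^ n * ENNReal.ofReal (((n:ℝ) ^ cstar)⁻¹) ^ n := by
          rw [Finset.sum_const, Finset.card_univ, Fintype.card_fun, Fintype.card_fin,
            Fintype.card_bool, nsmul_eq_mul]
          norm_num
      _ = (2 * ENNReal.ofReal (((n:ℝ) ^ cstar)⁻¹)) ^ n := by rw [mul_pow]
      _ ≤ (2 * ENNReal.ofReal (4⁻¹ : ℝ)) ^ n := by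
          gcongr
      _ = 2⁻¹ ^ n := by
          congr 1
          have h1 : (2:ℝ≥0∞) * ENNReal.ofReal (4⁻¹ : ℝ) = ENNReal.ofReal (2⁻¹ : ℝ) := by
            rw [show (2 : ℝ≥0∞) = ENNReal.ofReal 2 by simp,
              ← ENNReal.ofReal_mul (by norm_num)]
            norm_num
          rw [h1, ENNReal.ofReal_inv_of_pos (by norm_num), ENNReal.ofReal_ofNat]
  have hsum : (∑' n, P (S n)) ≠ ⊤ := by
    have hle : ∀ n, P (S n) ≤ 4 * 2⁻¹ ^ n := by
      intro n
      rcases lt_or_ge n 2 with hn | hn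
      · calc P (S n) ≤ 1 := prob_le_one
          _ ≤ 4 * 2⁻¹ ^ n := by
            have h42 : (4:ℝ≥0∞) * 2⁻¹ = 2 := by
              rw [show (4:ℝ≥0∞) = 2 * 2 by norm_num, mul_assoc,
                ENNReal.mul_inv_cancel two_ne_zero ENNReal.ofNat_ne_top, mul_one]
            interval_cases n
            · simp
            · rw [pow_one, h42]; exact one_le_two
      · calc P (S n) ≤ 2⁻¹ ^ n := hbound n hn
          _ ≤ 4 * 2⁻¹ ^ n := le_mul_of_one_le_left zero_le (by norm_num)
    have hle2 : (∑' n, P (S n)) ≤ 8 :=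
      calc (∑' n, P (S n)) ≤ ∑' n, 4 * (2⁻¹ : ℝ≥0∞) ^ n := ENNReal.tsum_le_tsum hle
        _ = 4 * (1 - 2⁻¹)⁻¹ := by rw [ENNReal.tsum_mul_left, ENNReal.tsum_geometric]
        _ = 8 := by rw [ENNReal.one_sub_inv_two, inv_inv]; norm_num
    exact ne_top_of_le_ne_top (by norm_num) hle2
  filter_upwards [ae_eventually_notMem hsum] with ω hω
  filter_upwards [hω] with n hn
  rw [← Set.not_nonempty_iff_eq_empty]
  exact hn

end
end

section
/- ℙ-almost surely, for all but finitely many n, for every edge {x,y} ∈ E_n one has max(H_n(x), H_n(y)) ≥ −( n·√(log 2) + 2·(log n)/√(log 2) ); equivalently, exp(−β·min_{{x,y}∈E_n} max(H_n(y),H_n(x))) ≤ exp( β n √(log 2)·(1 + 2 log n/(n log 2)) ). -/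
open MeasureTheory ProbabilityTheory Filter Real NNReal ENNReal

noncomputable section

lemma gaussian_tail (v : ℝ≥0) (hv : v ≠ 0) (t : ℝ) (ht : 0 ≤ t) :
    gaussianReal 0 v (Set.Iic (-t)) ≤ ENNReal.ofReal (Real.exp (-t^2/(2*v))) := by
  have hv' : (0:ℝ) < v := by positivity
  rw [gaussianReal_apply 0 hv]
  have key : ∀ x ∈ Set.Iic (-t), gaussianPDF 0 v x
      ≤ ENNReal.ofReal (Real.exp (-t^2/(2*v))) * gaussianPDF 0 v (x + t) := by
    intro x hx
    simp only [gaussianPDF, gaussianPDFReal, ← ENNReal.ofReal_mul (Real.exp_nonneg _)]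
    apply ENNReal.ofReal_le_ofReal
    rw [show Real.exp (-t ^ 2 / (2 * ↑v)) * ((Real.sqrt (2 * Real.pi * ↑v))⁻¹ *
        Real.exp (-(x + t - 0) ^ 2 / (2 * ↑v)))
      = (Real.sqrt (2 * Real.pi * ↑v))⁻¹ *
        (Real.exp (-t ^ 2 / (2 * ↑v)) * Real.exp (-(x + t - 0) ^ 2 / (2 * ↑v))) by ring,
      ← Real.exp_add]
    refine mul_le_mul_of_nonneg_left ?_ (by positivity)
    rw [Real.exp_le_exp]
    have hx' : x ≤ -t := hx
    have : x * t ≤ -t^2 := by nlinarith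
    have h2v : (0:ℝ) < 2 * v := by positivity
    rw [← add_div, div_le_div_iff_of_pos_right h2v]
    nlinarith
  have hm : Measurable fun x : ℝ => gaussianPDF 0 v (x + t) :=
    (measurable_gaussianPDF 0 v).comp (measurable_add_const t)
  calc ∫⁻ x in Set.Iic (-t), gaussianPDF 0 v x
      ≤ ∫⁻ x in Set.Iic (-t), ENNReal.ofReal (Real.exp (-t^2/(2*v))) * gaussianPDF 0 v (x + t) :=
        setLIntegral_mono (hm.const_mul _) key
    _ ≤ ∫⁻ x, ENNReal.ofReal (Real.exp (-t^2/(2*v))) * gaussianPDF 0 v (x + t) :=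
        setLIntegral_le_lintegral _ _
    _ = ENNReal.ofReal (Real.exp (-t^2/(2*v))) * ∫⁻ x, gaussianPDF 0 v (x + t) := by
        rw [lintegral_const_mul _ hm]
    _ = ENNReal.ofReal (Real.exp (-t^2/(2*v))) := by
        rw [lintegral_add_right_eq_self (gaussianPDF 0 v) t, lintegral_gaussianPDF_eq_one 0 hv,
          mul_one]

lemma adj_exists_update {n : ℕ} {x y : Fin n → Bool} (h : hammingDist x y = 1) :
    ∃ i : Fin n, y = Function.update x i (!x i) := by
  rw [hammingDist, Finset.card_eq_one] at h
  obtain ⟨i, hi⟩ := h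
  refine ⟨i, funext fun j => ?_⟩
  by_cases hj : j = i
  · subst hj
    have : j ∈ ({j} : Finset (Fin n)) := Finset.mem_singleton_self j
    rw [← hi, Finset.mem_filter] at this
    simp only [Function.update_self]
    cases hxy : x j <;> cases hyy : y j <;> simp_all
  · have : j ∉ ({i} : Finset (Fin n)) := by simp [hj]
    rw [← hi, Finset.mem_filter] at this
    push_neg at this
    have := this (Finset.mem_univ j)
    rw [Function.update_of_ne hj]
    simpa using this.symm

lemma update_ne {n : ℕ} (x : Fin n → Bool) (i : Fin n) :
    x ≠ Function.update x i (!x i) := by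
  intro h
  have := congrFun h i
  simp at this

theorem edge_min_energy_bound
    {Ω : Type*} [MeasurableSpace Ω] (P : Measure Ω) [IsProbabilityMeasure P]
    (H : (n : ℕ) → (Fin n → Bool) → Ω → ℝ)
    (hmeas : ∀ n x, Measurable (H n x))
    (hgauss : ∀ n x, Measure.map (H n x) P = gaussianReal 0 n)
    (hindep : iIndepFun
      (fun p : (Σ n : ℕ, (Fin n → Bool)) => H p.1 p.2) P)
    (β : ℝ) (hβ : 0 < β) :
    ∀ᵐ ω ∂P, ∀ᶠ n : ℕ in atTop,
      ∀ x y : Fin n → Bool, (hypercube n).Adj x y →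
        -((n : ℝ) * Real.sqrt (Real.log 2) + 2 * Real.log n / Real.sqrt (Real.log 2))
          ≤ max (H n x ω) (H n y ω) := by
  have hL : (0:ℝ) < Real.log 2 := Real.log_pos one_lt_two
  set sL : ℝ := Real.sqrt (Real.log 2) with hsL
  have hsL0 : 0 < sL := Real.sqrt_pos.mpr hL
  set t : ℕ → ℝ := fun n => (n : ℝ) * sL + 2 * Real.log n / sL with ht
  -- the bad sets
  set bad : ℕ → Set Ω := fun n => ⋃ (x : Fin n → Bool) (i : Fin n),
    (H n x ⁻¹' Set.Iio (-t n) ∩ H n (Function.update x i (!x i)) ⁻¹' Set.Iio (-t n)) with hbad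
  -- nonnegativity of t n for n ≥ 1
  have htnn : ∀ n : ℕ, 1 ≤ n → 0 ≤ t n := by
    intro n hn
    have hlog : 0 ≤ Real.log n := Real.log_nonneg (by exact_mod_cast hn)
    have : (0:ℝ) ≤ (n : ℝ) * sL := by positivity
    have : (0:ℝ) ≤ 2 * Real.log n / sL := by positivity
    simp only [ht]
    positivity
  -- single tail bound
  have hsingle : ∀ n : ℕ, 2 ≤ n → ∀ x : Fin n → Bool,
      P (H n x ⁻¹' Set.Iio (-t n)) ≤ ENNReal.ofReal (Real.exp (-(t n)^2/(2*n))) := by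
    intro n hn x
    have h1 : P (H n x ⁻¹' Set.Iio (-t n)) ≤ P (H n x ⁻¹' Set.Iic (-t n)) :=
      measure_mono (Set.preimage_mono Set.Iio_subset_Iic_self)
    refine h1.trans ?_
    have h2 : P (H n x ⁻¹' Set.Iic (-t n)) = gaussianReal 0 n (Set.Iic (-t n)) := by
      rw [← hgauss n x, Measure.map_apply (hmeas n x) measurableSet_Iic]
    rw [h2]
    have hv : ((n : ℝ≥0)) ≠ 0 := by
      simp only [ne_eq, Nat.cast_eq_zero]; omega
    have h3 := gaussian_tail (n : ℝ≥0) hv (t n) (htnn n (by omega))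
    simpa only [NNReal.coe_natCast] using h3
  -- pair bound
  have hpair : ∀ n : ℕ, 2 ≤ n → ∀ (x : Fin n → Bool) (i : Fin n),
      P (H n x ⁻¹' Set.Iio (-t n) ∩ H n (Function.update x i (!x i)) ⁻¹' Set.Iio (-t n))
        ≤ ENNReal.ofReal (Real.exp (-(t n)^2/(2*n))) ^ 2 := by
    intro n hn x i
    set y := Function.update x i (!x i) with hy
    have hne : (⟨n, x⟩ : Σ n : ℕ, (Fin n → Bool)) ≠ ⟨n, y⟩ := by
      intro h
      exact update_ne x i (eq_of_heq (Sigma.mk.inj_iff.mp h).2)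
    have hind : IndepFun (H n x) (H n y) P := hindep.indepFun hne
    rw [hind.measure_inter_preimage_eq_mul _ _ measurableSet_Iio measurableSet_Iio, sq]
    exact mul_le_mul' (hsingle n hn x) (hsingle n hn y)
  -- numeric bound on exp squared
  have hnum : ∀ n : ℕ, 2 ≤ n →
      Real.exp (-(t n)^2/(2*n)) ^ 2 ≤ ((2:ℝ)^n * (n:ℝ)^4)⁻¹ := by
    intro n hn
    have hn0 : (0:ℝ) < n := by positivity
    have hlog : 0 ≤ Real.log n := Real.log_nonneg (by exact_mod_cast (by omega : 1 ≤ n))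
    have hsq : sL ^ 2 = Real.log 2 := Real.sq_sqrt hL.le
    have htsq : (n:ℝ)^2 * Real.log 2 + 4 * n * Real.log n ≤ (t n)^2 := by
      simp only [ht]
      have expand : ((n : ℝ) * sL + 2 * Real.log n / sL)^2
          = (n:ℝ)^2 * sL^2 + 4 * n * Real.log n * (sL / sL) + (2 * Real.log n / sL)^2 := by
        field_simp
        ring
      rw [expand, div_self hsL0.ne', mul_one, hsq]
      nlinarith [sq_nonneg (2 * Real.log n / sL)]
    have h1 : -(t n)^2/(2*n) ≤ -((n:ℝ) * Real.log 2 + 4 * Real.log n)/2 := by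
      rw [div_le_div_iff₀ (by positivity) (by positivity)]
      nlinarith
    calc Real.exp (-(t n)^2/(2*n)) ^ 2 = Real.exp (2 * (-(t n)^2/(2*n))) := by
          rw [← Real.exp_nat_mul]; norm_num
      _ ≤ Real.exp (-((n:ℝ) * Real.log 2 + 4 * Real.log n)) := by
          rw [Real.exp_le_exp]
          linarith
      _ = ((2:ℝ)^n * (n:ℝ)^4)⁻¹ := by
          rw [neg_add, Real.exp_add, Real.exp_neg, Real.exp_neg, ← mul_inv,
            Real.exp_nat_mul, Real.exp_log two_pos,
            show ((4:ℝ) * Real.log n) = ((4:ℕ):ℝ) * Real.log n by norm_num,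
            Real.exp_nat_mul, Real.exp_log hn0]
  -- bound on the measure of bad n
  have hbadle : ∀ n : ℕ, 2 ≤ n → P (bad n) ≤ ENNReal.ofReal (((n:ℝ)^3)⁻¹) := by
    intro n hn
    set c := ENNReal.ofReal (Real.exp (-(t n)^2/(2*n))) ^ 2 with hc
    have step1 : P (bad n) ≤ ((2^n * n : ℕ) : ℝ≥0∞) * c := by
      rw [hbad]
      refine (measure_iUnion_le _).trans ?_
      have h1 : ∀ x : Fin n → Bool,
          P (⋃ i, (H n x ⁻¹' Set.Iio (-t n) ∩
            H n (Function.update x i (!x i)) ⁻¹' Set.Iio (-t n))) ≤ (n : ℝ≥0∞) * c := by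
        intro x
        refine (measure_iUnion_le _).trans ?_
        rw [tsum_fintype]
        refine (Finset.sum_le_sum fun i _ => hpair n hn x i).trans ?_
        rw [Finset.sum_const, Finset.card_univ, Fintype.card_fin, nsmul_eq_mul]
      refine (ENNReal.tsum_le_tsum h1).trans ?_
      rw [tsum_fintype, Finset.sum_const, Finset.card_univ, nsmul_eq_mul]
      rw [show Fintype.card (Fin n → Bool) = 2^n by
        rw [Fintype.card_fun, Fintype.card_bool, Fintype.card_fin]]
      exact le_of_eq (by push_cast; ring)
    refine step1.trans ?_
    have hn0 : (0:ℝ) < n := by positivity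
    have h2 : c ≤ ENNReal.ofReal (((2:ℝ)^n * (n:ℝ)^4)⁻¹) := by
      rw [hc, ← ENNReal.ofReal_pow (Real.exp_nonneg _)]
      exact ENNReal.ofReal_le_ofReal (hnum n hn)
    calc ((2^n * n : ℕ) : ℝ≥0∞) * c
        ≤ ((2^n * n : ℕ) : ℝ≥0∞) * ENNReal.ofReal (((2:ℝ)^n * (n:ℝ)^4)⁻¹) := by
          exact mul_le_mul_right h2 _
      _ = ENNReal.ofReal (((2^n * n : ℕ) : ℝ) * ((2:ℝ)^n * (n:ℝ)^4)⁻¹) := by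
          rw [← ENNReal.ofReal_natCast, ← ENNReal.ofReal_mul (by positivity)]
      _ = ENNReal.ofReal (((n:ℝ)^3)⁻¹) := by
          congr 1
          push_cast
          field_simp
  -- summability
  have hsum : (∑' k : ℕ, P (bad (k + 2))) ≠ ⊤ := by
    have h0 : Summable (fun n : ℕ => 1/(n:ℝ)^3) :=
      Real.summable_one_div_nat_pow.mpr (by norm_num)
    have hS : Summable (fun k : ℕ => ((((k+2:ℕ)):ℝ)^3)⁻¹) := by
      have := (_root_.summable_nat_add_iff 2).mpr h0
      exact this.congr fun k => by rw [one_div]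
    refine ne_top_of_le_ne_top ?_ (ENNReal.tsum_le_tsum fun k => hbadle (k+2) (by omega))
    rw [← ENNReal.ofReal_tsum_of_nonneg (fun k => by positivity) hS]
    exact ENNReal.ofReal_ne_top
  -- Borel–Cantelli
  have hBC := ae_eventually_notMem (s := fun k => bad (k + 2)) hsum
  filter_upwards [hBC] with ω hω
  obtain ⟨N, hN⟩ := eventually_atTop.mp hω
  rw [eventually_atTop]
  refine ⟨N + 2, fun n hn x y hxy => ?_⟩
  by_contra hcon
  push_neg at hcon
  have hx : H n x ω < -t n := lt_of_le_of_lt (le_max_left _ _) hcon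
  have hy : H n y ω < -t n := lt_of_le_of_lt (le_max_right _ _) hcon
  obtain ⟨i, hi⟩ := adj_exists_update hxy
  have hmem : ω ∈ bad n := by
    rw [hbad]
    refine Set.mem_iUnion.mpr ⟨x, Set.mem_iUnion.mpr ⟨i, ⟨hx, ?_⟩⟩⟩
    rw [← hi]
    exact hy
  have hnot := hN (n - 2) (by omega)
  rw [show n - 2 + 2 = n by omega] at hnot
  exact hnot hmem
end
end

section
/- One has Z_{β,n} ≤ 2^n for every n and every realization of the environment, and for every η > 0, ℙ-almost surely, for all but finitely many n, Z_{β,n} ≥ 2^n·(1 − (1+η)·n^{−c*}). Consequently, for every η > 0, ℙ-almost surely, for all but finitely many n, π_n(x) ≤ (1+η)·2^{−n} for every x ∈ V_n. -/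
open MeasureTheory ProbabilityTheory Filter Real
open scoped NNReal ENNReal

noncomputable section

lemma gauss_symm_aux {v : ℝ≥0} (hv : v ≠ 0) (a : ℝ) :
    gaussianReal 0 v (Set.Ioi (-a)) = gaussianReal 0 v (Set.Iic a) := by
  haveI : NullSingletonClass (gaussianReal 0 v) :=
    ⟨fun b => (gaussianReal_absolutelyContinuous 0 hv) (measure_singleton b)⟩
  have hmap : (gaussianReal 0 v).map (fun y : ℝ => (-1 : ℝ) * y) = gaussianReal 0 v := by
    have h := gaussianReal_map_const_mul (μ := 0) (v := v) (-1 : ℝ)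
    have h2 : (NNReal.mk ((-1 : ℝ) ^ 2) (sq_nonneg _) : ℝ≥0) = 1 := by
      ext; norm_num
    rw [h2, one_mul, mul_zero] at h
    exact h
  have h1 : gaussianReal 0 v (Set.Ioi (-a)) = gaussianReal 0 v (Set.Iio a) := by
    conv_rhs => rw [← hmap]
    rw [Measure.map_apply (f := fun y : ℝ => (-1 : ℝ) * y) (by fun_prop) measurableSet_Iio]
    congr 1
    ext y
    simp only [Set.mem_Ioi, Set.mem_preimage, Set.mem_Iio]
    constructor <;> intro h <;> linarith
  rw [h1]
  exact measure_congr Iio_ae_eq_Iic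

theorem Zbn_bounds
    {Ω : Type*} [MeasurableSpace Ω] (P : Measure Ω) [IsProbabilityMeasure P]
    (H : (n : ℕ) → (Fin n → Bool) → Ω → ℝ)
    (hmeas : ∀ n x, Measurable (H n x))
    (hgauss : ∀ n x, Measure.map (H n x) P = gaussianReal 0 n)
    (hindep : iIndepFun
      (fun p : (Σ n : ℕ, (Fin n → Bool)) => H p.1 p.2) P)
    (β : ℝ) (hβ : 0 < β)
    (cstar : ℝ) (hcstar : 1 + Real.log 4 < cstar)
    (rstar : ℕ → ℝ)
    (hrstar : ∀ n, 2 ≤ n → ∀ x : Fin n → Bool, 0 < rstar n ∧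
      (n : ℝ) ^ cstar * (P {ω | rstar n ≤ Real.exp (-β * H n x ω)}).toReal = 1) :
    (∀ (n : ℕ) (ω : Ω),
        (∑ x : Fin n → Bool, min 1 (rstar n * Real.exp (-β * H n x ω))) ≤ (2 : ℝ) ^ n) ∧
    (∀ η : ℝ, 0 < η → ∀ᵐ ω ∂P, ∀ᶠ n : ℕ in atTop,
        (2 : ℝ) ^ n * (1 - (1 + η) * (n : ℝ) ^ (-cstar))
          ≤ ∑ x : Fin n → Bool, min 1 (rstar n * Real.exp (-β * H n x ω))) ∧
    (∀ η : ℝ, 0 < η → ∀ᵐ ω ∂P, ∀ᶠ n : ℕ in atTop,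
        ∀ x : Fin n → Bool,
          min 1 (rstar n * Real.exp (-β * H n x ω)) /
              (∑ y : Fin n → Bool, min 1 (rstar n * Real.exp (-β * H n y ω)))
            ≤ (1 + η) * ((2 : ℝ) ^ n)⁻¹) := by
  classical
  have hcstar_pos : 0 < cstar := by
    have h4 : (0 : ℝ) ≤ Real.log 4 := Real.log_nonneg (by norm_num)
    linarith
  have hcard : ∀ n : ℕ, (Finset.univ : Finset (Fin n → Bool)).card = 2 ^ n := by
    intro n
    simp [Finset.card_univ]
  -- Part 1
  have part1 : ∀ (n : ℕ) (ω : Ω),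
      (∑ x : Fin n → Bool, min 1 (rstar n * Real.exp (-β * H n x ω))) ≤ (2 : ℝ) ^ n := by
    intro n ω
    calc ∑ x : Fin n → Bool, min 1 (rstar n * Real.exp (-β * H n x ω))
        ≤ ∑ _x : Fin n → Bool, (1 : ℝ) :=
          Finset.sum_le_sum fun x _ => min_le_left _ _
      _ = (2 : ℝ) ^ n := by
          rw [Finset.sum_const, hcard n]
          simp
  -- The key probability computation
  have key : ∀ n : ℕ, 2 ≤ n → ∀ x : Fin n → Bool,
      (P {ω | rstar n * Real.exp (-β * H n x ω) < 1}).toReal = (n : ℝ) ^ (-cstar) := by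
    intro n hn x
    obtain ⟨hr, heq⟩ := hrstar n hn x
    have hn0 : (0 : ℝ) < (n : ℝ) := by
      have : 0 < n := by omega
      exact_mod_cast this
    have hv : (n : ℝ≥0) ≠ 0 := by
      simp only [ne_eq, Nat.cast_eq_zero]; omega
    set a : ℝ := -(Real.log (rstar n)) / β with ha
    have hset1 : {ω | rstar n ≤ Real.exp (-β * H n x ω)} = (H n x) ⁻¹' (Set.Iic a) := by
      ext ω
      simp only [Set.mem_setOf_eq, Set.mem_preimage, Set.mem_Iic]
      rw [← Real.log_le_iff_le_exp hr, ha, le_div_iff₀ hβ]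
      constructor <;> intro h <;> nlinarith
    have hset2 : {ω | rstar n * Real.exp (-β * H n x ω) < 1} = (H n x) ⁻¹' (Set.Ioi (-a)) := by
      ext ω
      simp only [Set.mem_setOf_eq, Set.mem_preimage, Set.mem_Ioi]
      have h1 : rstar n * Real.exp (-β * H n x ω) < 1 ↔ rstar n < Real.exp (β * H n x ω) := by
        rw [show -β * H n x ω = -(β * H n x ω) by ring, Real.exp_neg,
          mul_inv_lt_iff₀' (Real.exp_pos _), mul_one]
      rw [h1, ← Real.log_lt_iff_lt_exp hr, ha, neg_div, neg_neg, div_lt_iff₀ hβ]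
      constructor <;> intro h <;> nlinarith
    have hmap1 : P ((H n x) ⁻¹' (Set.Iic a)) = gaussianReal 0 (n : ℝ≥0) (Set.Iic a) := by
      rw [← hgauss n x, Measure.map_apply (hmeas n x) measurableSet_Iic]
    have hmap2 : P ((H n x) ⁻¹' (Set.Ioi (-a))) = gaussianReal 0 (n : ℝ≥0) (Set.Ioi (-a)) := by
      rw [← hgauss n x, Measure.map_apply (hmeas n x) measurableSet_Ioi]
    have hEq : (P {ω | rstar n * Real.exp (-β * H n x ω) < 1}).toReal
        = (P {ω | rstar n ≤ Real.exp (-β * H n x ω)}).toReal := by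
      rw [hset1, hset2, hmap1, hmap2, gauss_symm_aux hv a]
    rw [hEq, Real.rpow_neg hn0.le]
    have hpow : (0 : ℝ) < (n : ℝ) ^ cstar := Real.rpow_pos_of_pos hn0 _
    rw [inv_eq_one_div, eq_div_iff hpow.ne']
    linear_combination heq
  -- Part 2
  have part2 : ∀ η : ℝ, 0 < η → ∀ᵐ ω ∂P, ∀ᶠ n : ℕ in atTop,
      (2 : ℝ) ^ n * (1 - (1 + η) * (n : ℝ) ^ (-cstar))
        ≤ ∑ x : Fin n → Bool, min 1 (rstar n * Real.exp (-β * H n x ω)) := by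
    intro η hη
    have hp_pos : ∀ n : ℕ, 2 ≤ n → (0 : ℝ) < (n : ℝ) ^ (-cstar) := by
      intro n hn
      exact Real.rpow_pos_of_pos (by exact_mod_cast (by omega : 0 < n)) _
    set I : (n : ℕ) → (Fin n → Bool) → Ω → ℝ :=
      fun n x => ({ω | rstar n * Real.exp (-β * H n x ω) < 1}).indicator (fun _ => (1 : ℝ))
      with hI
    have hBmeas : ∀ (n : ℕ) (x : Fin n → Bool),
        MeasurableSet {ω | rstar n * Real.exp (-β * H n x ω) < 1} :=
      fun n x => measurableSet_lt ((((hmeas n x).const_mul (-β)).exp).const_mul _)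
        measurable_const
    have hImem : ∀ (n : ℕ) (x : Fin n → Bool), MemLp (I n x) 2 P :=
      fun n x => memLp_indicator_const 2 (hBmeas n x) 1 (Or.inr (measure_ne_top _ _))
    have hIint : ∀ (n : ℕ) (x : Fin n → Bool), Integrable (I n x) P :=
      fun n x => (hImem n x).integrable one_le_two
    have hI01 : ∀ (n : ℕ) (x : Fin n → Bool) (ω : Ω), I n x ω = 0 ∨ I n x ω = 1 := by
      intro n x ω
      by_cases h : ω ∈ {ω | rstar n * Real.exp (-β * H n x ω) < 1}
      · right; simp only [hI, Set.indicator_of_mem h]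
      · left; simp only [hI, Set.indicator_of_notMem h]
    have hIE : ∀ (n : ℕ) (x : Fin n → Bool), ∫ ω, I n x ω ∂P
        = (P {ω | rstar n * Real.exp (-β * H n x ω) < 1}).toReal := by
      intro n x
      rw [hI, integral_indicator_const (1 : ℝ) (hBmeas n x)]
      simp; rfl
    have hIvar : ∀ (n : ℕ) (x : Fin n → Bool),
        variance (I n x) P ≤ (P {ω | rstar n * Real.exp (-β * H n x ω) < 1}).toReal := by
      intro n x
      rw [variance_eq_sub (hImem n x)]
      have hsq : (I n x ^ 2 : Ω → ℝ) = I n x := by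
        funext ω
        simp only [Pi.pow_apply]
        rcases hI01 n x ω with h | h <;> rw [h] <;> norm_num
      rw [hsq, ← hIE n x]
      nlinarith [sq_nonneg (∫ ω, I n x ω ∂P)]
    have hIindep : ∀ (n : ℕ) (x y : Fin n → Bool), x ≠ y → IndepFun (I n x) (I n y) P := by
      intro n x y hxy
      have hne : (⟨n, x⟩ : Σ n : ℕ, (Fin n → Bool)) ≠ ⟨n, y⟩ := by
        intro h
        exact hxy (by simpa using h)
      have hφm : Measurable
          (fun t : ℝ => ({t : ℝ | rstar n * Real.exp (-β * t) < 1}).indicator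
            (fun _ => (1 : ℝ)) t) := by
        apply Measurable.indicator measurable_const
        exact measurableSet_lt (((measurable_id.const_mul (-β)).exp).const_mul _)
          measurable_const
      have hcomp : ∀ z : Fin n → Bool,
          I n z = (fun t : ℝ => ({t : ℝ | rstar n * Real.exp (-β * t) < 1}).indicator
            (fun _ => (1 : ℝ)) t) ∘ (H n z) := by
        intro z
        funext ω
        simp only [hI, Function.comp_apply, Set.indicator_apply, Set.mem_setOf_eq]
      rw [hcomp x, hcomp y]
      exact (hindep.indepFun hne).comp hφm hφm
    have hSE : ∀ n : ℕ, 2 ≤ n →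
        ∫ ω, (∑ x : Fin n → Bool, I n x ω) ∂P = (2 : ℝ) ^ n * (n : ℝ) ^ (-cstar) := by
      intro n hn
      rw [integral_finset_sum _ (fun x _ => hIint n x)]
      have hterm : ∀ x : Fin n → Bool, ∫ ω, I n x ω ∂P = (n : ℝ) ^ (-cstar) := fun x => by
        rw [hIE n x, key n hn x]
      rw [Finset.sum_congr rfl (fun x _ => hterm x), Finset.sum_const, hcard n,
        nsmul_eq_mul]
      push_cast
      ring
    have hSvar : ∀ n : ℕ, 2 ≤ n →
        variance (∑ x : Fin n → Bool, I n x) P ≤ (2 : ℝ) ^ n * (n : ℝ) ^ (-cstar) := by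
      intro n hn
      rw [IndepFun.variance_sum (fun x _ => hImem n x)
        (fun x _ y _ hxy => hIindep n x y hxy)]
      calc ∑ x : Fin n → Bool, variance (I n x) P
          ≤ ∑ _x : Fin n → Bool, (n : ℝ) ^ (-cstar) :=
            Finset.sum_le_sum fun x _ => (hIvar n x).trans_eq (key n hn x)
        _ = (2 : ℝ) ^ n * (n : ℝ) ^ (-cstar) := by
            rw [Finset.sum_const, hcard n, nsmul_eq_mul]
            push_cast
            ring
    set A : ℕ → Set Ω := fun n =>
      if h : 2 ≤ n then
        {ω | η * ((2 : ℝ) ^ n * (n : ℝ) ^ (-cstar))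
          ≤ |(∑ x : Fin n → Bool, I n x ω) - (2 : ℝ) ^ n * (n : ℝ) ^ (-cstar)|}
      else ∅ with hA
    have hAbound : ∀ n : ℕ, P (A n) ≤ ENNReal.ofReal ((n : ℝ) ^ cstar / (η ^ 2 * 2 ^ n)) := by
      intro n
      by_cases hn : 2 ≤ n
      · have hm : (0 : ℝ) < (2 : ℝ) ^ n * (n : ℝ) ^ (-cstar) :=
          mul_pos (by positivity) (hp_pos n hn)
        have hc : (0 : ℝ) < η * ((2 : ℝ) ^ n * (n : ℝ) ^ (-cstar)) := mul_pos hη hm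
        have hcheb := meas_ge_le_variance_div_sq (μ := P)
          (X := ∑ x : Fin n → Bool, I n x)
          (memLp_finset_sum' Finset.univ (fun (x : Fin n → Bool) _ => hImem n x)) hc
        have hsub : A n ⊆ {ω | η * ((2 : ℝ) ^ n * (n : ℝ) ^ (-cstar))
            ≤ |(∑ x : Fin n → Bool, I n x) ω - P[∑ x : Fin n → Bool, I n x]|} := by
          intro ω hω
          simp only [hA, dif_pos hn, Set.mem_setOf_eq] at hω
          simp only [Set.mem_setOf_eq, Finset.sum_apply]
          rw [hSE n hn]
          exact hω
        refine le_trans (measure_mono hsub) (le_trans hcheb (ENNReal.ofReal_le_ofReal ?_))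
        have h1 : variance (∑ x : Fin n → Bool, I n x) P
              / (η * ((2 : ℝ) ^ n * (n : ℝ) ^ (-cstar))) ^ 2
            ≤ ((2 : ℝ) ^ n * (n : ℝ) ^ (-cstar))
              / (η * ((2 : ℝ) ^ n * (n : ℝ) ^ (-cstar))) ^ 2 :=
          (div_le_div_iff_of_pos_right (by positivity)).mpr (hSvar n hn)
        refine h1.trans_eq ?_
        have hn0 : (0 : ℝ) < (n : ℝ) := by exact_mod_cast (by omega : 0 < n)
        have hpinv : (n : ℝ) ^ (-cstar) = ((n : ℝ) ^ cstar)⁻¹ := Real.rpow_neg hn0.le _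
        have hnc : (0 : ℝ) < (n : ℝ) ^ cstar := Real.rpow_pos_of_pos hn0 _
        rw [hpinv]
        field_simp
      · simp only [hA, dif_neg hn, measure_empty]
        exact zero_le
    have hsummable : Summable (fun n : ℕ => (n : ℝ) ^ cstar / (η ^ 2 * 2 ^ n)) := by
      have hgeo : Summable (fun n : ℕ => (1 / η ^ 2) * ((n : ℝ) ^ (⌈cstar⌉₊) * (1 / 2 : ℝ) ^ n)) :=
        (summable_pow_mul_geometric_of_norm_lt_one (R := ℝ) (r := 1 / 2) ⌈cstar⌉₊
          (by rw [norm_of_nonneg (by norm_num : (0:ℝ) ≤ 1/2)]; norm_num)).mul_left _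
      apply Summable.of_nonneg_of_le (fun n => by positivity) _ hgeo
      intro n
      rcases Nat.eq_zero_or_pos n with h0 | h0
      · subst h0
        have hk : ⌈cstar⌉₊ ≠ 0 := by
          simpa using (Nat.ceil_pos.mpr hcstar_pos).ne'
        simp [Real.zero_rpow (ne_of_gt hcstar_pos), zero_pow hk]
      · have h1n : (1 : ℝ) ≤ (n : ℝ) := by exact_mod_cast h0
        have hle : (n : ℝ) ^ cstar ≤ (n : ℝ) ^ (⌈cstar⌉₊ : ℝ) :=
          Real.rpow_le_rpow_of_exponent_le h1n (Nat.le_ceil cstar)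
        rw [Real.rpow_natCast] at hle
        have h2n : (0 : ℝ) < 2 ^ n := by positivity
        calc (n : ℝ) ^ cstar / (η ^ 2 * 2 ^ n)
            ≤ (n : ℝ) ^ (⌈cstar⌉₊) / (η ^ 2 * 2 ^ n) := by gcongr
          _ = (1 / η ^ 2) * ((n : ℝ) ^ (⌈cstar⌉₊) * (1 / 2 : ℝ) ^ n) := by
              rw [div_pow, one_pow, div_eq_mul_inv, div_eq_mul_inv, mul_inv, one_mul]
              ring
    have htsum : (∑' n, P (A n)) ≠ ⊤ := by
      have hle := ENNReal.tsum_le_tsum hAbound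
      rw [← ENNReal.ofReal_tsum_of_nonneg (fun n => by positivity) hsummable] at hle
      exact ne_top_of_le_ne_top ENNReal.ofReal_ne_top hle
    filter_upwards [MeasureTheory.ae_eventually_notMem htsum] with ω hω
    filter_upwards [hω, eventually_ge_atTop 2] with n hn1 hn2
    simp only [hA, dif_pos hn2, Set.mem_setOf_eq, not_le] at hn1
    have hS_le : (∑ x : Fin n → Bool, I n x ω)
        ≤ (1 + η) * ((2 : ℝ) ^ n * (n : ℝ) ^ (-cstar)) := by
      have habs := abs_lt.mp hn1
      nlinarith [habs.2]
    have hmin : ∀ x : Fin n → Bool,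
        1 - I n x ω ≤ min 1 (rstar n * Real.exp (-β * H n x ω)) := by
      intro x
      by_cases h : ω ∈ {ω | rstar n * Real.exp (-β * H n x ω) < 1}
      · rw [hI]
        simp only [Set.indicator_of_mem h, sub_self]
        have hrr := (hrstar n hn2 x).1
        exact le_min zero_le_one (by positivity)
      · rw [hI]
        simp only [Set.indicator_of_notMem h, sub_zero]
        exact (min_eq_left (not_lt.mp h)).ge
    have hsum_ge : (2 : ℝ) ^ n - (∑ x : Fin n → Bool, I n x ω)
        ≤ ∑ x : Fin n → Bool, min 1 (rstar n * Real.exp (-β * H n x ω)) := by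
      have hs := Finset.sum_le_sum (fun (x : Fin n → Bool) (_ : x ∈ Finset.univ) => hmin x)
      rw [Finset.sum_sub_distrib, Finset.sum_const, hcard n, nsmul_eq_mul] at hs
      push_cast at hs
      simpa using hs
    calc (2 : ℝ) ^ n * (1 - (1 + η) * (n : ℝ) ^ (-cstar))
        = (2 : ℝ) ^ n - (1 + η) * ((2 : ℝ) ^ n * (n : ℝ) ^ (-cstar)) := by ring
      _ ≤ (2 : ℝ) ^ n - (∑ x : Fin n → Bool, I n x ω) := by linarith
      _ ≤ ∑ x : Fin n → Bool, min 1 (rstar n * Real.exp (-β * H n x ω)) := hsum_ge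
  refine ⟨part1, part2, ?_⟩
  -- Part 3
  intro η hη
  have hdet : ∀ᶠ n : ℕ in atTop, (1 + η) * (n : ℝ) ^ (-cstar) ≤ η / (1 + η) := by
    have h0 : Tendsto (fun n : ℕ => (1 + η) * (n : ℝ) ^ (-cstar)) atTop (nhds 0) := by
      have h1 := (tendsto_rpow_neg_atTop hcstar_pos).comp
        (tendsto_natCast_atTop_atTop (R := ℝ))
      have h2 := h1.const_mul (1 + η)
      simpa using h2
    exact h0.eventually (eventually_le_nhds (by positivity))
  filter_upwards [part2 η hη] with ω h2
  filter_upwards [h2, hdet] with n hZ hd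
  intro x
  have hZ1 : (2 : ℝ) ^ n / (1 + η)
      ≤ ∑ y : Fin n → Bool, min 1 (rstar n * Real.exp (-β * H n y ω)) := by
    have hmono : (2 : ℝ) ^ n * (1 - η / (1 + η))
        ≤ (2 : ℝ) ^ n * (1 - (1 + η) * (n : ℝ) ^ (-cstar)) :=
      mul_le_mul_of_nonneg_left (by linarith) (by positivity)
    have heq2 : (2 : ℝ) ^ n * (1 - η / (1 + η)) = (2 : ℝ) ^ n / (1 + η) := by
      field_simp
      ring
    linarith
  have hZpos : (0 : ℝ) < ∑ y : Fin n → Bool, min 1 (rstar n * Real.exp (-β * H n y ω)) :=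
    lt_of_lt_of_le (by positivity) hZ1
  calc min 1 (rstar n * Real.exp (-β * H n x ω)) /
        (∑ y : Fin n → Bool, min 1 (rstar n * Real.exp (-β * H n y ω)))
      ≤ 1 / (∑ y : Fin n → Bool, min 1 (rstar n * Real.exp (-β * H n y ω))) :=
        (div_le_div_iff_of_pos_right hZpos).mpr (min_le_left _ _)
    _ ≤ 1 / ((2 : ℝ) ^ n / (1 + η)) :=
        one_div_le_one_div_of_le (by positivity) hZ1
    _ = (1 + η) * ((2 : ℝ) ^ n)⁻¹ := by
        rw [one_div_div]
        ring
end
end
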